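/- arXiv:1312.1844 — 10 statements merged into one kernel-verified Lean document; each statement's English description precedes it below -/
import Mathlib

section
/- Suppose β = 4. Let n ≥ 0 be an integer and let p be an odd prime with p > 2r−1 and p > n. Then the image of the rational number c̃_{2n} under the unique ring homomorphism ℚ → 𝔽_p into the field with p elements equals (−1)^n · binomial((p+2r−1)/2, n), where (p+2r−1)/2 is an integer since p is odd. -/
/-- Fix a positive integer `r` and a rational `β`. Define `c̃ : ℕ → ℚ` by
`c̃ 0 = 1`, `c̃ 1 = 0` and `(n+2)·c̃ (n+2) = (β/4)·(n+1−2r)·c̃ n` for all `n ≥ 0`.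
Suppose `β = 4`. Let `n ≥ 0` and let `p` be an odd prime with `p > 2r−1` and `p > n`.
Then the image of `c̃ (2n)` in `𝔽_p` (via the canonical map `ℚ → 𝔽_p`, well defined
on rationals with denominator prime to `p`) equals `(−1)^n · C((p+2r−1)/2, n)`. -/
theorem stmt_2 (r : ℕ) (hr : 1 ≤ r) (β : ℚ) (c : ℕ → ℚ)
    (h0 : c 0 = 1) (h1 : c 1 = 0)
    (hrec : ∀ n : ℕ,
      ((n : ℚ) + 2) * c (n + 2) = (β / 4) * ((n : ℚ) + 1 - 2 * r) * c n)
    (hβ : β = 4)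
    (n : ℕ) (p : ℕ) [Fact p.Prime] (hodd : Odd p)
    (hp1 : 2 * r - 1 < p) (hp2 : n < p) :
    ((c (2 * n) : ℚ) : ZMod p) =
      (-1) ^ n * (Nat.choose ((p + 2 * r - 1) / 2) n : ZMod p) := by
  subst hβ
  have hprime : p.Prime := Fact.out
  obtain ⟨k, hk⟩ := hodd
  set m := (p + 2 * r - 1) / 2 with hmdef
  have hm2 : 2 * m = p + 2 * r - 1 := by omega
  have hpge : 3 ≤ p := by have := hprime.two_le; omega
  -- 2r = 2m + 1 in ZMod p
  have h2r : (2 : ZMod p) * (r : ℕ) = 2 * (m : ℕ) + 1 := by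
    have h3 : ((2 * m : ℕ) : ZMod p) = ((p + 2 * r - 1 : ℕ) : ZMod p) := by rw [hm2]
    have hsub : (p + 2 * r - 1 : ℕ) = p + (2 * r - 1) := by omega
    rw [hsub] at h3
    push_cast at h3
    rw [ZMod.natCast_self] at h3
    have h1r : ((2 * r - 1 : ℕ) : ZMod p) = 2 * (r : ZMod p) - 1 := by
      have he : (2 * r - 1 : ℕ) + 1 = 2 * r := by omega
      have h2 : (((2 * r - 1 : ℕ) + 1 : ℕ) : ZMod p) = ((2 * r : ℕ) : ZMod p) := by
        rw [he]
      push_cast at h2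
      linear_combination h2
    rw [h1r] at h3
    linear_combination -h3
  -- closed form in ℚ
  have hform : ∀ j : ℕ, c (2 * j) * ((2 ^ j * j.factorial : ℕ) : ℚ)
      = (((∏ i ∈ Finset.range j, (2 * (i : ℤ) + 1 - 2 * r)) : ℤ) : ℚ) := by
    intro j
    induction j with
    | zero => simp [h0]
    | succ j ih =>
      have hkey := hrec (2 * j)
      have h2j : 2 * (j + 1) = 2 * j + 2 := by ring
      rw [h2j, Finset.prod_range_succ]
      push_cast [Nat.factorial_succ, pow_succ] at hkey ih ⊢
      linear_combination ((2 : ℚ) ^ j * (j.factorial : ℚ)) * hkey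
        + (2 * (j : ℚ) + 1 - 2 * r) * ih
  -- denominators are units mod p
  have hB : ∀ j : ℕ, j < p → ((2 ^ j * j.factorial : ℕ) : ZMod p) ≠ 0 := by
    intro j hj h
    rw [ZMod.natCast_eq_zero_iff] at h
    rcases (Nat.Prime.dvd_mul hprime).mp h with h | h
    · have h2 : p ∣ 2 := hprime.dvd_of_dvd_pow h
      have := Nat.le_of_dvd (by norm_num) h2; omega
    · have := (Nat.Prime.dvd_factorial hprime).mp h; omega
  -- the numerator product mod p
  have hmain : ∀ j : ℕ, j < p →
      (((∏ i ∈ Finset.range j, (2 * (i : ℤ) + 1 - 2 * r)) : ℤ) : ZMod p)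
        = (-1) ^ j * (m.choose j : ℕ) * ((2 ^ j * j.factorial : ℕ) : ZMod p) := by
    intro j
    induction j with
    | zero => intro _; simp
    | succ j ih =>
      intro hj
      have ihv := ih (by omega)
      rw [Finset.prod_range_succ]
      push_cast [Nat.factorial_succ, pow_succ] at ihv ⊢
      rcases le_or_gt j m with hmn | hmn
      · have hch := Nat.choose_succ_right_eq m j
        have hchZ : ((m.choose (j + 1) : ℕ) : ZMod p) * ((j : ZMod p) + 1) =
            ((m.choose j : ℕ) : ZMod p) * ((m : ZMod p) - (j : ZMod p)) := by
          have h4 : ((m.choose (j + 1) * (j + 1) : ℕ) : ZMod p) =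
              ((m.choose j * (m - j) : ℕ) : ZMod p) := by rw [hch]
          push_cast [Nat.cast_sub hmn] at h4
          linear_combination h4
        linear_combination (2 * (j : ZMod p) + 1 - 2 * (r : ℕ)) * ihv
          + (-(-1 : ZMod p) ^ j * (m.choose j : ℕ) * (2 ^ j * (j.factorial : ZMod p))) * h2r
          + (2 * (-1 : ZMod p) ^ j * (2 ^ j * (j.factorial : ZMod p))) * hchZ
      · have hz : ((m.choose j : ℕ) : ZMod p) = 0 := by
          rw [Nat.choose_eq_zero_of_lt hmn]; simp
        have hz1 : ((m.choose (j + 1) : ℕ) : ZMod p) = 0 := by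
          rw [Nat.choose_eq_zero_of_lt (by omega)]; simp
        rw [hz] at ihv
        rw [hz1]
        linear_combination (2 * (j : ZMod p) + 1 - 2 * (r : ℕ)) * ihv
  -- put it together
  have hBQ : ((2 ^ n * n.factorial : ℕ) : ℚ) ≠ 0 := by
    positivity
  have hdiv : c (2 * n) =
      (((∏ i ∈ Finset.range n, (2 * (i : ℤ) + 1 - 2 * r)) : ℤ) : ℚ)
        / ((2 ^ n * n.factorial : ℕ) : ℚ) := by
    rw [eq_div_iff hBQ]; exact hform n
  rw [hdiv]
  have hBn := hB n hp2
  rw [Rat.cast_div_of_ne_zero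
    (by rw [Rat.den_intCast, Nat.cast_one]; exact one_ne_zero)
    (by rw [Rat.num_natCast, Int.cast_natCast]; exact hBn)]
  rw [Rat.cast_intCast, Rat.cast_natCast, hmain n hp2]
  rw [mul_div_assoc, div_self hBn, mul_one]
end

section
/- Let k be a positive integer and suppose β = 4. Define P_k(0,4,0) ∈ ℚ as the determinant of the k×k matrix whose (i,j) entry, for 1 ≤ i,j ≤ k, is c̃_{k+2r−1+j−i}. Then for every odd prime p with p > k+2r−2, the image of P_k(0,4,0) under the unique ring homomorphism ℚ → 𝔽_p into the field with p elements is nonzero. -/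
open Finset Matrix Polynomial

section Core
variable {F : Type*} [Field F]

lemma cast_dvd_ne_zero {x N : ℕ} (hd : x ∣ N)
    (h : ((N : ℕ) : F) ≠ 0) : ((x : ℕ) : F) ≠ 0 := by
  obtain ⟨c, rfl⟩ := hd
  intro hx
  apply h
  push_cast
  rw [hx, zero_mul]

lemma fact_split (m l : ℕ) (h : m ≤ l) :
    l.factorial = m.factorial * ∏ u ∈ Finset.Ico (m+1) (l+1), u := by
  induction l with
  | zero => interval_cases m; simp
  | succ n ih =>
    rcases Nat.lt_or_ge m (n+1) with h' | h'
    · rw [Finset.prod_Ico_succ_top (by omega), ← mul_assoc, ← ih (by omega),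
        Nat.factorial_succ]; ring
    · have : m = n+1 := by omega
      subst this; simp

lemma prod_shift (c m n : ℕ) (h : m ≤ n) :
    ∏ u ∈ Finset.Ico (c + m) (c + n), u = ∏ u ∈ Finset.Ico m n, (c + u) := by
  rw [Finset.prod_Ico_eq_prod_range, Finset.prod_Ico_eq_prod_range]
  have : c + n - (c + m) = n - m := by omega
  rw [this]
  apply Finset.prod_congr rfl
  intro u _
  omega

lemma step1 (s a n : ℕ) (hna : n ≤ a)
    (M : Matrix (Fin n) (Fin n) F)
    (hM : ∀ i j : Fin n, M i j = (s.choose (a + j.val - i.val) : F)) :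
    ∃ M' : Matrix (Fin n) (Fin n) F,
      (∀ i j : Fin n, M' i j = ((s + (n - 1 - i.val)).choose (a + j.val - i.val) : F))
      ∧ M'.det = M.det := by
  classical
  set L : Matrix (Fin n) (Fin n) F :=
    Matrix.of (fun i t : Fin n =>
      if i.val ≤ t.val then ((n - 1 - i.val).choose (t.val - i.val) : F) else 0) with hL
  refine ⟨L * M, ?_, ?_⟩
  · intro i j
    rw [Matrix.mul_apply]
    have hterm : ∀ t : Fin n, L i t * M t j =
        (if i.val ≤ t.val then
          ((n - 1 - i.val).choose (t.val - i.val) : F) *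
            (s.choose (a + j.val - t.val) : F) else 0) := by
      intro t
      simp only [hL, Matrix.of_apply, hM t j]
      split <;> simp
    rw [Finset.sum_congr rfl (fun t _ => hterm t), Fin.sum_univ_eq_sum_range
      (fun t => if i.val ≤ t then
          ((n - 1 - i.val).choose (t - i.val) : F) * (s.choose (a + j.val - t) : F) else 0)]
    rw [← Finset.sum_filter]
    have hfilt : (Finset.range n).filter (fun t => i.val ≤ t) = Finset.Ico i.val n := by
      ext t
      simp only [Finset.mem_filter, Finset.mem_range, Finset.mem_Ico]
      omega
    rw [hfilt, Finset.sum_Ico_eq_sum_range]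
    set w := n - 1 - i.val with hw
    set K := a + j.val - i.val with hK
    have hsum : ∀ u ∈ Finset.range (n - i.val),
        ((n - 1 - i.val).choose (i.val + u - i.val) : F) *
          (s.choose (a + j.val - (i.val + u)) : F)
        = (w.choose u : F) * (s.choose (K - u) : F) := by
      intro u _
      congr 3 <;> omega
    rw [Finset.sum_congr rfl hsum]
    have hext : ∑ u ∈ Finset.range (n - i.val), (w.choose u : F) * (s.choose (K - u) : F)
        = ∑ u ∈ Finset.range (K + 1), (w.choose u : F) * (s.choose (K - u) : F) := by
      apply Finset.sum_subset
      · apply Finset.range_subset_range.2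
        omega
      · intro u _ hu
        have : w < u := by
          simp only [Finset.mem_range, not_lt] at hu
          omega
        rw [Nat.choose_eq_zero_of_lt this]
        simp
    rw [hext]
    have hvdm := Nat.add_choose_eq w s K
    rw [Finset.Nat.sum_antidiagonal_eq_sum_range_succ_mk] at hvdm
    have heq : s + (n - 1 - i.val) = w + s := by omega
    rw [heq, hvdm]
    push_cast
    ring
  · have hLdet : L.det = 1 := by
      have htri : L.BlockTriangular id := by
        intro x y hxy
        simp only [hL, Matrix.of_apply, id_eq] at hxy ⊢
        rw [if_neg (by omega)]
      rw [Matrix.det_of_upperTriangular htri]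
      apply Finset.prod_eq_one
      intro i _
      simp [hL]
    rw [Matrix.det_mul, hLdet, one_mul]

-- key lemma: det of binomial Toeplitz is nonzero
lemma core (s a n : ℕ) (hna : n ≤ a) (has : a ≤ s)
    (hfac : (((s + n - 1).factorial : ℕ) : F) ≠ 0)
    (M : Matrix (Fin n) (Fin n) F)
    (hM : ∀ i j : Fin n, M i j = (s.choose (a + j.val - i.val) : F)) :
    M.det ≠ 0 := by
  classical
  rcases Nat.eq_zero_or_pos n with hn | hn
  · subst hn
    simp [Matrix.det_fin_zero]
  have hfact : ∀ m : ℕ, m ≤ s + n - 1 → ((m.factorial : ℕ) : F) ≠ 0 := by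
    intro m hm
    exact cast_dvd_ne_zero (Nat.factorial_dvd_factorial hm) hfac
  have hsmall : ∀ m : ℕ, 0 < m → m ≤ s + n - 1 → ((m : ℕ) : F) ≠ 0 := by
    intro m h1 h2
    exact cast_dvd_ne_zero (Nat.dvd_factorial h1 h2) hfac
  obtain ⟨M', hM', hdet⟩ := step1 s a n hna M hM
  rw [← hdet]
  -- step 2: symmetry
  set b := s + n - 1 - a with hb
  have hM'2 : ∀ i j : Fin n, M' i j = ((s + (n - 1 - i.val)).choose (b - j.val) : F) := by
    intro i j
    rw [hM' i j]
    have h1 : a + j.val - i.val ≤ s + (n - 1 - i.val) := by omega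
    have h2 : s + (n - 1 - i.val) - (a + j.val - i.val) = b - j.val := by omega
    rw [← Nat.choose_symm h1, h2]
  -- step 3: factor out rows and columns
  set R : Fin n → F := fun i => (((s + (n - 1 - i.val)).factorial : ℕ) : F) *
      ((((a - i.val + n - 1).factorial : ℕ) : F))⁻¹ with hR
  set cc : Fin n → F := fun j => ((((b - j.val).factorial : ℕ) : F))⁻¹ with hcc
  set W : Matrix (Fin n) (Fin n) F :=
    Matrix.of (fun i j : Fin n => ∏ u ∈ Finset.Ico (j.val + 1) n, ((a - i.val + u : ℕ) : F))
    with hW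
  have hentry : ∀ i j : Fin n, M' i j = R i * (cc j * W i j) := by
    intro i j
    have hbj : b - j.val ≤ s + (n - 1 - i.val) := by omega
    have e1n := Nat.choose_mul_factorial_mul_factorial hbj
    have hdiff : s + (n - 1 - i.val) - (b - j.val) = a - i.val + j.val := by omega
    rw [hdiff] at e1n
    have e1 : ((s + (n - 1 - i.val)).choose (b - j.val) : F) *
        (((b - j.val).factorial : ℕ) : F) * (((a - i.val + j.val).factorial : ℕ) : F)
        = (((s + (n - 1 - i.val)).factorial : ℕ) : F) := by
      exact_mod_cast congrArg (Nat.cast : ℕ → F) e1n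
    have e2n : (a - i.val + n - 1).factorial =
        (a - i.val + j.val).factorial * ∏ u ∈ Finset.Ico (j.val + 1) n, (a - i.val + u) := by
      have hle : a - i.val + j.val ≤ a - i.val + n - 1 := by omega
      rw [fact_split (a - i.val + j.val) (a - i.val + n - 1) hle]
      congr 1
      have h1 : a - i.val + j.val + 1 = (a - i.val) + (j.val + 1) := by omega
      have h2 : a - i.val + n - 1 + 1 = (a - i.val) + n := by omega
      rw [h1, h2, prod_shift (a - i.val) (j.val + 1) n (by omega)]
    have e2 : (((a - i.val + n - 1).factorial : ℕ) : F) =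
        (((a - i.val + j.val).factorial : ℕ) : F) * W i j := by
      rw [hW]
      simp only [Matrix.of_apply]
      rw [← Nat.cast_prod, ← Nat.cast_mul, ← e2n]
    have nz1 : (((b - j.val).factorial : ℕ) : F) ≠ 0 := hfact _ (by omega)
    have nz2 : (((a - i.val + j.val).factorial : ℕ) : F) ≠ 0 := hfact _ (by omega)
    have nz3 : (((a - i.val + n - 1).factorial : ℕ) : F) ≠ 0 := hfact _ (by omega)
    rw [hM'2 i j, hR, hcc]
    field_simp
    rw [e2]
    calc ((s + (n - 1 - i.val)).choose (b - j.val) : F) *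
          ((((a - i.val + j.val).factorial : ℕ) : F) * W i j) * (((b - j.val).factorial : ℕ) : F)
        = (((s + (n - 1 - i.val)).choose (b - j.val) : F) *
          (((b - j.val).factorial : ℕ) : F) * (((a - i.val + j.val).factorial : ℕ) : F)) * W i j := by
          ring
      _ = (((s + (n - 1 - i.val)).factorial : ℕ) : F) * W i j := by rw [e1]
  -- peel off row and column factors
  have hMeq : M' = Matrix.of (fun i j : Fin n =>
      R i * (Matrix.of (fun i j : Fin n => cc j * W i j)) i j) := by
    ext i j
    rw [hentry i j]
    rfl
  rw [hMeq, Matrix.det_mul_column, Matrix.det_mul_row]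
  -- the polynomial matrix
  set v : Fin n → F := fun i => ((a - i.val : ℕ) : F) with hv
  set P : Fin n → F[X] := fun j => ∏ u ∈ Finset.Ico (n - j.val) n, (X + C (u : F)) with hP
  have hPmonic : ∀ j : Fin n, (P j).Monic := by
    intro j
    exact monic_prod_of_monic _ _ (fun u _ => monic_X_add_C _)
  have hPdeg : ∀ j : Fin n, (P j).natDegree = j.val := by
    intro j
    rw [hP]
    rw [Polynomial.natDegree_prod_of_monic _ _ (fun u _ => monic_X_add_C _)]
    have : ∀ u ∈ Finset.Ico (n - j.val) n, (X + C (u : F)).natDegree = 1 := by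
      intro u _
      exact natDegree_X_add_C _
    rw [Finset.sum_congr rfl this, Finset.sum_const, Nat.card_Ico, smul_eq_mul, mul_one]
    omega
  have hWeq : W = (Matrix.of (fun i j : Fin n => (P j).eval (v i))).submatrix id
      (Fin.revPerm) := by
    ext i j
    simp only [hW, Matrix.of_apply, Matrix.submatrix_apply, id_eq]
    have hrev : n - (Fin.revPerm j).val = j.val + 1 := by
      simp [Fin.revPerm, Fin.rev]
      omega
    rw [hP]
    simp only [hrev]
    rw [Polynomial.eval_prod]
    apply Finset.prod_congr rfl
    intro u hu
    simp only [Polynomial.eval_add, Polynomial.eval_X, Polynomial.eval_C, hv]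
    push_cast
    ring
  have hvdm_ne : (Matrix.vandermonde v).det ≠ 0 := by
    rw [Matrix.det_vandermonde]
    apply Finset.prod_ne_zero_iff.2
    intro i _
    apply Finset.prod_ne_zero_iff.2
    intro j hj
    have hij : i < j := by simpa using hj
    have hval : (a - i.val : ℕ) = (a - j.val) + (j.val - i.val) := by
      have := j.isLt
      omega
    have : v i = v j + ((j.val - i.val : ℕ) : F) := by
      rw [hv]
      simp only
      rw [hval]
      push_cast
      ring
    rw [this]
    have hne : ((j.val - i.val : ℕ) : F) ≠ 0 := by
      apply hsmall
      · have : i.val < j.val := hij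
        omega
      · have := j.isLt
        omega
    intro hc
    apply hne
    linear_combination -hc
  have hWdet_ne : W.det ≠ 0 := by
    rw [hWeq, Matrix.det_permute',
      ← Matrix.det_eval_matrixOfPolynomials_eq_det_vandermonde v P hPdeg hPmonic]
    rcases Int.units_eq_one_or (Equiv.Perm.sign (Fin.revPerm : Equiv.Perm (Fin n)))
      with h | h <;> rw [h] <;> simpa using hvdm_ne
  apply mul_ne_zero
  · apply Finset.prod_ne_zero_iff.2
    intro i _
    apply mul_ne_zero
    · exact hfact _ (by omega)
    · exact inv_ne_zero (hfact _ (by omega))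
  apply mul_ne_zero
  · apply Finset.prod_ne_zero_iff.2
    intro j _
    exact inv_ne_zero (hfact _ (by omega))
  exact hWdet_ne

end Core

section Outer
variable {F : Type*} [Field F]

-- signed version of the core lemma
lemma signed_core (s a n : ℕ) (hna : n ≤ a) (has : a ≤ s)
    (hfac : (((s + n - 1).factorial : ℕ) : F) ≠ 0)
    (A : Matrix (Fin n) (Fin n) F)
    (hA : ∀ i j : Fin n, A i j =
      (-1 : F) ^ (a + j.val - i.val) * (s.choose (a + j.val - i.val) : F)) :
    A.det ≠ 0 := by
  classical
  set B : Matrix (Fin n) (Fin n) F :=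
    Matrix.of (fun i j : Fin n => (s.choose (a + j.val - i.val) : F)) with hB
  have hAeq : A = Matrix.of (fun i j : Fin n =>
      ((-1 : F) ^ a * (-1 : F) ^ i.val) *
        ((Matrix.of (fun i j : Fin n => (-1 : F) ^ j.val * B i j)) i j)) := by
    ext i j
    simp only [Matrix.of_apply, hA i j, hB]
    have hpow : (-1 : F) ^ (a + j.val - i.val) = (-1) ^ a * (-1) ^ i.val * (-1) ^ j.val := by
      have h2 : (a + j.val - i.val) + 2 * i.val = a + i.val + j.val := by
        have := i.isLt
        omega
      calc (-1 : F) ^ (a + j.val - i.val)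
          = (-1 : F) ^ (a + j.val - i.val) * ((-1 : F) ^ (2 * i.val)) := by
            rw [pow_mul]; norm_num
        _ = (-1 : F) ^ ((a + j.val - i.val) + 2 * i.val) := (pow_add _ _ _).symm
        _ = (-1 : F) ^ (a + i.val + j.val) := by rw [h2]
        _ = (-1) ^ a * (-1) ^ i.val * (-1) ^ j.val := by rw [pow_add, pow_add]
    rw [hpow]
    ring
  rw [hAeq, Matrix.det_mul_column, Matrix.det_mul_row]
  have hm1 : (-1 : F) ≠ 0 := by norm_num
  apply mul_ne_zero
  · exact Finset.prod_ne_zero_iff.2 fun i _ =>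
      mul_ne_zero (pow_ne_zero _ hm1) (pow_ne_zero _ hm1)
  apply mul_ne_zero
  · exact Finset.prod_ne_zero_iff.2 fun j _ => pow_ne_zero _ hm1
  · exact core s a n hna has hfac B (fun i j => rfl)

-- factorial of small numbers nonzero mod p
lemma fact_lt_ne_zero (p : ℕ) [hp : Fact p.Prime] {m : ℕ} (h : m < p) :
    ((m.factorial : ℕ) : ZMod p) ≠ 0 := by
  rw [Ne, ZMod.natCast_eq_zero_iff]
  intro hdvd
  have := (Nat.Prime.dvd_factorial hp.out).1 hdvd
  omega

-- rational cast compatibility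
lemma rat_cast_mul_eq (p : ℕ) [Fact p.Prime] (q : ℚ) (z : ℤ) (d : ℕ)
    (h : q * (d : ℚ) = (z : ℚ)) (hd : ((d : ℕ) : ZMod p) ≠ 0) :
    (q : ZMod p) * ((d : ℕ) : ZMod p) = ((z : ℤ) : ZMod p) := by
  have hd0 : d ≠ 0 := by
    rintro rfl
    simp at hd
  have hdQ : (d : ℚ) ≠ 0 := Nat.cast_ne_zero.2 hd0
  have hq : q = (z : ℚ) / (d : ℚ) := by
    field_simp
    linarith [h]
  have hnum : q.num * (d : ℤ) = z * (q.den : ℤ) := by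
    have hden : (q.den : ℚ) ≠ 0 := Nat.cast_ne_zero.2 q.den_nz
    have h2 : (q.num : ℚ) * (d : ℚ) = (z : ℚ) * (q.den : ℚ) := by
      rw [← Rat.num_div_den q] at h
      field_simp at h
      push_cast
      linarith [h]
    exact_mod_cast h2
  have hdvd : (q.den : ℤ) ∣ (d : ℤ) := by
    have hq' : q = (z : ℚ) / ((d : ℤ) : ℚ) := by rw [hq]; norm_num
    rw [hq', ← Rat.divInt_eq_div]
    exact Rat.den_dvd z d
  have hdvdn : q.den ∣ d := by exact_mod_cast hdvd
  have hdenne : ((q.den : ℕ) : ZMod p) ≠ 0 := cast_dvd_ne_zero hdvdn hd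
  rw [Rat.cast_def]
  rw [div_mul_eq_mul_div, div_eq_iff hdenne]
  exact_mod_cast congrArg (Int.cast : ℤ → ZMod p) hnum

end Outer

section Parity

lemma prod_sub_eq_descFactorial {F : Type*} [Field F] (σ t : ℕ) :
    ∏ j ∈ Finset.range t, ((σ : F) - (j : F)) = ((σ.descFactorial t : ℕ) : F) := by
  induction t with
  | zero => simp
  | succ t ih =>
    rw [Finset.prod_range_succ, ih, Nat.descFactorial_succ]
    by_cases h : t ≤ σ
    · rw [Nat.cast_mul, Nat.cast_sub h]
      ring
    · have h1 : σ.descFactorial t = 0 := by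
        apply Nat.descFactorial_eq_zero_iff_lt.2
        omega
      have h2 : σ - t = 0 := by omega
      rw [h1, h2]
      simp
  
-- the even/odd interleaving equivalence
def evenOdd (k : ℕ) : (Fin ((k+1)/2) ⊕ Fin (k/2)) ≃ Fin k where
  toFun x := match x with
    | .inl i => ⟨2*i.val, by have := i.isLt; omega⟩
    | .inr i => ⟨2*i.val+1, by have := i.isLt; omega⟩
  invFun j := if h : j.val % 2 = 0 then .inl ⟨j.val/2, by have := j.isLt; omega⟩
    else .inr ⟨j.val/2, by have := j.isLt; omega⟩
  left_inv := by
    rintro (i | i) <;> dsimp only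
    · rw [dif_pos (by omega)]
      congr 1
      exact Fin.ext (by simp only [Fin.val_mk]; omega)
    · rw [dif_neg (by omega)]
      congr 1
      exact Fin.ext (by simp only [Fin.val_mk]; omega)
  right_inv := by
    intro j
    dsimp only
    by_cases h : j.val % 2 = 0
    · rw [dif_pos h]
      exact Fin.ext (by have := j.isLt; simp only [Fin.val_mk]; omega)
    · rw [dif_neg h]
      exact Fin.ext (by have := j.isLt; simp only [Fin.val_mk]; omega)

-- for even k: odd rows first
def oddEven (k : ℕ) (hk : k % 2 = 0) : (Fin ((k+1)/2) ⊕ Fin (k/2)) ≃ Fin k where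
  toFun x := match x with
    | .inl i => ⟨2*i.val+1, by have := i.isLt; omega⟩
    | .inr i => ⟨2*i.val, by have := i.isLt; omega⟩
  invFun j := if h : j.val % 2 = 1 then .inl ⟨j.val/2, by have := j.isLt; omega⟩
    else .inr ⟨j.val/2, by have := j.isLt; omega⟩
  left_inv := by
    rintro (i | i) <;> dsimp only
    · rw [dif_pos (by omega)]
      congr 1
      exact Fin.ext (by simp only [Fin.val_mk]; omega)
    · rw [dif_neg (by omega)]
      congr 1
      exact Fin.ext (by simp only [Fin.val_mk]; omega)
  right_inv := by
    intro j
    dsimp only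
    by_cases h : j.val % 2 = 1
    · rw [dif_pos h]
      exact Fin.ext (by have := j.isLt; simp only [Fin.val_mk]; omega)
    · rw [dif_neg h]
      exact Fin.ext (by have := j.isLt; simp only [Fin.val_mk]; omega)

end Parity

lemma parity_det_ne {p : ℕ} [Fact p.Prime] (k r σ : ℕ) (hr : 1 ≤ r) (hk : 1 ≤ k)
    (S : ℕ → ZMod p)
    (hSodd : ∀ idx, idx % 2 = 1 → S idx = 0)
    (hSeven : ∀ idx, idx % 2 = 0 →
      S idx = (-1 : ZMod p) ^ (idx / 2) * (σ.choose (idx / 2) : ZMod p))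
    (hσb : (k + 2*r) / 2 ≤ σ)
    (hfac : (((σ + (k+1)/2 - 1).factorial : ℕ) : ZMod p) ≠ 0) :
    (Matrix.of fun i j : Fin k => S (k + 2*r - 1 + j.val - i.val)).det ≠ 0 := by
  classical
  set N := Matrix.of (fun i j : Fin k => S (k + 2*r - 1 + j.val - i.val)) with hN
  have hfac' : ∀ nn, nn ≤ (k+1)/2 → (((σ + nn - 1).factorial : ℕ) : ZMod p) ≠ 0 := by
    intro nn h
    exact cast_dvd_ne_zero (Nat.factorial_dvd_factorial (by omega)) hfac
  by_cases hpar : k % 2 = 1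
  · -- odd k
    set a1 := (k + 2*r - 1)/2 with ha1
    set A1 := Matrix.of (fun i j : Fin ((k+1)/2) =>
      (-1 : ZMod p)^(a1 + j.val - i.val) * (σ.choose (a1 + j.val - i.val) : ZMod p)) with hA1
    set A2 := Matrix.of (fun i j : Fin (k/2) =>
      (-1 : ZMod p)^(a1 + j.val - i.val) * (σ.choose (a1 + j.val - i.val) : ZMod p)) with hA2
    have hblocks : N.submatrix (evenOdd k) (evenOdd k) = Matrix.fromBlocks A1 0 0 A2 := by
      ext x y
      rcases x with i | i <;> rcases y with j | j <;>
        (have hi := i.isLt; have hj := j.isLt) <;>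
        simp only [Matrix.submatrix_apply, hN, Matrix.of_apply, evenOdd, Equiv.coe_fn_mk,
          Matrix.fromBlocks_apply₁₁, Matrix.fromBlocks_apply₁₂,
          Matrix.fromBlocks_apply₂₁, Matrix.fromBlocks_apply₂₂, Fin.val_mk,
          Matrix.zero_apply, hA1, hA2]
      · rw [hSeven _ (by omega)]
        have harg : (k + 2*r - 1 + 2*j.val - 2*i.val)/2 = a1 + j.val - i.val := by omega
        rw [harg]
      · exact hSodd _ (by omega)
      · exact hSodd _ (by omega)
      · rw [hSeven _ (by omega)]
        have harg : (k + 2*r - 1 + (2*j.val+1) - (2*i.val+1))/2 = a1 + j.val - i.val := by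
          omega
        rw [harg]
    have hdet : N.det = A1.det * A2.det := by
      rw [← Matrix.det_submatrix_equiv_self (evenOdd k) N, hblocks,
        Matrix.det_fromBlocks_zero₂₁]
    rw [hdet]
    apply mul_ne_zero
    · exact signed_core σ a1 ((k+1)/2) (by omega) (by omega) (hfac' _ le_rfl) A1
        (fun i j => rfl)
    · exact signed_core σ a1 (k/2) (by omega) (by omega) (hfac' _ (by omega)) A2
        (fun i j => rfl)
  · -- even k
    have hpar0 : k % 2 = 0 := by omega
    set a2 := k/2 + r with ha2
    set a3 := k/2 + r - 1 with ha3
    set B1 := Matrix.of (fun i j : Fin (k/2) =>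
      (-1 : ZMod p)^(a2 + j.val - i.val) * (σ.choose (a2 + j.val - i.val) : ZMod p)) with hB1
    set C1 := Matrix.of (fun i j : Fin ((k+1)/2) =>
      (-1 : ZMod p)^(a3 + j.val - i.val) * (σ.choose (a3 + j.val - i.val) : ZMod p)) with hC1
    have hblocks : N.submatrix (oddEven k hpar0) (evenOdd k) = Matrix.fromBlocks C1 0 0 B1 := by
      ext x y
      rcases x with i | i <;> rcases y with j | j <;>
        (have hi := i.isLt; have hj := j.isLt) <;>
        simp only [Matrix.submatrix_apply, hN, Matrix.of_apply, evenOdd, oddEven,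
          Equiv.coe_fn_mk, Matrix.fromBlocks_apply₁₁, Matrix.fromBlocks_apply₁₂,
          Matrix.fromBlocks_apply₂₁, Matrix.fromBlocks_apply₂₂, Fin.val_mk,
          Matrix.zero_apply, hB1, hC1]
      · rw [hSeven _ (by omega)]
        have harg : (k + 2*r - 1 + 2*j.val - (2*i.val+1))/2 = a3 + j.val - i.val := by omega
        rw [harg]
      · exact hSodd _ (by omega)
      · exact hSodd _ (by omega)
      · rw [hSeven _ (by omega)]
        have harg : (k + 2*r - 1 + (2*j.val+1) - 2*i.val)/2 = a2 + j.val - i.val := by omega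
        rw [harg]
    set τ := (oddEven k hpar0).trans (evenOdd k).symm with hτdef
    have hrel : N.submatrix (oddEven k hpar0) (evenOdd k)
        = (N.submatrix (evenOdd k) (evenOdd k)).submatrix τ id := by
      ext x y
      simp only [Matrix.submatrix_apply, hτdef, Equiv.trans_apply, id_eq,
        Equiv.apply_symm_apply]
    have hdp := Matrix.det_permute τ (N.submatrix (evenOdd k) (evenOdd k))
    have hCB : C1.det * B1.det = (Equiv.Perm.sign τ : ℤ) * N.det := by
      rw [← Matrix.det_fromBlocks_zero₂₁ C1 0 B1, ← hblocks, hrel]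
      rw [hdp, Matrix.det_submatrix_equiv_self]
    have hC1ne : C1.det ≠ 0 :=
      signed_core σ a3 ((k+1)/2) (by omega) (by omega) (hfac' _ le_rfl) C1 (fun i j => rfl)
    have hB1ne : B1.det ≠ 0 :=
      signed_core σ a2 (k/2) (by omega) (by omega) (hfac' _ (by omega)) B1 (fun i j => rfl)
    intro h0
    rw [h0, mul_zero] at hCB
    exact mul_ne_zero hC1ne hB1ne hCB

/-- Fix a positive integer `r` and a rational `β`. Define `c̃ : ℕ → ℚ` by
`c̃ 0 = 1`, `c̃ 1 = 0` and `(n+2)·c̃ (n+2) = (β/4)·(n+1−2r)·c̃ n` for all `n ≥ 0`.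
Let `k ≥ 1` and suppose `β = 4`. Define `P_k(0,4,0)` as the determinant of the
`k×k` matrix with `(i,j)` entry (1-based) `c̃ (k+2r−1+j−i)`. Then for every odd
prime `p > k+2r−2`, the image of `P_k(0,4,0)` in `𝔽_p` is nonzero. -/
theorem stmt_4 (r : ℕ) (hr : 1 ≤ r) (β : ℚ) (c : ℕ → ℚ)
    (h0 : c 0 = 1) (h1 : c 1 = 0)
    (hrec : ∀ n : ℕ,
      ((n : ℚ) + 2) * c (n + 2) = (β / 4) * ((n : ℚ) + 1 - 2 * r) * c n)
    (hβ : β = 4)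
    (k : ℕ) (hk : 1 ≤ k)
    (p : ℕ) [Fact p.Prime] (hodd : Odd p) (hp : k + 2 * r - 2 < p) :
    ((Matrix.det (Matrix.of fun i j : Fin k =>
        c (k + 2 * r - 1 + j.val - i.val)) : ℚ) : ZMod p) ≠ 0 := by
  classical
  obtain ⟨P2, hP2⟩ := hodd
  have hprime := (inferInstance : Fact p.Prime).out
  have hp2 := hprime.two_le
  have hp3 : 3 ≤ p := by omega
  set T := k + r - 1 with hT
  set σ := r + P2 with hσ
  set Qf : ℕ → ℕ := fun t => ∏ u ∈ Finset.Ico (t+1) (T+1), u with hQf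
  set D := 2^T * T.factorial with hD
  have hTp : T < p := by omega
  have h2ne : ((2 : ℕ) : ZMod p) ≠ 0 := by
    rw [Ne, ZMod.natCast_eq_zero_iff]
    intro hdvd
    have := Nat.le_of_dvd (by norm_num) hdvd
    omega
  have hDcast : ((D : ℕ) : ZMod p) ≠ 0 := by
    rw [hD]
    push_cast
    exact mul_ne_zero (pow_ne_zero _ h2ne) (fact_lt_ne_zero p hTp)
  -- properties of c
  have h44 : (4 : ℚ)/4 = 1 := by norm_num
  have codd : ∀ t, c (2*t+1) = 0 := by
    intro t
    induction t with
    | zero => simpa using h1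
    | succ t ih =>
      have hr2 := hrec (2*t+1)
      rw [hβ, h44, one_mul] at hr2
      rw [ih, mul_zero] at hr2
      have h2 : 2*(t+1)+1 = 2*t+1+2 := by ring
      rw [h2]
      have hne : ((2*t+1 : ℕ) : ℚ) + 2 ≠ 0 := by positivity
      rcases mul_eq_zero.1 hr2 with h | h
      · exact absurd h hne
      · exact h
  set Bf : ℕ → ℤ := fun t => ∏ j ∈ Finset.range t, (2*(j:ℤ) + 1 - 2*(r:ℤ)) with hBf
  have ceven : ∀ t, c (2*t) * ((2^t * t.factorial : ℕ) : ℚ) = ((Bf t : ℤ) : ℚ) := by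
    intro t
    induction t with
    | zero => simp [h0, hBf]
    | succ t ih =>
      have hr2 := hrec (2*t)
      rw [hβ, h44, one_mul] at hr2
      have hBs : Bf (t+1) = Bf t * (2*(t:ℤ)+1-2*(r:ℤ)) := Finset.prod_range_succ _ _
      have hidx : 2*(t+1) = 2*t+2 := by ring
      rw [hidx, hBs]
      have hcast : ((2^(t+1) * (t+1).factorial : ℕ) : ℚ)
          = ((2*(t:ℚ)+2 : ℚ)) * ((2^t * t.factorial : ℕ) : ℚ) := by
        push_cast [Nat.factorial_succ]
        ring
      rw [hcast]
      push_cast at hr2 ih ⊢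
      linear_combination ((2:ℚ)^t * (t.factorial : ℚ)) * hr2 + (2*(t:ℚ)+1-2*(r:ℚ)) * ih
  -- scaled integer entries
  set Ef : ℕ → ℤ := fun idx => if idx % 2 = 0 then
      Bf (idx/2) * 2^(T - idx/2) * (Qf (idx/2) : ℤ) else 0 with hEf
  have centry : ∀ idx, idx ≤ 2*T → c idx * (D : ℚ) = ((Ef idx : ℤ) : ℚ) := by
    intro idx hidx
    by_cases hpar : idx % 2 = 0
    · set t := idx/2 with ht
      have hidx2 : idx = 2*t := by omega
      have htT : t ≤ T := by omega
      have hsplit : (D : ℚ) = ((2^t * t.factorial : ℕ) : ℚ) * ((2^(T-t) * Qf t : ℕ) : ℚ) := by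
        rw [hD]
        have h2 : (2:ℕ)^T = 2^t * 2^(T-t) := by rw [← pow_add]; congr 1; omega
        have hf : T.factorial = t.factorial * Qf t := fact_split t T htT
        rw [h2, hf]
        push_cast
        ring
      have hEval : Ef idx = Bf t * 2^(T-t) * (Qf t : ℤ) := by
        rw [hEf]
        simp only
        rw [if_pos hpar]
      rw [hEval, hidx2, hsplit, ← mul_assoc, ceven t]
      push_cast
      ring
    · have hpar1 : idx % 2 = 1 := by omega
      have hidx2 : idx = 2*(idx/2)+1 := by omega
      have hEval : Ef idx = 0 := by
        rw [hEf]
        simp only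
        rw [if_neg hpar]
      rw [hEval, hidx2, codd]
      simp
  -- matrices
  set Mq := Matrix.of (fun i j : Fin k => c (k + 2 * r - 1 + j.val - i.val)) with hMq
  set Mz := Matrix.of (fun i j : Fin k => Ef (k + 2 * r - 1 + j.val - i.val)) with hMz
  have hidxle : ∀ i j : Fin k, k + 2*r - 1 + j.val - i.val ≤ 2*T := by
    intro i j
    have := i.isLt
    have := j.isLt
    omega
  have hdet1 : ((Mz.det : ℤ) : ℚ) = (D : ℚ)^k * Mq.det := by
    have hmap : (Int.castRingHom ℚ).mapMatrix Mz
        = Matrix.of (fun i j : Fin k => (D : ℚ) * Mq i j) := by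
      ext i j
      simp only [RingHom.mapMatrix_apply, Matrix.map_apply, Matrix.of_apply, hMz, hMq,
        Int.coe_castRingHom]
      rw [← centry _ (hidxle i j)]
      ring
    have h2 := RingHom.map_det (Int.castRingHom ℚ) Mz
    rw [hmap] at h2
    rw [show ((Mz.det : ℤ) : ℚ) = (Int.castRingHom ℚ) Mz.det from rfl, h2,
      Matrix.det_mul_column]
    simp [Finset.prod_const]
  have hq : Mq.det * ((D^k : ℕ) : ℚ) = ((Mz.det : ℤ) : ℚ) := by
    rw [hdet1]
    push_cast
    ring
  have hDk : ((D^k : ℕ) : ZMod p) ≠ 0 := by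
    push_cast
    exact pow_ne_zero _ hDcast
  have hkey := rat_cast_mul_eq p Mq.det Mz.det (D^k) hq hDk
  -- the mod-p matrix
  set Sfun : ℕ → ZMod p := fun idx => if idx % 2 = 0 then
      (-1 : ZMod p)^(idx/2) * (σ.choose (idx/2) : ZMod p) else 0 with hSfun
  set Nmat := Matrix.of (fun i j : Fin k => Sfun (k + 2 * r - 1 + j.val - i.val)) with hNmat
  have hEbar : ∀ idx, idx ≤ 2*T →
      ((Ef idx : ℤ) : ZMod p) = ((D : ℕ) : ZMod p) * Sfun idx := by
    intro idx hidx
    by_cases hpar : idx % 2 = 0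
    · set t := idx/2 with ht
      have htT : t ≤ T := by omega
      have hEval : Ef idx = Bf t * 2^(T-t) * (Qf t : ℤ) := by
        rw [hEf]; simp only; rw [if_pos hpar]
      have hSval : Sfun idx = (-1 : ZMod p)^t * (σ.choose t : ZMod p) := by
        rw [hSfun]; simp only; rw [if_pos hpar]
      have hB : ((Bf t : ℤ) : ZMod p) = (-2)^t * ((σ.descFactorial t : ℕ) : ZMod p) := by
        rw [hBf]
        push_cast
        have hfactor : ∀ j ∈ Finset.range t,
            (2*(j : ZMod p) + 1 - 2*(r : ZMod p)) = (-2) * ((σ : ZMod p) - (j : ZMod p)) := by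
          intro j _
          have hp0 : ((2*P2+1 : ℕ) : ZMod p) = 0 := by
            rw [← hP2]
            exact ZMod.natCast_self p
          push_cast at hp0
          have hσc : (σ : ZMod p) = (r : ZMod p) + (P2 : ZMod p) := by
            rw [hσ]
            push_cast
            ring
          rw [hσc]
          linear_combination hp0
        rw [Finset.prod_congr rfl hfactor, Finset.prod_mul_distrib, Finset.prod_const,
          Finset.card_range, prod_sub_eq_descFactorial]
      have h2T : (2:ℕ)^T = 2^t * 2^(T-t) := by rw [← pow_add]; congr 1; omega
      have hTf : T.factorial = t.factorial * Qf t := fact_split t T htT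
      rw [hEval, hSval]
      push_cast
      rw [hB, Nat.descFactorial_eq_factorial_mul_choose]
      rw [hD]
      push_cast [h2T, hTf]
      rw [show ((-2 : ZMod p)) = (-1) * 2 from by ring, mul_pow]
      ring
    · have hEval : Ef idx = 0 := by rw [hEf]; simp only; rw [if_neg hpar]
      have hSval : Sfun idx = 0 := by rw [hSfun]; simp only; rw [if_neg hpar]
      rw [hEval, hSval]
      simp
  have hdet2 : ((Mz.det : ℤ) : ZMod p) = ((D : ℕ) : ZMod p)^k * Nmat.det := by
    have hmap : (Int.castRingHom (ZMod p)).mapMatrix Mz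
        = Matrix.of (fun i j : Fin k => ((D : ℕ) : ZMod p) * Nmat i j) := by
      ext i j
      simp only [RingHom.mapMatrix_apply, Matrix.map_apply, Matrix.of_apply, hMz, hNmat,
        Int.coe_castRingHom]
      exact hEbar _ (hidxle i j)
    have h2 := RingHom.map_det (Int.castRingHom (ZMod p)) Mz
    rw [hmap] at h2
    rw [show ((Mz.det : ℤ) : ZMod p) = (Int.castRingHom (ZMod p)) Mz.det from rfl, h2,
      Matrix.det_mul_column]
    simp [Finset.prod_const]
  -- nonvanishing of the mod-p determinant
  have hNdet : Nmat.det ≠ 0 := by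
    rw [hNmat]
    apply parity_det_ne k r σ hr hk Sfun
    · intro idx hidx
      rw [hSfun]; simp only; rw [if_neg (by omega)]
    · intro idx hidx
      rw [hSfun]; simp only; rw [if_pos hidx]
    · omega
    · apply fact_lt_ne_zero
      omega
  -- conclude
  intro hzero
  rw [hzero, zero_mul] at hkey
  have : ((Mz.det : ℤ) : ZMod p) ≠ 0 := by
    rw [hdet2]
    exact mul_ne_zero (pow_ne_zero _ hDcast) hNdet
  exact this hkey.symm
end

section
/- In the polynomial ring ℚ[β] one has the identity c_{2r} = (1/(2^{2r}·(2r)!)) · ∏_{i=1}^{r} (1 − (2i−1)²·β). -/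
open Polynomial

lemma pow_pred_mul (p : ℚ[X]) (n : ℕ) : p * (C (n:ℚ) * p^(n-1)) = C (n:ℚ) * p^n := by
  cases n with
  | zero => simp
  | succ n => rw [pow_succ]; push_cast; ring

lemma keyDeriv (α δ : ℚ) (a b : ℕ) :
    (1 + C α * X) * (1 + C δ * X) * derivative ((1 + C α * X)^a * (1 + C δ * X)^b)
      = (C ((a:ℚ)*α + (b:ℚ)*δ) + C (((a:ℚ)+(b:ℚ))*(α*δ)) * X) * ((1 + C α * X)^a * (1 + C δ * X)^b) := by
  set u : ℚ[X] := 1 + C α * X with hu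
  set v : ℚ[X] := 1 + C δ * X with hv
  have hdu : derivative u = C α := by rw [hu]; simp
  have hdv : derivative v = C δ := by rw [hv]; simp
  have h1 : u * (C (a:ℚ) * u^(a-1)) = C (a:ℚ) * u^a := pow_pred_mul u a
  have h2 : v * (C (b:ℚ) * v^(b-1)) = C (b:ℚ) * v^b := pow_pred_mul v b
  rw [derivative_mul, derivative_pow, derivative_pow, hdu, hdv]
  calc u * v * (C (a:ℚ) * u^(a-1) * C α * v^b + u^a * (C (b:ℚ) * v^(b-1) * C δ))
      = (u * (C (a:ℚ) * u^(a-1))) * C α * (v * v^b) + (v * (C (b:ℚ) * v^(b-1))) * C δ * (u * u^a) := by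
        ring
    _ = (C (a:ℚ) * u^a) * C α * (v * v^b) + (C (b:ℚ) * v^b) * C δ * (u * u^a) := by rw [h1, h2]
    _ = (C ((a:ℚ)*α + (b:ℚ)*δ) + C (((a:ℚ)+(b:ℚ))*(α*δ)) * X) * (u^a * v^b) := by
        rw [hu, hv]; simp only [C_add, C_mul]; ring

lemma coeffRec (α δ : ℚ) (hαδ : α + δ = 1) (a b : ℕ) (n : ℕ) :
    ((n:ℚ)+2) * (((1 + C α * X)^a * (1 + C δ * X)^b).coeff (n+2))
      + (((n:ℚ)+1) - ((a:ℚ)*α+(b:ℚ)*δ)) * (((1 + C α * X)^a * (1 + C δ * X)^b).coeff (n+1))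
      + (α*δ) * (((n:ℚ)) - ((a:ℚ)+(b:ℚ))) * (((1 + C α * X)^a * (1 + C δ * X)^b).coeff n) = 0 := by
  set g : ℚ[X] := (1 + C α * X)^a * (1 + C δ * X)^b with hg
  have key := keyDeriv α δ a b
  have hD : (1 + C α * X) * (1 + C δ * X) = 1 + C (α+δ) * X + C (α*δ) * X^2 := by
    simp only [C_add, C_mul]; ring
  rw [hαδ, C_1, one_mul] at hD
  rw [← hg, hD] at key
  have h := congrArg (fun p => p.coeff (n+1)) key
  simp only [add_mul, one_mul, mul_assoc] at h
  rw [show X^2 * derivative g = X * (X * derivative g) by ring] at h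
  simp only [coeff_add, coeff_X_mul, coeff_C_mul, coeff_derivative] at h
  cases n with
  | zero =>
    rw [show ((0:ℕ):ℚ) = 0 by norm_num]
    have hx : (X * derivative g).coeff 0 = 0 := by
      rw [Polynomial.mul_coeff_zero, coeff_X_zero, zero_mul]
    rw [hx] at h
    push_cast at h ⊢
    ring_nf at h ⊢
    linarith [h]
  | succ n =>
    rw [coeff_X_mul, coeff_derivative] at h
    push_cast at h ⊢
    ring_nf at h ⊢
    linarith [h]

lemma seq_unique (u v A B : ℕ → ℚ) (h0 : u 0 = v 0) (h1 : u 1 = v 1)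
    (hu : ∀ n : ℕ, ((n:ℚ)+2) * u (n+2) + A n * u (n+1) + B n * u n = 0)
    (hv : ∀ n : ℕ, ((n:ℚ)+2) * v (n+2) + A n * v (n+1) + B n * v n = 0) :
    ∀ n, u n = v n := by
  intro n
  induction n using Nat.strong_induction_on with
  | _ n ih =>
    match n with
    | 0 => exact h0
    | 1 => exact h1
    | (m+2) =>
      have h2 : ((m:ℚ)+2) ≠ 0 := by positivity
      have e1 : u (m+1) = v (m+1) := ih (m+1) (by omega)
      have e0 : u m = v m := ih m (by omega)
      have hum := hu m
      have hvm := hv m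
      rw [e1, e0] at hum
      have : ((m:ℚ)+2) * u (m+2) = ((m:ℚ)+2) * v (m+2) := by linarith
      exact mul_left_cancel₀ h2 this

lemma lin_deg (q : ℚ) : (1 + C q * X : ℚ[X]).natDegree ≤ 1 := by
  apply (natDegree_add_le _ _).trans
  simp only [natDegree_one]
  refine max_le (by norm_num) ?_
  exact (natDegree_C_mul_le _ _).trans (by simp)

lemma root_eval (r : ℕ) (hr : 1 ≤ r) (c : ℕ → Polynomial ℚ)
    (h0 : c 0 = 1) (h1 : c 1 = C (r : ℚ))
    (hrec : ∀ n : ℕ,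
      C ((n : ℚ) + 2) * c (n + 2) + C ((n : ℚ) + 1 - r) * c (n + 1)
        + C (((n : ℚ) + 1 - 2 * r) / 4) * (1 - X) * c n = 0)
    (i : ℕ) (hi : i < r) :
    (c (2*r)).eval (1/(2*(i:ℚ)+1)^2) = 0 := by
  set s : ℚ := 2*(i:ℚ)+1 with hs
  have hs0 : s ≠ 0 := by positivity
  set x : ℚ := 1/s^2 with hx
  set α : ℚ := ((i:ℚ)+1)/s with hα
  set δ : ℚ := (i:ℚ)/s with hδ
  set a : ℕ := r + i with ha
  set b : ℕ := r - (i+1) with hbdef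
  have hb : (b:ℚ) = (r:ℚ) - (i:ℚ) - 1 := by
    rw [hbdef, Nat.cast_sub (by omega)]; push_cast; ring
  have haq : (a:ℚ) = (r:ℚ) + i := by rw [ha]; push_cast; ring
  have hαδ : α + δ = 1 := by rw [hα, hδ]; field_simp [hs]; ring
  have hm : (a:ℚ)*α + (b:ℚ)*δ = r := by
    rw [haq, hb, hα, hδ]; field_simp [hs]; ring
  have hab : (a:ℚ) + (b:ℚ) = 2*r - 1 := by rw [haq, hb]; ring
  have hprod : α*δ = (1-x)/4 := by
    rw [hα, hδ, hx, hs]; field_simp; ring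
  set g : ℚ[X] := (1 + C α * X)^a * (1 + C δ * X)^b with hg
  have hγrec : ∀ n : ℕ, ((n:ℚ)+2) * g.coeff (n+2) + ((n:ℚ)+1-(r:ℚ)) * g.coeff (n+1)
      + ((((n:ℚ)+1-2*(r:ℚ))/4)*(1-x)) * g.coeff n = 0 := by
    intro n
    have h := coeffRec α δ hαδ a b n
    rw [hm, hab, ← hg] at h
    linear_combination h - (((n:ℚ)+1-2*(r:ℚ)) * g.coeff n) * hprod
  have herec : ∀ n : ℕ, ((n:ℚ)+2) * (c (n+2)).eval x + ((n:ℚ)+1-(r:ℚ)) * (c (n+1)).eval x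
      + ((((n:ℚ)+1-2*(r:ℚ))/4)*(1-x)) * (c n).eval x = 0 := by
    intro n
    have h := congrArg (fun p => p.eval x) (hrec n)
    simp only [eval_add, eval_mul, eval_C, eval_sub, eval_one, eval_X, eval_zero] at h
    linarith [h]
  have hg0 : g.coeff 0 = 1 := by
    rw [hg, coeff_zero_eq_eval_zero]; simp
  have hg1 : g.coeff 1 = r := by
    have k0 := congrArg (fun p => p.coeff 0) (keyDeriv α δ a b)
    simp only [mul_coeff_zero, coeff_add, coeff_C_mul, coeff_derivative, coeff_X_zero,
      coeff_one_zero, mul_zero, add_zero, mul_one, one_mul, zero_add, zero_mul, ← hg] at k0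
    rw [hm, hg0] at k0
    simpa using k0
  have hiter := seq_unique (fun n => (c n).eval x) (fun n => g.coeff n)
      (fun n => (n:ℚ)+1-(r:ℚ)) (fun n => (((n:ℚ)+1-2*(r:ℚ))/4)*(1-x))
      (by simp [h0, hg0]) (by simp [h1, hg1]) herec hγrec
  have hdeg : g.natDegree < 2*r := by
    have h1d : ((1 + C α * X)^a).natDegree ≤ a :=
      natDegree_pow_le.trans (by simpa using Nat.mul_le_mul_left a (lin_deg α))
    have h2d : ((1 + C δ * X)^b).natDegree ≤ b :=
      natDegree_pow_le.trans (by simpa using Nat.mul_le_mul_left b (lin_deg δ))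
    have h3 := natDegree_mul_le (p := (1 + C α * X)^a) (q := (1 + C δ * X)^b)
    rw [← hg] at h3
    have : a + b = 2*r - 1 := by omega
    omega
  calc (c (2*r)).eval x = g.coeff (2*r) := hiter (2*r)
    _ = 0 := coeff_eq_zero_of_natDegree_lt hdeg

lemma deg_c (r : ℕ) (c : ℕ → Polynomial ℚ) (h0 : c 0 = 1) (h1 : c 1 = C (r:ℚ))
    (hrec : ∀ n : ℕ,
      C ((n : ℚ) + 2) * c (n + 2) + C ((n : ℚ) + 1 - r) * c (n + 1)
        + C (((n : ℚ) + 1 - 2 * r) / 4) * (1 - X) * c n = 0) :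
    ∀ n, (c n).natDegree ≤ n / 2 := by
  intro n
  induction n using Nat.strong_induction_on with
  | _ n ih =>
    match n with
    | 0 => simp [h0]
    | 1 => simp [h1]
    | (m+2) =>
      have hm2 : ((m:ℚ)+2) ≠ 0 := by positivity
      have hc : C ((m:ℚ)+2) * c (m+2)
          = -(C ((m:ℚ)+1-r) * c (m+1) + C (((m:ℚ)+1-2*r)/4) * (1-X) * c m) := by
        linear_combination hrec m
      have hdeg1 : (c (m+2)).natDegree = (C ((m:ℚ)+2) * c (m+2)).natDegree :=
        (natDegree_C_mul hm2).symm
      have b1 : (C ((m:ℚ)+1-r) * c (m+1)).natDegree ≤ (m+1)/2 :=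
        (natDegree_C_mul_le _ _).trans (ih (m+1) (by omega))
      have b2 : (C (((m:ℚ)+1-2*r)/4) * (1-X) * c m).natDegree ≤ 1 + m/2 := by
        refine natDegree_mul_le.trans (add_le_add ?_ (ih m (by omega)))
        refine (natDegree_C_mul_le _ _).trans ?_
        exact (natDegree_sub_le _ _).trans (by simp)
      rw [hdeg1, hc, natDegree_neg]
      exact (natDegree_add_le _ _).trans (max_le (b1.trans (by omega)) (b2.trans (by omega)))

lemma top_c (r : ℕ) (c : ℕ → Polynomial ℚ) (h0 : c 0 = 1)
    (hdeg : ∀ n, (c n).natDegree ≤ n / 2)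
    (hrec : ∀ n : ℕ,
      C ((n : ℚ) + 2) * c (n + 2) + C ((n : ℚ) + 1 - r) * c (n + 1)
        + C (((n : ℚ) + 1 - 2 * r) / 4) * (1 - X) * c n = 0) :
    ∀ m, (c (2*m)).coeff m
      = (∏ i ∈ Finset.range m, (2*(i:ℚ)+1 - 2*r)) / (8^m * (m.factorial:ℚ)) := by
  intro m
  induction m with
  | zero => simp [h0]
  | succ m ihm =>
    have h := congrArg (fun p => p.coeff (m+1)) (hrec (2*m))
    have hz1 : (c (2*m+1)).coeff (m+1) = 0 :=
      coeff_eq_zero_of_natDegree_lt (lt_of_le_of_lt (hdeg _) (by omega))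
    have hz0 : (c (2*m)).coeff (m+1) = 0 :=
      coeff_eq_zero_of_natDegree_lt (lt_of_le_of_lt (hdeg _) (by omega))
    simp only [mul_assoc, coeff_add, coeff_C_mul, coeff_zero] at h
    rw [show ((1:ℚ[X]) - X) * c (2*m) = c (2*m) - X * c (2*m) by ring] at h
    simp only [coeff_sub, coeff_X_mul] at h
    rw [hz1, hz0, ihm] at h
    rw [show 2*(m+1) = 2*m+2 by ring]
    rw [Finset.prod_range_succ, pow_succ, Nat.factorial_succ]
    push_cast at h ⊢
    have hm2 : (2*(m:ℚ)+2) ≠ 0 := by positivity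
    have hf : ((m.factorial : ℚ)) ≠ 0 := by
      exact_mod_cast Nat.cast_ne_zero.mpr (Nat.factorial_ne_zero m)
    have hp8 : ((8:ℚ))^m ≠ 0 := by positivity
    field_simp at h
    rw [eq_div_iff (by positivity)]
    linear_combination h

lemma fact_odd (r : ℕ) :
    (2*r).factorial = (∏ i ∈ Finset.range r, (2*i+1)) * 2^r * r.factorial := by
  induction r with
  | zero => simp
  | succ r ih =>
    have h : 2*(r+1) = (2*r+1)+1 := by omega
    rw [h, Nat.factorial_succ, Nat.factorial_succ, Nat.factorial_succ,
      Finset.prod_range_succ, ih, pow_succ]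
    ring

open Polynomial in
/-- Fix a positive integer `r`. Define `c : ℕ → ℚ[β]` by `c 0 = 1`, `c 1 = r` and
`(n+2)·c (n+2) + (n+1−r)·c (n+1) + (n+1−2r)·((1−β)/4)·c n = 0` for all `n ≥ 0`
(this is the sequence `c_n(1,β,0)` of the paper). Then
`c (2r) = (1/(2^{2r}·(2r)!)) · ∏_{i=1}^{r} (1 − (2i−1)²·β)` in `ℚ[β]`. -/
theorem stmt_5 (r : ℕ) (hr : 1 ≤ r) (c : ℕ → Polynomial ℚ)
    (h0 : c 0 = 1) (h1 : c 1 = C (r : ℚ))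
    (hrec : ∀ n : ℕ,
      C ((n : ℚ) + 2) * c (n + 2) + C ((n : ℚ) + 1 - r) * c (n + 1)
        + C (((n : ℚ) + 1 - 2 * r) / 4) * (1 - X) * c n = 0) :
    c (2 * r) = C (1 / (2 ^ (2 * r) * (Nat.factorial (2 * r) : ℚ))) *
      ∏ i ∈ Finset.range r, (1 - C ((2 * (i : ℚ) + 1) ^ 2) * X) := by
  have degc := deg_c r c h0 h1 hrec
  have topc := top_c r c h0 degc hrec
  have root := root_eval r hr c h0 h1 hrec
  set P : ℚ[X] := ∏ i ∈ Finset.range r, (1 - C ((2 * (i : ℚ) + 1) ^ 2) * X) with hP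
  set k : ℚ := 1 / (2 ^ (2 * r) * (Nat.factorial (2 * r) : ℚ)) with hk
  have hfac : ∀ i : ℕ, (1 - C ((2*(i:ℚ)+1)^2) * X : ℚ[X]) = C (-(2*(i:ℚ)+1)^2) * X + C 1 := by
    intro i; rw [map_neg, C_1]; ring
  have hfne : ∀ i : ℕ, (-(2*(i:ℚ)+1)^2 : ℚ) ≠ 0 := by
    intro i; exact neg_ne_zero.2 (by positivity)
  have hdgf : ∀ i ∈ Finset.range r, (1 - C ((2*(i:ℚ)+1)^2) * X : ℚ[X]).natDegree = 1 := by
    intro i _; rw [hfac i]; exact natDegree_linear (hfne i)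
  have hfnz : ∀ i ∈ Finset.range r, (1 - C ((2*(i:ℚ)+1)^2) * X : ℚ[X]) ≠ 0 := by
    intro i hi hz
    have := hdgf i hi
    rw [hz] at this
    simp at this
  have hPdeg : P.natDegree = r := by
    rw [hP, natDegree_prod _ _ hfnz, Finset.sum_congr rfl hdgf]
    simp
  have hPlc : P.leadingCoeff = ∏ i ∈ Finset.range r, (-(2*(i:ℚ)+1)^2) := by
    rw [hP, leadingCoeff_prod]
    exact Finset.prod_congr rfl fun i _ => by rw [hfac i]; exact leadingCoeff_linear (hfne i)
  have hPcoeff : P.coeff r = ∏ i ∈ Finset.range r, (-(2*(i:ℚ)+1)^2) := by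
    rw [← hPlc, Polynomial.leadingCoeff, hPdeg]
  have hcoeffR : (C k * P).coeff r = k * ∏ i ∈ Finset.range r, (-(2*(i:ℚ)+1)^2) := by
    rw [coeff_C_mul, hPcoeff]
  have hdegR : (C k * P).natDegree ≤ r := (natDegree_C_mul_le _ _).trans hPdeg.le
  -- identify top coefficients
  have hprodneg : ∏ i ∈ Finset.range r, (-(2*(i:ℚ)+1)^2)
      = (-1)^r * (∏ i ∈ Finset.range r, (2*(i:ℚ)+1))^2 := by
    calc ∏ i ∈ Finset.range r, (-(2*(i:ℚ)+1)^2)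
        = ∏ i ∈ Finset.range r, ((-1) * ((2*(i:ℚ)+1)^2)) := by
          exact Finset.prod_congr rfl fun i _ => by ring
      _ = (-1)^r * ∏ i ∈ Finset.range r, ((2*(i:ℚ)+1)^2) := by
          rw [Finset.prod_mul_distrib, Finset.prod_const, Finset.card_range]
      _ = (-1)^r * (∏ i ∈ Finset.range r, (2*(i:ℚ)+1))^2 := by
          rw [← Finset.prod_pow]
  have hrefl : ∏ i ∈ Finset.range r, (2*(i:ℚ)+1-2*r)
      = (-1)^r * ∏ i ∈ Finset.range r, (2*(i:ℚ)+1) := by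
    have h1 : ∀ i ∈ Finset.range r, (2*(i:ℚ)+1-2*(r:ℚ)) = (-1) * (2*((r-1-i : ℕ):ℚ)+1) := by
      intro i hi
      have hi' : i < r := Finset.mem_range.1 hi
      have hcast : ((r-1-i : ℕ):ℚ) = (r:ℚ) - 1 - i := by
        have he : r - 1 - i = r - (1+i) := by omega
        rw [he, Nat.cast_sub (by omega)]; push_cast; ring
      rw [hcast]; ring
    rw [Finset.prod_congr rfl h1, Finset.prod_mul_distrib, Finset.prod_const, Finset.card_range,
      Finset.prod_range_reflect (fun j => (2*(j:ℚ)+1)) r]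
  have hQQ : ((2*r).factorial : ℚ) = (∏ i ∈ Finset.range r, (2*(i:ℚ)+1)) * 2^r * (r.factorial:ℚ) := by
    have := congrArg (Nat.cast : ℕ → ℚ) (fact_odd r)
    push_cast at this
    exact this
  have htopval : (∏ i ∈ Finset.range r, (2*(i:ℚ)+1-2*r)) / (8^r * (r.factorial:ℚ))
      = k * ∏ i ∈ Finset.range r, (-(2*(i:ℚ)+1)^2) := by
    rw [hrefl, hprodneg, hk, hQQ]
    have hne : (∏ i ∈ Finset.range r, (2*(i:ℚ)+1)) ≠ 0 :=
      ne_of_gt (Finset.prod_pos fun i _ => by positivity)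
    have hfacne : (r.factorial : ℚ) ≠ 0 := Nat.cast_ne_zero.mpr (Nat.factorial_ne_zero r)
    have h8 : (8:ℚ)^r = 2^(2*r) * 2^r := by
      rw [show (8:ℚ) = 2^3 by norm_num, ← pow_mul, ← pow_add]
      congr 1
      omega
    rw [h8]
    field_simp
  have hc2r : (c (2*r)).coeff r = (C k * P).coeff r := by
    rw [topc r, hcoeffR, htopval]
  have hdegc2r : (c (2*r)).natDegree ≤ r := by
    have := degc (2*r); omega
  have hqdeg : (c (2*r) - C k * P).natDegree ≤ r :=
    (natDegree_sub_le _ _).trans (max_le hdegc2r hdegR)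
  have hqcoeff : (c (2*r) - C k * P).coeff r = 0 := by
    rw [coeff_sub, hc2r, sub_self]
  have heval : ∀ i : Fin r, (c (2*r) - C k * P).eval (1/(2*((i:ℕ):ℚ)+1)^2) = 0 := by
    intro i
    have h2 : P.eval (1/(2*((i:ℕ):ℚ)+1)^2) = 0 := by
      rw [hP, eval_prod]
      apply Finset.prod_eq_zero (Finset.mem_range.2 i.2)
      have hpos : (2*((i:ℕ):ℚ)+1) ≠ 0 := by positivity
      simp only [eval_sub, eval_mul, eval_C, eval_X, eval_one]
      field_simp
      norm_num
    rw [eval_sub, eval_mul, eval_C, h2, root i.1 i.2]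
    ring
  have hinj : Function.Injective (fun i : Fin r => 1/(2*((i:ℕ):ℚ)+1)^2) := by
    intro i j hij
    simp only at hij
    field_simp at hij
    exact Fin.ext (by
      have h := (pow_left_inj₀ (by positivity) (by positivity) two_ne_zero).1 hij.symm
      exact_mod_cast (by linarith : ((i:ℕ):ℚ) = ((j:ℕ):ℚ)))
  have hq0 : c (2*r) - C k * P = 0 := by
    by_cases hqz : c (2*r) - C k * P = 0
    · exact hqz
    · have hlt : (c (2*r) - C k * P).natDegree < r := by
        rcases lt_or_eq_of_le hqdeg with h | h
        · exact h
        · exfalso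
          have hlc := Polynomial.leadingCoeff_ne_zero.mpr hqz
          rw [Polynomial.leadingCoeff, h] at hlc
          exact hlc hqcoeff
      exact eq_zero_of_natDegree_lt_card_of_eval_eq_zero _ hinj heval (by simpa using hlt)
  exact sub_eq_zero.mp hq0
end

section
/- There exists a nonzero rational constant c such that, in ℚ[β], P_k(1,β,0) = c · ∏_{i=1}^{r} (β − 1/(2i−1)²)^k · ∏_{i=1}^{k−1} (β − 1/(2r+2i−1)²)^{k−i}. -/
open Polynomial Finset

/-- The second-order recurrence satisfied by coefficient sequences of
`(1-a t)^A (1-b t)^B` type series. -/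
def SRel (lam ρ σ : ℚ) (v : ℕ → ℚ) : Prop :=
  v 1 = ρ * v 0 ∧ ∀ n : ℕ, ((n : ℚ) + 2) * v (n + 2) + ((n : ℚ) + 1 - ρ) * v (n + 1)
    + lam * ((n : ℚ) - σ) * v n = 0

theorem srel_unique {lam ρ σ : ℚ} {v w : ℕ → ℚ} (hv : SRel lam ρ σ v) (hw : SRel lam ρ σ w)
    (h0 : v 0 = w 0) : ∀ n, v n = w n := by
  have key : ∀ n, v n = w n ∧ v (n+1) = w (n+1) := by
    intro n
    induction n with
    | zero => exact ⟨h0, by rw [hv.1, hw.1, h0]⟩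
    | succ m ih =>
      refine ⟨ih.2, ?_⟩
      have h2 : ((m : ℚ) + 2) ≠ 0 := by positivity
      have e1 := hv.2 m
      have e2 := hw.2 m
      have : ((m : ℚ) + 2) * v (m + 2) = ((m : ℚ) + 2) * w (m + 2) := by
        rw [ih.1, ih.2] at e1; linarith [e1, e2]
      exact mul_left_cancel₀ h2 this
  exact fun n => (key n).1

/-- multiplication of the generating series by `(1 - a t)`. -/
def stepOp (a : ℚ) (v : ℕ → ℚ) : ℕ → ℚ
  | 0 => v 0
  | (m+1) => v (m+1) - a * v m

theorem stepOp_zero (a : ℚ) (v : ℕ → ℚ) : stepOp a v 0 = v 0 := rfl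

theorem srel_step {a ρ σ : ℚ} {v : ℕ → ℚ} (hv : SRel (a * (-1 - a)) ρ σ v) :
    SRel (a * (-1 - a)) (ρ - a) (σ + 1) (stepOp a v) := by
  constructor
  · show v 1 - a * v 0 = (ρ - a) * v 0
    rw [hv.1]; ring
  · intro n
    match n with
    | 0 =>
      show ((0:ℚ) + 2) * (v 2 - a * v 1) + ((0:ℚ) + 1 - (ρ - a)) * (v 1 - a * v 0)
        + (a * (-1 - a)) * ((0:ℚ) - (σ + 1)) * v 0 = 0
      have e0 := hv.2 0
      have e1 := hv.1
      push_cast at e0 ⊢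
      linear_combination e0 - a * e1
    | (m+1) =>
      show (((m+1:ℕ) : ℚ) + 2) * (v (m+3) - a * v (m+2))
        + (((m+1:ℕ) : ℚ) + 1 - (ρ - a)) * (v (m+2) - a * v (m+1))
        + (a * (-1 - a)) * (((m+1:ℕ) : ℚ) - (σ + 1)) * (v (m+1) - a * v m) = 0
      have e0 := hv.2 (m+1)
      have e1 := hv.2 m
      push_cast at e0 e1 ⊢
      linear_combination e0 - a * e1

/-- coefficients of `(1 - b t)^B` with `b = -1-a`. -/
def bin (a : ℚ) (B : ℕ) : ℕ → ℚ := fun n => (B.choose n : ℚ) * (1 + a) ^ n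

theorem bin_zero (a : ℚ) (B : ℕ) : bin a B 0 = 1 := by simp [bin]

theorem bin_eq_zero {a : ℚ} {B n : ℕ} (h : B < n) : bin a B n = 0 := by
  simp [bin, Nat.choose_eq_zero_of_lt h]

theorem bin_first_order (a : ℚ) (B : ℕ) (n : ℕ) :
    ((n : ℚ) + 1) * bin a B (n + 1) = (-1 - a) * ((n : ℚ) - B) * bin a B n := by
  rcases lt_or_ge n B with h | h
  · unfold bin
    have hc : ((B.choose (n+1) : ℚ)) * (n + 1) = (B.choose n : ℚ) * (B - n) := by
      have := Nat.add_one_mul_choose_eq B n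
      -- (B+1) * choose B n ... not what we want; use choose_succ_right_eq
      have h2 := Nat.choose_succ_right_eq B n
      -- h2 : B.choose (n + 1) * (n + 1) = B.choose n * (B - n)
      have := congrArg (fun x : ℕ => (x : ℚ)) h2
      push_cast [Nat.cast_sub h.le] at this
      exact_mod_cast this
    calc ((n : ℚ) + 1) * ((B.choose (n+1) : ℚ) * (1+a)^(n+1))
        = ((B.choose (n+1) : ℚ) * (n + 1)) * ((1+a)^(n+1)) := by ring
      _ = ((B.choose n : ℚ) * (B - n)) * ((1+a)^(n+1)) := by rw [hc]
      _ = (-1 - a) * ((n : ℚ) - B) * ((B.choose n : ℚ) * (1+a)^n) := by ring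
  · rcases lt_or_eq_of_le h with h' | h'
    · rw [bin_eq_zero h', bin_eq_zero (by omega)]; ring
    · subst h'
      rw [bin_eq_zero (by omega)]
      simp
theorem srel_bin (a : ℚ) (B : ℕ) : SRel (a * (-1 - a)) ((1 + a) * B) B (bin a B) := by
  constructor
  · simp [bin, Nat.choose_one_right]; ring
  · intro n
    have h1 := bin_first_order a B (n+1)
    have h2 := bin_first_order a B n
    push_cast at h1 ⊢
    linear_combination h1 - a * h2

theorem stepOp_iter_zero (a : ℚ) (v : ℕ → ℚ) (t : ℕ) : (stepOp a)^[t] v 0 = v 0 := by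
  induction t generalizing v with
  | zero => rfl
  | succ m ih => rw [Function.iterate_succ_apply]; rw [ih (stepOp a v)]; rfl

theorem srel_iter {a ρ σ : ℚ} {v : ℕ → ℚ} (hv : SRel (a * (-1 - a)) ρ σ v) (t : ℕ) :
    SRel (a * (-1 - a)) (ρ - t * a) (σ + t) ((stepOp a)^[t] v) := by
  induction t with
  | zero => simpa using hv
  | succ m ih =>
    rw [Function.iterate_succ_apply']
    have h := srel_step ih
    have e1 : ρ - ((m+1 : ℕ) : ℚ) * a = ρ - (m : ℚ) * a - a := by push_cast; ring
    have e2 : σ + ((m+1 : ℕ) : ℚ) = σ + (m : ℚ) + 1 := by push_cast; ring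
    rw [e1, e2]
    exact h

theorem stepOp_iter_vanish {a : ℚ} (t : ℕ) :
    ∀ (B : ℕ) (v : ℕ → ℚ), (∀ n, B < n → v n = 0) → ∀ n, B + t < n → (stepOp a)^[t] v n = 0 := by
  induction t with
  | zero => intro B v hv n hn; simpa using hv n (by omega)
  | succ m ih =>
    intro B v hv n hn
    rw [Function.iterate_succ_apply]
    refine ih (B+1) (stepOp a v) ?_ n (by omega)
    intro j hj
    match j, hj with
    | (j+1), hj =>
      show v (j+1) - a * v j = 0
      rw [hv _ (by omega), hv _ (by omega)]; ring

theorem stepOp_iter_apply {a : ℚ} (v : ℕ → ℚ) (t : ℕ) :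
    ∀ n, t ≤ n → (stepOp a)^[t] v n
      = ∑ d ∈ Finset.range (t+1), (t.choose d : ℚ) * (-a)^d * v (n - d) := by
  induction t with
  | zero => intro n _; simp
  | succ m ih =>
    intro n hn
    obtain ⟨j, rfl⟩ : ∃ j, n = j + 1 := ⟨n - 1, by omega⟩
    rw [Function.iterate_succ_apply']
    show ((stepOp a)^[m] v) (j+1) - a * ((stepOp a)^[m] v) j = _
    rw [ih (j+1) (by omega), ih j (by omega)]
    have shift : a * ∑ d ∈ Finset.range (m+1), (m.choose d : ℚ) * (-a)^d * v (j - d)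
        = - ∑ d ∈ Finset.range (m+1), (m.choose d : ℚ) * (-a)^(d+1) * v (j + 1 - (d+1)) := by
      rw [← Finset.sum_neg_distrib, Finset.mul_sum]
      refine Finset.sum_congr rfl fun d hd => ?_
      have : j + 1 - (d + 1) = j - d := by omega
      rw [this]; ring
    rw [sub_eq_add_neg, shift, neg_neg]
    have h2 : ∑ d ∈ Finset.range (m+1), (m.choose d : ℚ) * (-a)^(d+1) * v (j + 1 - (d+1))
        = ∑ e ∈ Finset.range (m+2),
            (if e = 0 then 0 else ((m.choose (e-1) : ℚ) * (-a)^e)) * v (j + 1 - e) := by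
      rw [Finset.sum_range_succ' (fun e => (if e = 0 then 0 else ((m.choose (e-1) : ℚ) * (-a)^e)) * v (j + 1 - e))]
      simp
    have h1 : ∑ d ∈ Finset.range (m+1), (m.choose d : ℚ) * (-a)^d * v (j + 1 - d)
        = ∑ d ∈ Finset.range (m+2), (m.choose d : ℚ) * (-a)^d * v (j + 1 - d) := by
      rw [show m+2 = (m+1)+1 from rfl,
        Finset.sum_range_succ (fun d => (m.choose d : ℚ) * (-a)^d * v (j + 1 - d)) (m+1)]
      simp [Nat.choose_succ_self]
    rw [h1, h2, ← Finset.sum_add_distrib]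
    refine Finset.sum_congr rfl fun e he => ?_
    rcases e with _ | e
    · simp
    · simp only [Nat.succ_ne_zero, if_neg, Nat.succ_sub_one]
      rw [Nat.choose_succ_succ' m e]
      push_cast
      ring



theorem coeff_comp_sub_one (P : Polynomial ℚ) (M : ℕ) (hM : P.natDegree ≤ M) (e : ℕ) :
    (P.comp (X - C 1)).coeff e
      = ∑ j ∈ Finset.range (M+1), P.coeff j * ((j.choose e : ℚ) * (-1:ℚ)^(j-e)) := by
  have hx : (X - C 1 : Polynomial ℚ) = X + C (-1) := by rw [sub_eq_add_neg, ← C_neg]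
  have hs : P.comp (X - C 1) = ∑ j ∈ Finset.range (M+1), C (P.coeff j) * (X - C 1)^j := by
    rw [Polynomial.comp_eq_sum_left]
    exact Polynomial.sum_over_range' P (by simp) (M+1) (by omega)
  rw [hs, Polynomial.finset_sum_coeff]
  refine Finset.sum_congr rfl fun j hj => ?_
  rw [hx, Polynomial.coeff_C_mul, Polynomial.coeff_X_add_C_pow]
  ring

theorem diff_poly_natDegree_le (P : Polynomial ℚ) (m : ℕ) (hP : P.natDegree ≤ m + 1) :
    (P - P.comp (X - C 1)).natDegree ≤ m := by
  rw [Polynomial.natDegree_le_iff_coeff_eq_zero]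
  intro e he
  rw [Polynomial.coeff_sub, coeff_comp_sub_one P (m+1) hP e]
  rcases eq_or_lt_of_le (Nat.succ_le_of_lt he) with h | h
  · -- e = m + 1
    have he' : e = m + 1 := h.symm
    subst he'
    rw [Finset.sum_range_succ]
    have : ∀ j ∈ Finset.range (m+1), P.coeff j * ((j.choose (m+1) : ℚ) * (-1:ℚ)^(j-(m+1))) = 0 := by
      intro j hj
      rw [Nat.choose_eq_zero_of_lt (Finset.mem_range.mp hj)]
      simp
    rw [Finset.sum_eq_zero this]
    simp
  · -- m + 1 < e
    have h1 : P.coeff e = 0 := Polynomial.coeff_eq_zero_of_natDegree_lt (by omega)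
    have : ∀ j ∈ Finset.range (m+2), P.coeff j * ((j.choose e : ℚ) * (-1:ℚ)^(j-e)) = 0 := by
      intro j hj
      rw [Nat.choose_eq_zero_of_lt (by simp at hj; omega)]
      simp
    rw [Finset.sum_eq_zero this, h1]
    simp

theorem diff_poly_coeff (P : Polynomial ℚ) (m : ℕ) (hP : P.natDegree ≤ m + 1) :
    (P - P.comp (X - C 1)).coeff m = ((m:ℚ) + 1) * P.coeff (m + 1) := by
  rw [Polynomial.coeff_sub, coeff_comp_sub_one P (m+1) hP m]
  rw [Finset.sum_range_succ, Finset.sum_range_succ]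
  have : ∀ j ∈ Finset.range m, P.coeff j * ((j.choose m : ℚ) * (-1:ℚ)^(j-m)) = 0 := by
    intro j hj
    rw [Nat.choose_eq_zero_of_lt (Finset.mem_range.mp hj)]
    simp
  rw [Finset.sum_eq_zero this]
  rw [Nat.choose_self, Nat.choose_succ_self_right]
  have h1 : m - m = 0 := by omega
  have h2 : m + 1 - m = 1 := by omega
  rw [h1, h2]
  push_cast
  ring

/-- `m`-th finite difference of a polynomial of degree ≤ m. -/
theorem finite_diff_eval (m : ℕ) : ∀ P : Polynomial ℚ, P.natDegree ≤ m → ∀ x : ℚ,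
    ∑ d ∈ Finset.range (m+1), (-1:ℚ)^d * (m.choose d : ℚ) * P.eval (x - d)
      = (m.factorial : ℚ) * P.coeff m := by
  induction m with
  | zero =>
    intro P hP x
    rw [Polynomial.eq_C_of_natDegree_le_zero hP]
    simp
  | succ m ih =>
    intro P hP x
    set D := P - P.comp (X - C 1) with hD
    have hdeg : D.natDegree ≤ m := diff_poly_natDegree_le P m hP
    have hcoeff : D.coeff m = ((m:ℚ)+1) * P.coeff (m+1) := diff_poly_coeff P m hP
    have hev : ∀ t : ℚ, D.eval t = P.eval t - P.eval (t - 1) := by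
      intro t; simp [hD, Polynomial.eval_comp]
    have key : ∑ d ∈ Finset.range (m+2), (-1:ℚ)^d * ((m+1).choose d : ℚ) * P.eval (x - d)
        = ∑ d ∈ Finset.range (m+1), (-1:ℚ)^d * (m.choose d : ℚ) * D.eval (x - d) := by
      have split : ∀ d, ((m+1).choose d : ℚ)
          = (m.choose d : ℚ) + (if d = 0 then 0 else (m.choose (d-1) : ℚ)) := by
        intro d
        rcases d with _ | d
        · simp
        · simp only [Nat.succ_ne_zero, if_neg, Nat.succ_sub_one]
          rw [Nat.choose_succ_succ' m d]
          push_cast; ring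
      calc ∑ d ∈ Finset.range (m+2), (-1:ℚ)^d * ((m+1).choose d : ℚ) * P.eval (x - d)
          = ∑ d ∈ Finset.range (m+2), ((-1:ℚ)^d * (m.choose d : ℚ) * P.eval (x - d)
            + (-1:ℚ)^d * (if d = 0 then 0 else (m.choose (d-1) : ℚ)) * P.eval (x - d)) := by
            refine Finset.sum_congr rfl fun d _ => ?_
            rw [split d]; ring
        _ = (∑ d ∈ Finset.range (m+2), (-1:ℚ)^d * (m.choose d : ℚ) * P.eval (x - d))
            + ∑ d ∈ Finset.range (m+2),
              (-1:ℚ)^d * (if d = 0 then 0 else (m.choose (d-1) : ℚ)) * P.eval (x - d) := by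
            rw [Finset.sum_add_distrib]
        _ = (∑ d ∈ Finset.range (m+1), (-1:ℚ)^d * (m.choose d : ℚ) * P.eval (x - d))
            + ∑ d ∈ Finset.range (m+1),
              (-1:ℚ)^(d+1) * (m.choose d : ℚ) * P.eval (x - (d+1)) := by
            congr 1
            · rw [show m+2 = (m+1)+1 from rfl, Finset.sum_range_succ]
              simp [Nat.choose_succ_self]
            · rw [Finset.sum_range_succ' (fun d => (-1:ℚ)^d * (if d = 0 then 0 else (m.choose (d-1) : ℚ)) * P.eval (x - d))]
              simp
        _ = ∑ d ∈ Finset.range (m+1), (-1:ℚ)^d * (m.choose d : ℚ) * D.eval (x - d) := by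
            rw [← Finset.sum_add_distrib]
            refine Finset.sum_congr rfl fun d _ => ?_
            rw [hev (x - d)]
            push_cast
            ring
    rw [key, ih D hdeg x, hcoeff]
    rw [Nat.factorial_succ]
    push_cast
    ring

-- transfer lemmas
theorem iter_eq_bin {a ρ σ : ℚ} {B t : ℕ} {u : ℕ → ℚ}
    (hu : SRel (a * (-1 - a)) ρ σ u) (hu0 : u 0 = 1)
    (hρ : ρ - t * a = (1 + a) * B) (hσ : σ + t = (B : ℚ)) :
    ∀ n, (stepOp a)^[t] u n = bin a B n := by
  have h1 := srel_iter hu t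
  rw [hρ, hσ] at h1
  exact srel_unique h1 (srel_bin a B) (by rw [stepOp_iter_zero, hu0, bin_zero])

theorem fam1_vanish {a ρ σ : ℚ} {A B : ℕ} {u : ℕ → ℚ}
    (hu : SRel (a * (-1 - a)) ρ σ u) (hu0 : u 0 = 1)
    (hρ : (1 + a) * B - A * a = ρ) (hσ : (B : ℚ) + A = σ) :
    ∀ n, B + A < n → u n = 0 := by
  intro n hn
  have h1 := srel_iter (srel_bin a B) A
  rw [hρ, hσ] at h1
  have h2 := srel_unique hu h1 (by rw [hu0, stepOp_iter_zero, bin_zero])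
  rw [h2 n]
  exact stepOp_iter_vanish A B (bin a B) (fun m hm => bin_eq_zero hm) n hn

theorem srel_eval (r' : ℚ) (c : ℕ → Polynomial ℚ) (h0 : c 0 = 1) (h1 : c 1 = Polynomial.C r')
    (hrec : ∀ n : ℕ, Polynomial.C ((n : ℚ) + 2) * c (n + 2)
      + Polynomial.C ((n : ℚ) + 1 - r') * c (n + 1)
      + Polynomial.C (((n : ℚ) + 1 - 2 * r') / 4) * (1 - Polynomial.X) * c n = 0) (s : ℚ) :
    SRel (((s - 1)/2) * (-1 - (s - 1)/2)) r' (2 * r' - 1) (fun n => (c n).eval (s^2)) := by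
  constructor
  · simp [h1, h0]
  · intro n
    have := congrArg (Polynomial.eval (s^2)) (hrec n)
    simp only [Polynomial.eval_add, Polynomial.eval_mul, Polynomial.eval_C, Polynomial.eval_sub,
      Polynomial.eval_one, Polynomial.eval_X, Polynomial.eval_zero] at this
    linear_combination this

open Polynomial Finset in
theorem det_dvd_all_entries {k : ℕ} (M : Matrix (Fin k) (Fin k) (Polynomial ℚ)) (y : ℚ)
    (h : ∀ ℓ j, (M ℓ j).eval y = 0) : (X - C y)^k ∣ M.det := by
  have hdvd : ∀ ℓ j, (X - C y) ∣ M ℓ j := fun ℓ j => dvd_iff_isRoot.mpr (h ℓ j)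
  set M'' : Matrix (Fin k) (Fin k) (Polynomial ℚ) :=
    Matrix.of fun ℓ j => M ℓ j / (X - C y) with hM''
  have hM : M = (X - C y) • M'' := by
    refine Matrix.ext fun ℓ j => ?_
    rw [Matrix.smul_apply, hM'', Matrix.of_apply, smul_eq_mul]
    exact (EuclideanDomain.mul_div_cancel' (X_sub_C_ne_zero y) (hdvd ℓ j)).symm
  rw [hM, Matrix.det_smul]
  simp only [Fintype.card_fin]
  exact Dvd.intro _ rfl

open Polynomial Finset in
theorem det_dvd_colops {k : ℕ} (hk : 1 ≤ k) (c' : ℕ → Polynomial ℚ) (N : ℕ) (hN : k ≤ N)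
    (y : ℚ) (w : ℕ → ℚ) (i : ℕ) (hik : i ≤ k) (hw0 : w 0 = 1)
    (hw : ∀ d, i < d → w d = 0)
    (hvan : ∀ n, N + i - k < n →
      ∑ d ∈ Finset.range (i+1), w d * (c' (n - d)).eval y = 0) :
    (X - C y)^(k - i) ∣ (Matrix.of fun ℓ j : Fin k => c' (N + j - ℓ)).det := by
  set M : Matrix (Fin k) (Fin k) (Polynomial ℚ) :=
    Matrix.of fun ℓ j : Fin k => c' (N + j - ℓ) with hMdef
  set F : Matrix (Fin k) (Fin k) (Polynomial ℚ) :=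
    Matrix.of (fun q j : Fin k => if (j:ℕ) < i then (if q = j then 1 else 0)
      else (if (q:ℕ) ≤ (j:ℕ) then C (w ((j:ℕ) - (q:ℕ))) else 0)) with hFdef
  have hFtri : F.BlockTriangular id := by
    intro q j hqj
    have h1 : (j:ℕ) < (q:ℕ) := hqj
    simp only [hFdef, Matrix.of_apply]
    rcases lt_or_ge (j:ℕ) i with h | h
    · rw [if_pos h, if_neg (by intro hh; rw [hh] at h1; omega)]
    · rw [if_neg (by omega), if_neg (by omega)]
  have hFdiag : ∀ j, F j j = 1 := by
    intro j
    simp only [hFdef, Matrix.of_apply]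
    rcases lt_or_ge (j:ℕ) i with h | h
    · rw [if_pos h]; simp
    · rw [if_neg (by omega), if_pos le_rfl]
      simp [hw0]
  have hdetF : F.det = 1 := by
    rw [Matrix.det_of_upperTriangular hFtri]
    simp [hFdiag]
  -- entries of M * F in columns j ≥ i vanish at y
  have hent : ∀ (ℓ j : Fin k), i ≤ (j:ℕ) → ((M * F) ℓ j).eval y = 0 := by
    intro ℓ j hj
    rw [Matrix.mul_apply]
    rw [Polynomial.eval_finset_sum]
    have step1 : ∀ q : Fin k, (M ℓ q * F q j).eval y
        = if (q:ℕ) ≤ (j:ℕ) then w ((j:ℕ) - (q:ℕ)) * (c' (N + q - ℓ)).eval y else 0 := by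
      intro q
      simp only [hFdef, hMdef, Matrix.of_apply, if_neg (by omega : ¬ ((j:ℕ) < i))]
      rcases le_or_gt (q:ℕ) (j:ℕ) with h | h
      · rw [if_pos h, if_pos h, Polynomial.eval_mul, Polynomial.eval_C]; ring
      · rw [if_neg (by omega), if_neg (by omega)]; simp
    rw [Finset.sum_congr rfl (fun q _ => step1 q)]
    rw [Fin.sum_univ_eq_sum_range
      (fun q => if q ≤ (j:ℕ) then w ((j:ℕ) - q) * (c' (N + q - ℓ)).eval y else 0) k]
    have hsub : Finset.range ((j:ℕ)+1) ⊆ Finset.range k := by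
      intro x hx; simp only [Finset.mem_range] at *; omega
    have hzero : ∀ x ∈ Finset.range k, x ∉ Finset.range ((j:ℕ)+1) →
        (if x ≤ (j:ℕ) then w ((j:ℕ) - x) * (c' (N + x - ℓ)).eval y else 0) = 0 := by
      intro x hx hx2
      simp only [Finset.mem_range] at hx hx2
      rw [if_neg (by omega)]
    rw [← Finset.sum_subset hsub hzero]
    have step2 : ∑ q ∈ Finset.range ((j:ℕ)+1),
        (if q ≤ (j:ℕ) then w ((j:ℕ) - q) * (c' (N + q - ℓ)).eval y else 0)
        = ∑ q ∈ Finset.range ((j:ℕ)+1), w ((j:ℕ) - q) * (c' (N + q - ℓ)).eval y := by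
      refine Finset.sum_congr rfl fun q hq => ?_
      rw [if_pos (by simp only [Finset.mem_range] at hq; omega)]
    rw [step2]
    have step3 : ∑ q ∈ Finset.range ((j:ℕ)+1), w ((j:ℕ) - q) * (c' (N + q - ℓ)).eval y
        = ∑ d ∈ Finset.range ((j:ℕ)+1), w d * (c' (N + ((j:ℕ) - d) - ℓ)).eval y := by
      rw [← Finset.sum_range_reflect
        (fun d => w d * (c' (N + ((j:ℕ) - d) - ℓ)).eval y) ((j:ℕ)+1)]
      refine Finset.sum_congr rfl fun q hq => ?_
      simp only [Finset.mem_range] at hq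
      have e1 : (j:ℕ) + 1 - 1 - q = (j:ℕ) - q := by omega
      have e2 : (j:ℕ) - ((j:ℕ) - q) = q := by omega
      rw [e1, e2]
    rw [step3]
    have step4 : ∑ d ∈ Finset.range ((j:ℕ)+1), w d * (c' (N + ((j:ℕ) - d) - ℓ)).eval y
        = ∑ d ∈ Finset.range (i+1), w d * (c' ((N + (j:ℕ) - (ℓ:ℕ)) - d)).eval y := by
      have hsub2 : Finset.range (i+1) ⊆ Finset.range ((j:ℕ)+1) := by
        intro x hx; simp only [Finset.mem_range] at *; omega
      have hzero2 : ∀ x ∈ Finset.range ((j:ℕ)+1), x ∉ Finset.range (i+1) →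
          w x * (c' (N + ((j:ℕ) - x) - ℓ)).eval y = 0 := by
        intro x hx hx2
        simp only [Finset.mem_range] at hx hx2
        rw [hw x (by omega)]; ring
      rw [← Finset.sum_subset hsub2 hzero2]
      refine Finset.sum_congr rfl fun d hd => ?_
      simp only [Finset.mem_range] at hd
      have hℓ : (ℓ:ℕ) < k := ℓ.isLt
      have e : N + ((j:ℕ) - d) - (ℓ:ℕ) = (N + (j:ℕ) - (ℓ:ℕ)) - d := by omega
      rw [e]
    rw [step4]
    exact hvan (N + (j:ℕ) - (ℓ:ℕ)) (by have := ℓ.isLt; omega)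
  -- factor out (X - C y) from those columns
  set dv : Fin k → Polynomial ℚ := fun j => if i ≤ (j:ℕ) then (X - C y) else 1 with hdv
  set M'' : Matrix (Fin k) (Fin k) (Polynomial ℚ) :=
    Matrix.of (fun ℓ j => if i ≤ (j:ℕ) then (M * F) ℓ j / (X - C y) else (M * F) ℓ j) with hM''
  have hfac : M * F = M'' * Matrix.diagonal dv := by
    refine Matrix.ext fun ℓ j => ?_
    rw [Matrix.mul_diagonal]
    simp only [hM'', hdv, Matrix.of_apply]
    rcases le_or_gt i (j:ℕ) with h | h
    · rw [if_pos h, if_pos h, mul_comm]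
      exact (EuclideanDomain.mul_div_cancel' (X_sub_C_ne_zero y)
        (dvd_iff_isRoot.mpr (hent ℓ j h))).symm
    · rw [if_neg (by omega), if_neg (by omega), mul_one]
  have hcount : (∏ j : Fin k, dv j) = (X - C y)^(k - i) := by
    rw [Fin.prod_univ_eq_prod_range (fun j => if i ≤ j then (X - C y) else (1:Polynomial ℚ)) k]
    rw [← Finset.prod_filter (fun j => i ≤ j) (fun _ => (X - C y))]
    have hset : (Finset.range k).filter (fun j => i ≤ j) = Finset.Ico i k := by
      ext x
      simp only [Finset.mem_filter, Finset.mem_range, Finset.mem_Ico]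
      omega
    rw [hset, Finset.prod_const, Nat.card_Ico]
  have : M.det = M''.det * (X - C y)^(k-i) := by
    have h1 : M.det = (M * F).det := by rw [Matrix.det_mul, hdetF, mul_one]
    rw [h1, hfac, Matrix.det_mul, Matrix.det_diagonal, hcount]
  rw [this]
  exact dvd_mul_left _ _

open Polynomial Finset in
theorem natDegree_c_le (r' : ℚ) (c : ℕ → Polynomial ℚ)
    (h0 : c 0 = 1) (h1 : c 1 = C r')
    (hrec : ∀ n : ℕ, C ((n : ℚ) + 2) * c (n + 2) + C ((n : ℚ) + 1 - r') * c (n + 1)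
      + C (((n : ℚ) + 1 - 2 * r') / 4) * (1 - X) * c n = 0) :
    ∀ n, (c n).natDegree ≤ n / 2 := by
  intro n
  induction n using Nat.strong_induction_on with
  | _ n ih =>
    match n with
    | 0 => simp [h0]
    | 1 => simp [h1]
    | (m+2) =>
      have hne : ((m:ℚ)+2) ≠ 0 := by positivity
      have hc : c (m+2) = C (((m:ℚ)+2)⁻¹) * (-(C ((m:ℚ)+1-r') * c (m+1))
          - C (((m:ℚ)+1-2*r')/4) * (1-X) * c m) := by
        have key : C ((m:ℚ)+2) * c (m+2) = -(C ((m:ℚ)+1-r') * c (m+1))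
            - C (((m:ℚ)+1-2*r')/4) * (1-X) * c m := by
          linear_combination hrec m
        calc c (m+2) = C (((m:ℚ)+2)⁻¹) * (C ((m:ℚ)+2) * c (m+2)) := by
              rw [← mul_assoc, ← C_mul, inv_mul_cancel₀ hne, C_1, one_mul]
          _ = _ := by rw [key]
      rw [hc]
      refine le_trans (natDegree_C_mul_le _ _) ?_
      refine le_trans (natDegree_sub_le _ _) ?_
      rw [max_le_iff]
      constructor
      · rw [natDegree_neg]
        refine le_trans (natDegree_C_mul_le _ _) ?_
        have := ih (m+1) (by omega)
        omega
      · refine le_trans (natDegree_mul_le) ?_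
        have h2 : (C (((m:ℚ)+1-2*r')/4) * (1-X)).natDegree ≤ 1 := by
          refine le_trans (natDegree_mul_le) ?_
          have ha : (C (((m:ℚ)+1-2*r')/4)).natDegree = 0 := natDegree_C _
          have hb : ((1:Polynomial ℚ) - X).natDegree ≤ 1 := by
            refine le_trans (natDegree_sub_le _ _) ?_
            simp
          omega
        have := ih m (by omega)
        omega

theorem sum_div_two_le {ι : Type*} (s : Finset ι) (f : ι → ℕ) :
    ∑ i ∈ s, f i / 2 ≤ (∑ i ∈ s, f i) / 2 := by
  rw [Nat.le_div_iff_mul_le (by norm_num)]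
  rw [Finset.sum_mul]
  exact Finset.sum_le_sum fun i _ => Nat.div_mul_le_self _ _

set_option maxHeartbeats 1000000 in
open Polynomial Finset in
theorem det_natDegree_le (k N : ℕ) (hN : k ≤ N) (c : ℕ → Polynomial ℚ)
    (hdeg : ∀ n, (c n).natDegree ≤ n / 2) :
    (Matrix.of fun ℓ j : Fin k => c (N + j - ℓ)).det.natDegree ≤ k * N / 2 := by
  rw [Matrix.det_apply]
  refine Polynomial.natDegree_sum_le_of_forall_le _ _ fun σ _ => ?_
  have hsmul : (Equiv.Perm.sign σ •
        ∏ i, (Matrix.of fun ℓ j : Fin k => c (N + j - ℓ)) (σ i) i).natDegree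
      ≤ (∏ i, (Matrix.of fun ℓ j : Fin k => c (N + j - ℓ)) (σ i) i).natDegree := by
    rcases Int.units_eq_one_or (Equiv.Perm.sign σ) with h | h <;> rw [h]
    · rw [one_smul]
    · rw [Units.neg_smul, one_smul, natDegree_neg]
  refine le_trans hsmul ?_
  refine le_trans (Polynomial.natDegree_prod_le _ _) ?_
  have hterm : ∀ i : Fin k, ((Matrix.of fun ℓ j : Fin k => c (N + j - ℓ)) (σ i) i).natDegree
      ≤ (N + (i:ℕ) - (σ i : ℕ)) / 2 := fun i => hdeg _
  refine le_trans (Finset.sum_le_sum fun i _ => hterm i) ?_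
  refine le_trans (sum_div_two_le _ _) ?_
  have hsum : ∑ i : Fin k, (N + (i:ℕ) - (σ i : ℕ)) = k * N := by
    have h1 : ∀ i : Fin k, (N + (i:ℕ) - (σ i : ℕ)) + (σ i : ℕ) = N + (i:ℕ) := by
      intro i
      have : (σ i : ℕ) < k := (σ i).isLt
      omega
    have h2 : ∑ i : Fin k, ((N + (i:ℕ) - (σ i : ℕ)) + (σ i : ℕ)) = ∑ i : Fin k, (N + (i:ℕ)) :=
      Finset.sum_congr rfl fun i _ => h1 i
    rw [Finset.sum_add_distrib] at h2
    have h3 : ∑ i : Fin k, (σ i : ℕ) = ∑ i : Fin k, (i : ℕ) :=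
      Equiv.sum_comp σ (fun x : Fin k => (x : ℕ))
    rw [h3] at h2
    have h4 : ∑ i : Fin k, (N + (i:ℕ)) = k * N + ∑ i : Fin k, (i:ℕ) := by
      rw [Finset.sum_add_distrib, Finset.sum_const, Finset.card_univ, Fintype.card_fin,
        smul_eq_mul]
    omega
  rw [hsum]

open Polynomial Finset in
theorem det_u_ne_zero (r k : ℕ) (hr : 1 ≤ r) (hk : 1 ≤ k) (a : ℚ) (ha : a ≠ 0)
    (h2a : (1:ℚ) + 2*a ≠ 0) (u : ℕ → ℚ) (hu0 : u 0 = 1)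
    (hiter : ∀ n, (stepOp a)^[k] u n = bin a (k+2*r-1) n) :
    (Matrix.of fun ℓ j : Fin k => u (k+2*r-1 + j - ℓ)).det ≠ 0 := by
  set N := k + 2*r - 1 with hN
  have hNk : k ≤ N := by omega
  set P : Polynomial ℚ := Lagrange.interpolate (Finset.Ico (2*r) (2*r+k)) (fun n : ℕ => (n:ℚ))
      (fun n : ℕ => u n / a ^ n) with hP
  have hinj : Set.InjOn (fun n : ℕ => (n:ℚ)) (Finset.Ico (2*r) (2*r+k)) :=
    fun x _ y _ h => Nat.cast_injective h
  have hPdeg : P.natDegree < k := by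
    by_cases h0 : P = 0
    · rw [h0]; simpa using (show 0 < k by omega)
    · have hd := Lagrange.degree_interpolate_lt (fun n : ℕ => u n / a ^ n) hinj
      rw [Nat.card_Ico] at hd
      have he : (2*r + k - 2*r) = k := by omega
      rw [he] at hd
      exact (Polynomial.natDegree_lt_iff_degree_lt h0).mpr hd
  have hnode : ∀ n, 2*r ≤ n → n < 2*r + k → P.eval (n:ℚ) = u n / a ^ n := by
    intro n h1 h2
    exact Lagrange.eval_interpolate_at_node _ hinj (by simp only [Finset.mem_Ico]; omega)
  have lemA : ∀ n, 2*r ≤ n → u n = a ^ n * P.eval (n:ℚ) := by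
    intro n
    induction n using Nat.strong_induction_on with
    | _ n ih =>
      intro hn
      rcases lt_or_ge n (2*r+k) with hlt | hge
      · rw [hnode n hn hlt]
        field_simp
      · have key1 : ∑ d ∈ Finset.range (k+1), (k.choose d : ℚ) * (-a)^d * u (n - d) = 0 := by
          rw [← stepOp_iter_apply u k n (by omega), hiter n, bin_eq_zero (by omega)]
        have key2 : ∑ d ∈ Finset.range (k+1),
            (k.choose d : ℚ) * (-a)^d * (a^(n-d) * P.eval ((n - d : ℕ):ℚ)) = 0 := by
          have ht : ∀ d ∈ Finset.range (k+1),
              (k.choose d : ℚ) * (-a)^d * (a^(n-d) * P.eval ((n - d : ℕ):ℚ))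
              = a^n * ((-1)^d * (k.choose d : ℚ) * P.eval ((n:ℚ) - d)) := by
            intro d hd
            simp only [Finset.mem_range] at hd
            have hdn : d ≤ n := by omega
            have hcast : ((n - d : ℕ):ℚ) = (n:ℚ) - d := by
              rw [Nat.cast_sub hdn]
            have hpow : a^d * a^(n-d) = a^n := by
              rw [← pow_add]; congr 1; omega
            rw [hcast, neg_pow]
            rw [show (k.choose d : ℚ) * ((-1)^d * a^d) * (a^(n-d) * P.eval ((n:ℚ) - d))
              = ((-1)^d * (k.choose d : ℚ) * P.eval ((n:ℚ) - d)) * (a^d * a^(n-d)) from by ring,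
              hpow]
            ring
          rw [Finset.sum_congr rfl ht, ← Finset.mul_sum,
            finite_diff_eval k P (le_of_lt hPdeg) (n:ℚ),
            Polynomial.coeff_eq_zero_of_natDegree_lt hPdeg]
          ring
        have key3 : ∑ d ∈ Finset.range (k+1),
            (k.choose d : ℚ) * (-a)^d * (u (n-d) - a^(n-d) * P.eval ((n - d : ℕ):ℚ)) = 0 := by
          simp only [mul_sub]
          rw [Finset.sum_sub_distrib, key1, key2]
          ring
        rw [Finset.sum_range_succ' (fun d => (k.choose d : ℚ) * (-a)^d
            * (u (n-d) - a^(n-d) * P.eval ((n - d : ℕ):ℚ)))] at key3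
        have hz : ∀ d ∈ Finset.range k, (k.choose (d+1) : ℚ) * (-a)^(d+1)
            * (u (n-(d+1)) - a^(n-(d+1)) * P.eval ((n - (d+1) : ℕ):ℚ)) = 0 := by
          intro d hd
          simp only [Finset.mem_range] at hd
          rw [ih (n-(d+1)) (by omega) (by omega)]
          ring
        rw [Finset.sum_eq_zero hz, zero_add] at key3
        simp only [Nat.choose_zero_right, pow_zero, Nat.sub_zero, Nat.cast_one] at key3
        linarith
  -- Lemma B : leading coefficient of P is nonzero
  have hcomp : stepOp a ((stepOp a)^[k-1] u) = (stepOp a)^[k] u := by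
    rw [← Function.iterate_succ_apply' (stepOp a) (k-1) u]
    congr 1
    omega
  set y := (stepOp a)^[k-1] u with hy
  have hy1 : ∀ n, stepOp a y n = bin a N n := by
    intro n
    rw [hy, hcomp]
    exact hiter n
  have hy2 : ∀ n, y n = ∑ m ∈ Finset.range (n+1), a^(n-m) * bin a N m := by
    intro n
    induction n with
    | zero => simp [hy, stepOp_iter_zero, hu0, bin_zero]
    | succ n ihn =>
      have h1 := hy1 (n+1)
      have h2 : y (n+1) = bin a N (n+1) + a * y n := by
        have hrfl : stepOp a y (n+1) = y (n+1) - a * y n := rfl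
        rw [hrfl] at h1; linarith
      rw [h2, ihn, Finset.mul_sum,
        Finset.sum_range_succ (fun m => a^(n+1-m) * bin a N m)]
      have he : n+1-(n+1) = 0 := by omega
      rw [he, pow_zero, one_mul, add_comm]
      congr 1
      refine Finset.sum_congr rfl fun m hm => ?_
      simp only [Finset.mem_range] at hm
      rw [show n+1-m = (n-m)+1 by omega, pow_succ]
      ring
  have hyN : y N = (1+2*a)^N := by
    rw [hy2 N, show (1:ℚ)+2*a = (1+a) + a from by ring, add_pow (1+a) a N]
    refine Finset.sum_congr rfl fun m hm => ?_
    unfold bin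
    ring
  have hyN2 : y N = a^N * (((k-1).factorial : ℚ) * P.coeff (k-1)) := by
    rw [hy, stepOp_iter_apply u (k-1) N (by omega)]
    have e2 : ∀ d ∈ Finset.range ((k-1)+1), ((k-1).choose d : ℚ) * (-a)^d * u (N-d)
        = a^N * ((-1)^d * ((k-1).choose d:ℚ) * P.eval ((N:ℚ) - d)) := by
      intro d hd
      simp only [Finset.mem_range] at hd
      rw [lemA (N-d) (by omega)]
      have hdn : d ≤ N := by omega
      have hcast : ((N - d : ℕ):ℚ) = (N:ℚ) - d := by rw [Nat.cast_sub hdn]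
      have hpow : a^d * a^(N-d) = a^N := by rw [← pow_add]; congr 1; omega
      rw [hcast, neg_pow]
      rw [show ((k-1).choose d : ℚ) * ((-1)^d * a^d) * (a^(N-d) * P.eval ((N:ℚ) - d))
        = ((-1)^d * ((k-1).choose d : ℚ) * P.eval ((N:ℚ) - d)) * (a^d * a^(N-d)) from by ring,
        hpow]
      ring
    rw [Finset.sum_congr rfl e2, ← Finset.mul_sum,
      finite_diff_eval (k-1) P (by omega) (N:ℚ)]
  have hLC : P.coeff (k-1) ≠ 0 := by
    intro h0
    rw [h0, mul_zero, mul_zero] at hyN2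
    rw [hyN2] at hyN
    exact (pow_ne_zero N h2a) hyN.symm
  have hPdeg' : P.natDegree = k-1 :=
    le_antisymm (by omega) (Polynomial.le_natDegree_of_ne_zero hLC)
  -- determinant part
  have hEntry : ∀ (ℓ j : Fin k), u (N + (j:ℕ) - (ℓ:ℕ))
      = a^(k-1-(ℓ:ℕ)) * (a^(2*r+(j:ℕ)) * P.eval ((N:ℚ) + (j:ℕ) - (ℓ:ℕ))) := by
    intro ℓ j
    have hℓ : (ℓ:ℕ) < k := ℓ.isLt
    have h1 : 2*r ≤ N + (j:ℕ) - (ℓ:ℕ) := by omega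
    rw [lemA _ h1]
    have hcast : ((N + (j:ℕ) - (ℓ:ℕ) : ℕ) : ℚ) = (N:ℚ) + (j:ℕ) - (ℓ:ℕ) := by
      rw [Nat.cast_sub (by omega), Nat.cast_add]
    rw [hcast, show a^(k-1-(ℓ:ℕ)) * (a^(2*r+(j:ℕ)) * P.eval ((N:ℚ) + (j:ℕ) - (ℓ:ℕ)))
      = (a^(k-1-(ℓ:ℕ)) * a^(2*r+(j:ℕ))) * P.eval ((N:ℚ) + (j:ℕ) - (ℓ:ℕ)) from by ring,
      ← pow_add]
    congr 2
    omega
  set E : Matrix (Fin k) (Fin k) ℚ :=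
    Matrix.of (fun ℓ j : Fin k => P.eval ((N:ℚ) + (j:ℕ) - (ℓ:ℕ))) with hE
  have hfac : (Matrix.of fun ℓ j : Fin k => u (N + (j:ℕ) - (ℓ:ℕ)))
      = Matrix.of (fun ℓ j : Fin k => a^(k-1-(ℓ:ℕ)) *
          (Matrix.of (fun ℓ' j' : Fin k => a^(2*r+(j':ℕ)) * E ℓ' j') ℓ j)) := by
    refine Matrix.ext fun ℓ j => ?_
    simp only [Matrix.of_apply, hE]
    exact hEntry ℓ j
  rw [hfac, Matrix.det_mul_column, Matrix.det_mul_row]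
  have hprod1 : (∏ ℓ : Fin k, a^(k-1-(ℓ:ℕ))) ≠ 0 :=
    Finset.prod_ne_zero_iff.mpr fun ℓ _ => pow_ne_zero _ ha
  have hprod2 : (∏ j : Fin k, a^(2*r+(j:ℕ))) ≠ 0 :=
    Finset.prod_ne_zero_iff.mpr fun j _ => pow_ne_zero _ ha
  -- E = A * Bm
  set A : Matrix (Fin k) (Fin k) ℚ :=
    Matrix.of (fun ℓ d : Fin k => (Polynomial.hasseDeriv (d:ℕ) P).eval (-(ℓ:ℚ))) with hA
  set Bm : Matrix (Fin k) (Fin k) ℚ :=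
    Matrix.of (fun d j : Fin k => ((N:ℚ) + (j:ℕ))^(d:ℕ)) with hB
  have hEAB : E = A * Bm := by
    refine Matrix.ext fun ℓ j => ?_
    rw [Matrix.mul_apply]
    have h1 : E ℓ j = (Polynomial.taylor (-(ℓ:ℚ)) P).eval ((N:ℚ) + (j:ℕ)) := by
      rw [Polynomial.taylor_eval]
      simp only [hE, Matrix.of_apply]
      congr 1
      ring
    rw [h1, Polynomial.eval_eq_sum_range' (n := k)
      (by rw [Polynomial.natDegree_taylor]; omega) ((N:ℚ) + (j:ℕ))]
    rw [show (∑ d : Fin k, A ℓ d * Bm d j)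
        = ∑ m ∈ Finset.range k, (Polynomial.hasseDeriv m P).eval (-(ℓ:ℚ)) * ((N:ℚ)+(j:ℕ))^m
      from Fin.sum_univ_eq_sum_range
        (fun m => (Polynomial.hasseDeriv m P).eval (-(ℓ:ℚ)) * ((N:ℚ)+(j:ℕ))^m) k]
    refine Finset.sum_congr rfl fun m _ => ?_
    rw [Polynomial.taylor_coeff]
  have hBdet : Bm.det ≠ 0 := by
    have hBt : Bm.transpose = Matrix.vandermonde (fun j : Fin k => (N:ℚ) + (j:ℕ)) := by
      refine Matrix.ext fun j d => ?_
      simp [Matrix.vandermonde, hB, Matrix.transpose_apply]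
    rw [← Matrix.det_transpose Bm, hBt]
    refine Matrix.det_vandermonde_ne_zero_iff.mpr ?_
    intro x y hxy
    simp only [add_right_inj] at hxy
    exact Fin.ext (Nat.cast_injective hxy)
  have hAdet : A.det ≠ 0 := by
    set Q : Fin k → Polynomial ℚ := fun e => Polynomial.hasseDeriv (k-1-(e:ℕ)) P with hQ
    have hQcoeff : ∀ e : Fin k, (Q e).coeff (e:ℕ) ≠ 0 := by
      intro e
      have he : (e:ℕ) + (k-1-(e:ℕ)) = k-1 := by have := e.isLt; omega
      rw [hQ]
      simp only
      rw [Polynomial.hasseDeriv_coeff, he]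
      have hch : (k-1).choose (k-1-(e:ℕ)) ≠ 0 :=
        (Nat.choose_pos (by omega)).ne'
      simp only [smul_eq_mul, ne_eq, mul_eq_zero, not_or]
      exact ⟨by exact_mod_cast hch, hLC⟩
    have hQ0 : ∀ e : Fin k, Q e ≠ 0 := by
      intro e h
      exact hQcoeff e (by rw [h]; simp)
    have hQdeg : ∀ e : Fin k, (Q e).natDegree = (e:ℕ) := by
      intro e
      rw [hQ]
      simp only
      rw [Polynomial.natDegree_hasseDeriv, hPdeg']
      have := e.isLt
      omega
    have hQlead : ∀ e : Fin k, (Q e).leadingCoeff ≠ 0 := fun e =>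
      Polynomial.leadingCoeff_ne_zero.mpr (hQ0 e)
    set p' : Fin k → Polynomial ℚ := fun e => Q e * Polynomial.C ((Q e).leadingCoeff)⁻¹ with hp'
    have hp'monic : ∀ e, (p' e).Monic := fun e =>
      Polynomial.monic_mul_leadingCoeff_inv (hQ0 e)
    have hp'deg : ∀ e : Fin k, (p' e).natDegree = (e:ℕ) := by
      intro e
      rw [hp']
      simp only
      rw [Polynomial.natDegree_mul (hQ0 e) (by
        simp only [ne_eq, Polynomial.C_eq_zero, inv_eq_zero]
        exact hQlead e)]
      rw [Polynomial.natDegree_C, hQdeg]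
      omega
    have hvdm := Matrix.det_eval_matrixOfPolynomials_eq_det_vandermonde
      (fun ℓ : Fin k => -(ℓ:ℚ)) p' hp'deg hp'monic
    have hvne : (Matrix.vandermonde (fun ℓ : Fin k => -(ℓ:ℚ))).det ≠ 0 := by
      refine Matrix.det_vandermonde_ne_zero_iff.mpr ?_
      intro x y hxy
      simp only [neg_inj] at hxy
      exact Fin.ext (Nat.cast_injective hxy)
    have hsub : (A.submatrix id Fin.rev)
        = Matrix.of (fun ℓ e : Fin k => (Q e).leadingCoeff *
            (Matrix.of (fun ℓ' e' : Fin k => (p' e').eval (-(ℓ':ℚ))) ℓ e)) := by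
      refine Matrix.ext fun ℓ e => ?_
      simp only [Matrix.submatrix_apply, id_eq, hA, hp', Matrix.of_apply, Polynomial.eval_mul,
        Polynomial.eval_C]
      have hrev : ((Fin.rev e : Fin k) : ℕ) = k-1-(e:ℕ) := by
        rw [Fin.val_rev]
        omega
      rw [hrev]
      rw [show (Q e).leadingCoeff * ((Q e).eval (-(ℓ:ℚ)) * ((Q e).leadingCoeff)⁻¹)
          = (Q e).eval (-(ℓ:ℚ)) * ((Q e).leadingCoeff * ((Q e).leadingCoeff)⁻¹) from by ring,
        mul_inv_cancel₀ (hQlead e), mul_one]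
    have hrevdet : (A.submatrix id Fin.rev).det
        = Equiv.Perm.sign (Fin.revPerm : Equiv.Perm (Fin k)) * A.det := by
      have : (Fin.rev : Fin k → Fin k) = ⇑(Fin.revPerm : Equiv.Perm (Fin k)) := rfl
      rw [this]
      exact Matrix.det_permute' _ _
    have hsubne : (A.submatrix id Fin.rev).det ≠ 0 := by
      rw [hsub, Matrix.det_mul_row]
      refine mul_ne_zero (Finset.prod_ne_zero_iff.mpr fun e _ => hQlead e) ?_
      rw [← hvdm]
      exact hvne
    intro hA0
    rw [hrevdet, hA0, mul_zero] at hsubne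
    exact hsubne rfl
  have hEdet : E.det ≠ 0 := by
    rw [hEAB, Matrix.det_mul]
    exact mul_ne_zero hAdet hBdet
  exact mul_ne_zero hprod1 (mul_ne_zero hprod2 hEdet)


open Polynomial in
/-- Fix positive integers `r`, `k`. Define `c : ℕ → ℚ[β]` by `c 0 = 1`, `c 1 = r` and
`(n+2)·c (n+2) + (n+1−r)·c (n+1) + (n+1−2r)·((1−β)/4)·c n = 0` for all `n ≥ 0`.
Let `P_k(1,β,0)` be the determinant of the `k×k` matrix with `(i,j)` entry (1-based)
`c (k+2r−1+j−i)`. Then there is a nonzero rational `c₀` with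
`P_k(1,β,0) = c₀ · ∏_{i=1}^{r} (β − 1/(2i−1)²)^k · ∏_{i=1}^{k−1} (β − 1/(2r+2i−1)²)^{k−i}`. -/
theorem stmt_6 (r : ℕ) (hr : 1 ≤ r) (k : ℕ) (hk : 1 ≤ k) (c : ℕ → Polynomial ℚ)
    (h0 : c 0 = 1) (h1 : c 1 = C (r : ℚ))
    (hrec : ∀ n : ℕ,
      C ((n : ℚ) + 2) * c (n + 2) + C ((n : ℚ) + 1 - r) * c (n + 1)
        + C (((n : ℚ) + 1 - 2 * r) / 4) * (1 - X) * c n = 0) :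
    ∃ c₀ : ℚ, c₀ ≠ 0 ∧
      Matrix.det (Matrix.of fun i j : Fin k => c (k + 2 * r - 1 + j.val - i.val)) =
        C c₀ * (∏ i ∈ Finset.range r, (X - C (1 / (2 * (i : ℚ) + 1) ^ 2)) ^ k) *
          ∏ i ∈ Finset.range (k - 1),
            (X - C (1 / (2 * (r : ℚ) + 2 * (i : ℚ) + 1) ^ 2)) ^ (k - 1 - i) := by
  have hN : k ≤ k + 2 * r - 1 := by omega
  set N := k + 2 * r - 1 with hNdef
  set D : Polynomial ℚ :=
    Matrix.det (Matrix.of fun i j : Fin k => c (N + j.val - i.val)) with hD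
  have hsq : ∀ x : ℚ, (1 / x)^2 = 1 / x ^ 2 := by
    intro x; rw [div_pow, one_pow]
  have hstmul : ∀ t : ℕ, (1 / (2 * (t:ℚ) + 1)) * (2 * (t:ℚ) + 1) = 1 := by
    intro t
    have h : (2 * (t:ℚ) + 1) ≠ 0 := by positivity
    field_simp
  -- family 1
  have fam1 : ∀ t, t < r → ∀ n, 2*r - 1 < n →
      (c n).eval ((1 / (2 * (t:ℚ) + 1))^2) = 0 := by
    intro t ht n hn
    have hsrelt := srel_eval (r:ℚ) c h0 h1 hrec (1 / (2 * (t:ℚ) + 1))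
    have hA : ((r-1-t : ℕ):ℚ) = (r:ℚ) - 1 - t := by
      rw [show r-1-t = r-(1+t) by omega, Nat.cast_sub (by omega)]
      push_cast; ring
    have hB : ((r+t:ℕ):ℚ) = (r:ℚ) + t := by push_cast; ring
    refine fam1_vanish (A := r-1-t) (B := r+t) hsrelt (by simp [h0]) ?_ ?_ n (by omega)
    · rw [hA, hB]
      linear_combination (hstmul t) / 2
    · rw [hA, hB]; ring
  -- family 2
  have fam2 : ∀ i : ℕ, 1 ≤ i → ∀ n : ℕ,
      (stepOp (((1 / (2*(r:ℚ) + 2*(i:ℚ) - 1)) - 1)/2))^[i]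
        (fun m => (c m).eval ((1 / (2*(r:ℚ) + 2*(i:ℚ) - 1))^2)) n
      = bin (((1 / (2*(r:ℚ) + 2*(i:ℚ) - 1)) - 1)/2) (2*r-1+i) n := by
    intro i hi
    have hsrelt := srel_eval (r:ℚ) c h0 h1 hrec (1 / (2*(r:ℚ) + 2*(i:ℚ) - 1))
    have hpos : (0:ℚ) < 2*(r:ℚ) + 2*(i:ℚ) - 1 := by
      have h1 : (1:ℚ) ≤ (r:ℚ) := by exact_mod_cast hr
      have h2 : (1:ℚ) ≤ (i:ℚ) := by exact_mod_cast hi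
      linarith
    have hst : (1 / (2*(r:ℚ) + 2*(i:ℚ) - 1)) * (2*(r:ℚ) + 2*(i:ℚ) - 1) = 1 := by
      rw [one_div, inv_mul_cancel₀ hpos.ne']
    have hBc : ((2*r-1+i : ℕ):ℚ) = 2*(r:ℚ) - 1 + i := by
      rw [Nat.cast_add, Nat.cast_sub (by omega : 1 ≤ 2*r)]
      push_cast; ring
    refine iter_eq_bin hsrelt (by simp [h0]) ?_ ?_
    · rw [hBc]
      linear_combination (-(hst)) / 2
    · rw [hBc]
  -- the combined product and divisibility
  set e : ℕ → ℕ := fun t => if t < r then k else k - (t - r + 1) with he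
  set f : ℕ → Polynomial ℚ := fun t => (X - C (1 / (2 * (t:ℚ) + 1) ^ 2)) ^ (e t) with hf
  have hrootinj : Function.Injective (fun t : ℕ => (1 / (2 * (t:ℚ) + 1) ^ 2 : ℚ)) := by
    intro x y hxy
    simp only at hxy
    have hx : (2 * (x:ℚ) + 1) ≠ 0 := by positivity
    have hy : (2 * (y:ℚ) + 1) ≠ 0 := by positivity
    have h2 : (2 * (y:ℚ) + 1)^2 = (2 * (x:ℚ) + 1)^2 := by
      rw [div_eq_div_iff (pow_ne_zero 2 hx) (pow_ne_zero 2 hy)] at hxy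
      linarith [hxy]
    rcases sq_eq_sq_iff_eq_or_eq_neg.mp h2 with h | h
    · have : (x:ℚ) = y := by linarith
      exact_mod_cast this
    · have hx0 : (0:ℚ) ≤ (x:ℚ) := by positivity
      have hy0 : (0:ℚ) ≤ (y:ℚ) := by positivity
      exfalso
      linarith
  have hdvd_each : ∀ t ∈ Finset.range (r + (k-1)), f t ∣ D := by
    intro t ht
    simp only [Finset.mem_range] at ht
    rcases lt_or_ge t r with hlt | hge
    · -- family 1
      rw [hf]
      simp only [he, if_pos hlt]
      have hvan : ∀ (ℓ j : Fin k),
          ((Matrix.of fun i j : Fin k => c (N + j.val - i.val)) ℓ j).eval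
            (1 / (2 * (t:ℚ) + 1) ^ 2) = 0 := by
        intro ℓ j
        simp only [Matrix.of_apply]
        rw [← hsq (2 * (t:ℚ) + 1)]
        exact fam1 t hlt _ (by have := ℓ.isLt; omega)
      exact det_dvd_all_entries _ _ hvan
    · -- family 2
      set i := t - r + 1 with hidef
      have hi1 : 1 ≤ i := by omega
      have hik : i ≤ k := by omega
      have hcasti : ((i:ℕ):ℚ) = (t:ℚ) - r + 1 := by
        rw [hidef, Nat.cast_add, Nat.cast_sub hge]
        push_cast; ring
      have hstrw : (1 / (2*(r:ℚ) + 2*(i:ℚ) - 1)) = 1 / (2 * (t:ℚ) + 1) := by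
        rw [hcasti]; ring_nf
      have hfam := fam2 i hi1
      rw [hstrw] at hfam
      set a : ℚ := ((1 / (2 * (t:ℚ) + 1)) - 1)/2 with ha
      have hvan : ∀ n, N + i - k < n →
          ∑ d ∈ Finset.range (i+1), ((i.choose d : ℚ) * (-a)^d)
            * (c (n - d)).eval (1 / (2 * (t:ℚ) + 1) ^ 2) = 0 := by
        intro n hn
        have hB : 2*r-1+i < n := by omega
        have h2 := hfam n
        rw [stepOp_iter_apply _ i n (by omega)] at h2
        rw [bin_eq_zero hB] at h2
        rw [← h2]
        refine Finset.sum_congr rfl fun d _ => ?_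
        rw [← hsq (2 * (t:ℚ) + 1)]
      have := det_dvd_colops hk c N hN (1 / (2 * (t:ℚ) + 1) ^ 2)
        (fun d => (i.choose d : ℚ) * (-a)^d) i hik (by simp)
        (fun d hd => by simp [Nat.choose_eq_zero_of_lt hd]) hvan
      rw [hf]
      simp only [he, if_neg (by omega : ¬ t < r)]
      rw [← hidef]
      exact this
  have hco : Set.Pairwise ↑(Finset.range (r + (k-1))) (Function.onFun IsCoprime f) := by
    intro x _ y _ hxy
    have hbase := Polynomial.pairwise_coprime_X_sub_C hrootinj hxy
    exact hbase.pow
  have hdvd : (∏ t ∈ Finset.range (r + (k-1)), f t) ∣ D :=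
    Finset.prod_dvd_of_coprime hco hdvd_each
  -- degree computations
  have hdegD : D.natDegree ≤ k * N / 2 :=
    det_natDegree_le k N hN c (natDegree_c_le (r:ℚ) c h0 h1 hrec)
  have hfne : ∀ t ∈ Finset.range (r + (k-1)), f t ≠ 0 := by
    intro t _
    exact pow_ne_zero _ (X_sub_C_ne_zero _)
  have hmonic : (∏ t ∈ Finset.range (r + (k-1)), f t).Monic := by
    refine Polynomial.monic_prod_of_monic _ _ fun t _ => ?_
    exact (Polynomial.monic_X_sub_C _).pow _
  have hkN : k * N = 2 * (r * k) + k * (k-1) := by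
    obtain ⟨k', rfl⟩ : ∃ k', k = k' + 1 := ⟨k-1, by omega⟩
    obtain ⟨r', rfl⟩ : ∃ r', r = r' + 1 := ⟨r-1, by omega⟩
    have hN' : N = k' + 2*r' + 2 := by omega
    rw [hN']
    simp only [Nat.add_sub_cancel]
    ring
  have hkk : k * (k-1) = (k-1) * (k-1-1) + 2*(k-1) := by
    obtain ⟨k', rfl⟩ : ∃ k', k = k' + 1 := ⟨k-1, by omega⟩
    rcases k' with _ | k''
    · simp
    · simp only [Nat.add_sub_cancel]
      ring
  have hs2 : 2 * (∑ j ∈ Finset.range (k-1), (k - (j+1))) = k * (k-1) := by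
    have hrefl : ∑ j ∈ Finset.range (k-1), (k - (j+1))
        = ∑ j ∈ Finset.range (k-1), (j+1) := by
      rw [← Finset.sum_range_reflect (fun j => j + 1) (k-1)]
      refine Finset.sum_congr rfl fun j hj => ?_
      simp only [Finset.mem_range] at hj
      omega
    calc 2 * (∑ j ∈ Finset.range (k-1), (k - (j+1)))
        = (∑ j ∈ Finset.range (k-1), j) * 2 + 2*(k-1) := by
          rw [hrefl, Finset.sum_add_distrib, Finset.sum_const, Finset.card_range,
            smul_eq_mul, mul_one]
          ring
      _ = (k-1)*(k-1-1) + 2*(k-1) := by rw [Finset.sum_range_id_mul_two]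
      _ = k * (k-1) := hkk.symm
  have hdegP : (∏ t ∈ Finset.range (r + (k-1)), f t).natDegree = k * N / 2 := by
    rw [Polynomial.natDegree_prod _ _ hfne]
    have hterm : ∀ t ∈ Finset.range (r + (k-1)), (f t).natDegree = e t := by
      intro t _
      rw [hf]
      simp only
      rw [Polynomial.natDegree_pow, Polynomial.natDegree_X_sub_C, mul_one]
    rw [Finset.sum_congr rfl hterm]
    rw [Finset.sum_range_add (fun t => e t) r (k-1)]
    have h1 : ∑ t ∈ Finset.range r, e t = r * k := by
      calc ∑ t ∈ Finset.range r, e t = ∑ _t ∈ Finset.range r, k :=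
            Finset.sum_congr rfl (fun t ht => by
              simp only [he, if_pos (Finset.mem_range.mp ht)])
        _ = r * k := by rw [Finset.sum_const, Finset.card_range, smul_eq_mul]
    have h2 : ∑ j ∈ Finset.range (k-1), e (r + j) = ∑ j ∈ Finset.range (k-1), (k - (j+1)) := by
      refine Finset.sum_congr rfl fun j hj => ?_
      simp only [he, if_neg (by omega : ¬ r + j < r)]
      congr 1
      omega
    rw [h1, h2]
    omega
  -- nonvanishing
  have hDne : D ≠ 0 := by
    set st : ℚ := 1 / (2*(r:ℚ) + 2*(k:ℚ) - 1) with hstdef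
    have hpos : (0:ℚ) < 2*(r:ℚ) + 2*(k:ℚ) - 1 := by
      have h1 : (1:ℚ) ≤ (r:ℚ) := by exact_mod_cast hr
      have h2 : (1:ℚ) ≤ (k:ℚ) := by exact_mod_cast hk
      linarith
    have hst : st * (2*(r:ℚ) + 2*(k:ℚ) - 1) = 1 := by
      rw [hstdef, one_div, inv_mul_cancel₀ hpos.ne']
    set a : ℚ := (st - 1)/2 with ha
    have hane : a ≠ 0 := by
      intro h
      have hst1 : st = 1 := by
        rw [ha] at h
        linarith [h]
      rw [hst1, one_mul] at hst
      have : (2*(r:ℚ) + 2*(k:ℚ) - 1) = 1 := hst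
      have hcast : 2*(r:ℚ) + 2*(k:ℚ) = 2 := by linarith
      have hcc : ((2*r + 2*k : ℕ):ℚ) = ((2:ℕ):ℚ) := by push_cast; linarith
      have : 2*r + 2*k = 2 := by exact_mod_cast hcc
      omega
    have h2a : (1:ℚ) + 2*a ≠ 0 := by
      rw [ha]
      intro h
      have hst0 : st = 0 := by linarith
      rw [hst0, zero_mul] at hst
      norm_num at hst
    set u : ℕ → ℚ := fun n => (c n).eval (st^2) with hu
    have hiter : ∀ n, (stepOp a)^[k] u n = bin a (k+2*r-1) n := by
      have hsrelt := srel_eval (r:ℚ) c h0 h1 hrec st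
      have hBc : ((k+2*r-1 : ℕ):ℚ) = (k:ℚ) + 2*(r:ℚ) - 1 := by
        rw [show k+2*r-1 = k+(2*r-1) by omega, Nat.cast_add,
          Nat.cast_sub (by omega : 1 ≤ 2*r)]
        push_cast; ring
      refine iter_eq_bin hsrelt (by simp [hu, h0]) ?_ ?_
      · rw [hBc]
        linear_combination (-(hst)) / 2
      · rw [hBc]; ring
    have hdet := det_u_ne_zero r k hr hk a hane h2a u (by simp [hu, h0]) hiter
    intro hD0
    apply hdet
    have hmap : (Matrix.of fun ℓ j : Fin k => u (k+2*r-1 + (j:ℕ) - (ℓ:ℕ)))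
        = (Matrix.of fun i j : Fin k => c (N + j.val - i.val)).map (Polynomial.evalRingHom (st^2)) := by
      refine Matrix.ext fun ℓ j => ?_
      simp [hu, Matrix.map_apply, hNdef]
    rw [hmap, ← RingHom.mapMatrix_apply, ← RingHom.map_det]
    rw [← hD, hD0]
    simp
  -- conclusion
  obtain ⟨q, hq⟩ := hdvd
  have hPne : (∏ t ∈ Finset.range (r + (k-1)), f t) ≠ 0 := hmonic.ne_zero
  have hqne : q ≠ 0 := by
    intro h
    rw [h, mul_zero] at hq
    exact hDne hq
  have hqdeg : q.natDegree = 0 := by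
    have := Polynomial.natDegree_mul hPne hqne
    rw [← hq] at this
    omega
  obtain ⟨c₀, hc₀⟩ : ∃ c₀, q = C c₀ := ⟨q.coeff 0, Polynomial.eq_C_of_natDegree_le_zero (by omega)⟩
  refine ⟨c₀, fun h => hqne (by rw [hc₀, h, map_zero]), ?_⟩
  have hsplit : (∏ t ∈ Finset.range (r + (k-1)), f t)
      = (∏ t ∈ Finset.range r, f t) * ∏ j ∈ Finset.range (k-1), f (r + j) :=
    Finset.prod_range_add f r (k-1)
  have hP1 : (∏ t ∈ Finset.range r, f t)
      = ∏ t ∈ Finset.range r, (X - C (1 / (2 * (t:ℚ) + 1) ^ 2)) ^ k := by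
    refine Finset.prod_congr rfl fun t ht => ?_
    simp only [hf, he, if_pos (Finset.mem_range.mp ht)]
  have hP2 : (∏ j ∈ Finset.range (k-1), f (r + j))
      = ∏ j ∈ Finset.range (k-1), (X - C (1 / (2 * (r:ℚ) + 2*(j:ℚ) + 1) ^ 2)) ^ (k - 1 - j) := by
    refine Finset.prod_congr rfl fun j hj => ?_
    simp only [hf, he, if_neg (by omega : ¬ r + j < r)]
    have hc1 : 2 * ((r + j : ℕ):ℚ) + 1 = 2 * (r:ℚ) + 2*(j:ℚ) + 1 := by push_cast; ring
    have hc2 : k - (r + j - r + 1) = k - 1 - j := by omega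
    rw [hc1, hc2]
  show D = _
  rw [hq, hsplit, hP1, hP2, hc₀, mul_comm _ (C c₀), ← mul_assoc]
end

section
/- Let r ≥ 1 and ℓ ≥ r+1 be integers. Then there exists a nonzero polynomial a(T) ∈ ℚ[T] of degree at most ℓ−r−1 such that the sequence of rational numbers d_n := (−(ℓ−1)/(2ℓ−1))^n · a(n) satisfies (n+2)·d_{n+2} + (n+1−r)·d_{n+1} + (n+1−2r)·(ℓ(ℓ−1)/(2ℓ−1)²)·d_n = 0 for every integer n ≥ 0. -/
open Polynomial

private lemma taylor_coeff_succ (c : ℚ) (f : Polynomial ℚ) (k : ℕ) (hf : f.natDegree ≤ k + 1) :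
    (Polynomial.taylor c f).coeff (k + 1) = f.coeff (k + 1) ∧
    (Polynomial.taylor c f).coeff k =
      f.coeff k + ((k : ℚ) + 1) * c * f.coeff (k + 1) := by
  constructor
  · rw [taylor_coeff]
    have h0 : (hasseDeriv (k+1) f).natDegree = 0 := by
      have := natDegree_hasseDeriv_le f (k+1)
      omega
    rw [eval_eq_sum_range' (by omega : (hasseDeriv (k+1) f).natDegree < 1)]
    simp [hasseDeriv_coeff]
  · rw [taylor_coeff]
    have h1 : (hasseDeriv k f).natDegree < 2 := by
      have := natDegree_hasseDeriv_le f k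
      omega
    rw [eval_eq_sum_range' h1]
    rw [Finset.sum_range_succ, Finset.sum_range_succ]
    simp [hasseDeriv_coeff, Nat.add_comm 1 k, Nat.choose_succ_self_right]
    ring

/-- Let `r ≥ 1` and `ℓ ≥ r+1` be integers. There exists a nonzero polynomial
`a ∈ ℚ[T]` of degree at most `ℓ−r−1` such that the sequence
`d n := (−(ℓ−1)/(2ℓ−1))^n · a(n)` satisfies
`(n+2)·d (n+2) + (n+1−r)·d (n+1) + (n+1−2r)·(ℓ(ℓ−1)/(2ℓ−1)²)·d n = 0` for all `n ≥ 0`. -/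
theorem stmt_7 (r ℓ : ℕ) (hr : 1 ≤ r) (hℓ : r + 1 ≤ ℓ) :
    ∃ a : Polynomial ℚ, a ≠ 0 ∧ a.natDegree ≤ ℓ - r - 1 ∧
      ∀ n : ℕ,
        ((n : ℚ) + 2) *
            ((-(((ℓ : ℚ) - 1) / (2 * (ℓ : ℚ) - 1))) ^ (n + 2) *
              Polynomial.eval ((n : ℚ) + 2) a)
        + ((n : ℚ) + 1 - r) *
            ((-(((ℓ : ℚ) - 1) / (2 * (ℓ : ℚ) - 1))) ^ (n + 1) *
              Polynomial.eval ((n : ℚ) + 1) a)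
        + ((n : ℚ) + 1 - 2 * r) * ((ℓ : ℚ) * ((ℓ : ℚ) - 1) / (2 * (ℓ : ℚ) - 1) ^ 2) *
            ((-(((ℓ : ℚ) - 1) / (2 * (ℓ : ℚ) - 1))) ^ n *
              Polynomial.eval (n : ℚ) a)
        = 0 := by
  set m := ℓ - r - 1 with hm
  have hmc : (m : ℚ) = (ℓ : ℚ) - r - 1 := by
    have h : m + r + 1 = ℓ := by omega
    have := congrArg (Nat.cast : ℕ → ℚ) h
    push_cast at this
    linarith
  -- the linear operator
  set L : Polynomial ℚ →ₗ[ℚ] Polynomial ℚ :=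
    ((ℓ : ℚ) - 1) • ((Polynomial.taylor (2:ℚ)).comp (LinearMap.mulLeft ℚ (X : Polynomial ℚ)))
    - (2*(ℓ:ℚ) - 1) • ((Polynomial.taylor (1:ℚ)).comp
        (LinearMap.mulLeft ℚ ((X : Polynomial ℚ) - C (r:ℚ))))
    + (ℓ:ℚ) • (LinearMap.mulLeft ℚ ((X : Polynomial ℚ) + C (1 - 2*(r:ℚ)))) with hL
  have hLapp : ∀ p : Polynomial ℚ, L p =
      ((ℓ:ℚ) - 1) • Polynomial.taylor (2:ℚ) (X * p)
      - (2*(ℓ:ℚ) - 1) • Polynomial.taylor (1:ℚ) ((X - C (r:ℚ)) * p)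
      + (ℓ:ℚ) • ((X + C (1 - 2*(r:ℚ))) * p) := by
    intro p
    simp [hL, LinearMap.mulLeft_apply]
  have hdeg : ∀ a ∈ degreeLT ℚ (m+1), L a ∈ degreeLT ℚ m := by
    intro a ha
    rw [mem_degreeLT] at ha ⊢
    by_cases ha0 : a = 0
    · simp [ha0]
    have hna : a.natDegree ≤ m := by
      have := (natDegree_lt_iff_degree_lt ha0).mpr ha
      omega
    rw [degree_lt_iff_coeff_zero]
    intro k hk
    have hk' : m ≤ k := by exact_mod_cast hk
    -- natDegree bounds of the three products
    have hd1 : (X * a).natDegree ≤ m + 1 := by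
      refine le_trans (natDegree_mul_le) ?_
      simp [natDegree_X]
      omega
    have hd2 : ((X - C (r:ℚ)) * a).natDegree ≤ m + 1 := by
      refine le_trans (natDegree_mul_le) ?_
      have : (X - C (r:ℚ)).natDegree ≤ 1 := natDegree_X_sub_C_le _
      omega
    have hd3 : ((X + C (1 - 2*(r:ℚ))) * a).natDegree ≤ m + 1 := by
      refine le_trans (natDegree_mul_le) ?_
      have : ((X : Polynomial ℚ) + C (1 - 2*(r:ℚ))).natDegree ≤ 1 := by
        rw [natDegree_X_add_C]
      omega
    have haq : a.coeff (m+1) = 0 := coeff_eq_zero_of_natDegree_lt (by omega)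
    rcases Nat.lt_or_ge k (m+2) with hk2 | hk2
    · have hcase : k = m ∨ k = m + 1 := by omega
      rcases hcase with rfl | rfl
      · -- coeff m
        obtain ⟨-, h1⟩ := taylor_coeff_succ 2 (X * a) m hd1
        obtain ⟨-, h2⟩ := taylor_coeff_succ 1 ((X - C (r:ℚ)) * a) m hd2
        have c1 : (X * a).coeff (m+1) = a.coeff m := coeff_X_mul a m
        have c2 : ((X - C (r:ℚ)) * a).coeff (m+1) = a.coeff m := by
          rw [sub_mul, coeff_sub, coeff_X_mul, coeff_C_mul, haq, mul_zero, sub_zero]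
        have c2' : ((X - C (r:ℚ)) * a).coeff m = (X * a).coeff m - r * a.coeff m := by
          rw [sub_mul, coeff_sub, coeff_C_mul]
        have c3 : ((X + C (1 - 2*(r:ℚ))) * a).coeff m
            = (X * a).coeff m + (1 - 2*(r:ℚ)) * a.coeff m := by
          rw [add_mul, coeff_add, coeff_C_mul]
        rw [hLapp, coeff_add, coeff_sub, coeff_smul, coeff_smul, coeff_smul,
          h1, h2, c1, c2, c2', c3]
        simp only [smul_eq_mul]
        rw [hmc]
        ring
      · -- coeff m+1
        obtain ⟨h1, -⟩ := taylor_coeff_succ 2 (X * a) m hd1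
        obtain ⟨h2, -⟩ := taylor_coeff_succ 1 ((X - C (r:ℚ)) * a) m hd2
        have c1 : (X * a).coeff (m+1) = a.coeff m := coeff_X_mul a m
        have c2 : ((X - C (r:ℚ)) * a).coeff (m+1) = a.coeff m := by
          rw [sub_mul, coeff_sub, coeff_X_mul, coeff_C_mul, haq, mul_zero, sub_zero]
        have c3 : ((X + C (1 - 2*(r:ℚ))) * a).coeff (m+1) = a.coeff m := by
          rw [add_mul, coeff_add, coeff_X_mul, coeff_C_mul, haq, mul_zero, add_zero]
        rw [hLapp, coeff_add, coeff_sub, coeff_smul, coeff_smul, coeff_smul,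
          h1, h2, c1, c2, c3]
        simp only [smul_eq_mul]
        ring
    · -- k ≥ m+2 : degree too small
      have hLd : (L a).natDegree ≤ m + 1 := by
        rw [hLapp]
        refine le_trans (natDegree_add_le _ _) ?_
        simp only [max_le_iff]
        constructor
        · refine le_trans (natDegree_sub_le _ _) ?_
          simp only [max_le_iff]
          constructor
          · refine le_trans (natDegree_smul_le _ _) ?_
            rw [natDegree_taylor]; exact hd1
          · refine le_trans (natDegree_smul_le _ _) ?_
            rw [natDegree_taylor]; exact hd2
        · refine le_trans (natDegree_smul_le _ _) ?_
          exact hd3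
      exact coeff_eq_zero_of_natDegree_lt (by omega)
  -- kernel argument
  have : Module.Finite ℚ (degreeLT ℚ m) := Module.Finite.equiv (degreeLTEquiv ℚ m).symm
  have : Module.Finite ℚ (degreeLT ℚ (m+1)) := Module.Finite.equiv (degreeLTEquiv ℚ (m+1)).symm
  set Lr : degreeLT ℚ (m+1) →ₗ[ℚ] degreeLT ℚ m := L.restrict hdeg with hLr
  have hninj : ¬ Function.Injective Lr := by
    intro h
    have h1 := LinearMap.finrank_le_finrank_of_injective h
    have e1 : Module.finrank ℚ (degreeLT ℚ (m+1)) = m + 1 := by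
      rw [(degreeLTEquiv ℚ (m+1)).finrank_eq]
      simp
    have e2 : Module.finrank ℚ (degreeLT ℚ m) = m := by
      rw [(degreeLTEquiv ℚ m).finrank_eq]
      simp
    omega
  have hker : LinearMap.ker Lr ≠ ⊥ := by
    intro h
    exact hninj (LinearMap.ker_eq_bot.mp h)
  obtain ⟨x, hxker, hx0⟩ := Submodule.exists_mem_ne_zero_of_ne_bot hker
  have hxmem : (x : Polynomial ℚ) ∈ degreeLT ℚ (m+1) := x.2
  have hax0 : (x : Polynomial ℚ) ≠ 0 := by
    intro h
    exact hx0 (Subtype.ext h)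
  have hLa : L (x : Polynomial ℚ) = 0 := by
    rw [LinearMap.mem_ker] at hxker
    have := congrArg (Subtype.val) hxker
    rwa [LinearMap.restrict_apply] at this
  refine ⟨x, hax0, ?_, ?_⟩
  · have := (natDegree_lt_iff_degree_lt hax0).mpr (mem_degreeLT.mp hxmem)
    omega
  intro n
  -- evaluate L a at n
  have hE := congrArg (Polynomial.eval (n : ℚ)) hLa
  rw [hLapp] at hE
  simp only [eval_add, eval_sub, eval_smul, eval_mul, eval_X, eval_C, taylor_eval,
    eval_zero, smul_eq_mul] at hE
  -- hE : (ℓ-1)*((n+2)*a(n+2)) - (2ℓ-1)*((n+1-r)*a(n+1)) + ℓ*((n+1-2r)*a(n)) = 0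
  have h2l : (2*(ℓ:ℚ) - 1) ≠ 0 := by
    have : (2:ℚ) ≤ ℓ := by exact_mod_cast (by omega : 2 ≤ ℓ)
    intro h; linarith
  set v : ℚ := ((ℓ:ℚ) - 1) / (2*(ℓ:ℚ) - 1) with hv
  have h1 : v * (2*(ℓ:ℚ)-1) = (ℓ:ℚ)-1 := by rw [hv]; exact div_mul_cancel₀ _ h2l
  have h2 : (1 - v) * (2*(ℓ:ℚ)-1) = (ℓ:ℚ) := by linear_combination -h1
  have h3 : (ℓ:ℚ) * ((ℓ:ℚ)-1) / (2*(ℓ:ℚ)-1)^2 = (1-v)*v := by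
    rw [div_eq_iff (pow_ne_zero 2 h2l)]
    linear_combination -(v*(2*(ℓ:ℚ)-1))*h2 - (ℓ:ℚ)*h1
  have hE2 : (v*((n:ℚ)+2)*Polynomial.eval ((n:ℚ)+2) (x : Polynomial ℚ)
      - ((n:ℚ)+1-(r:ℚ))*Polynomial.eval ((n:ℚ)+1) (x : Polynomial ℚ)
      + (1-v)*((n:ℚ)+1-2*(r:ℚ))*Polynomial.eval (n:ℚ) (x : Polynomial ℚ)) * (2*(ℓ:ℚ)-1) = 0 := by
    linear_combination hE + (((n:ℚ)+2)*Polynomial.eval ((n:ℚ)+2) (x : Polynomial ℚ))*h1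
      + (((n:ℚ)+1-2*(r:ℚ))*Polynomial.eval (n:ℚ) (x : Polynomial ℚ))*h2
  have hE' := (mul_eq_zero.mp hE2).resolve_right h2l
  rw [h3]
  linear_combination ((-v)^n * v) * hE'
end

section
/- The polynomial P_k(1,β,0) ∈ ℚ[β] has degree exactly k(k+2r−1)/2 (note that k(k+2r−1) is always even). -/
open Polynomial Finset

/-- rational "falling binomial" `x(x-1)...(x-p+1)/p!`. -/
noncomputable def bb (x : ℚ) (p : ℕ) : ℚ := (∏ q ∈ Finset.range p, (x - q)) / (p.factorial : ℚ)

lemma bb_ne_zero (x : ℚ) (hx : ∀ z : ℤ, x ≠ (z : ℚ)) (p : ℕ) : bb x p ≠ 0 := by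
  apply div_ne_zero
  · exact Finset.prod_ne_zero_iff.2 fun q _ => sub_ne_zero.2 (hx q)
  · exact_mod_cast (Nat.factorial_pos p).ne'

lemma bb_succ (x : ℚ) (p : ℕ) : bb x (p + 1) = bb x p * (x - p) / (p + 1) := by
  unfold bb
  have h1 : (p.factorial : ℚ) ≠ 0 := by exact_mod_cast (Nat.factorial_pos p).ne'
  have h2 : ((p : ℚ) + 1) ≠ 0 := by positivity
  rw [Finset.prod_range_succ, Nat.factorial_succ]
  push_cast
  field_simp

lemma coeff_prod_of_natDegree_le'' {ι : Type*} (s : Finset ι) (f : ι → Polynomial ℚ)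
    (d : ι → ℕ) (h : ∀ i ∈ s, (f i).natDegree ≤ d i) :
    (∏ i ∈ s, f i).coeff (∑ i ∈ s, d i) = ∏ i ∈ s, (f i).coeff (d i) := by
  induction s using Finset.cons_induction with
  | empty => simp
  | cons a s ha ih =>
    rw [Finset.prod_cons, Finset.sum_cons, Finset.prod_cons,
      Polynomial.coeff_mul_add_eq_of_natDegree_le (h a (Finset.mem_cons_self a s))
        ((Polynomial.natDegree_prod_le _ _).trans (Finset.sum_le_sum
          (fun i hi => h i (Finset.mem_cons_of_mem hi)))),
      ih (fun i hi => h i (Finset.mem_cons_of_mem hi))]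

noncomputable def QQ (x : ℚ) (a n j : ℕ) : Polynomial ℚ :=
  (∏ q ∈ Finset.range j, (X + C (x - a - q))) *
    (∏ q ∈ Finset.Ico (j+1) n, (C ((a:ℚ) + q) - X))

lemma QQ_natDegree_le (x : ℚ) (a n j : ℕ) (hj : j < n) : (QQ x a n j).natDegree ≤ n - 1 := by
  unfold QQ
  refine (Polynomial.natDegree_mul_le).trans ?_
  have h1 : (∏ q ∈ Finset.range j, (X + C (x - a - q))).natDegree ≤ j := by
    refine (Polynomial.natDegree_prod_le _ _).trans ?_
    refine (Finset.sum_le_sum (fun q _ => ?_)).trans (by simp : ∑ _ ∈ Finset.range j, 1 ≤ j)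
    exact le_of_eq (Polynomial.natDegree_X_add_C _)
  have h2 : (∏ q ∈ Finset.Ico (j+1) n, (C ((a:ℚ) + q) - X)).natDegree ≤ n - (j+1) := by
    refine (Polynomial.natDegree_prod_le _ _).trans ?_
    refine (Finset.sum_le_sum (fun q _ => ?_)).trans
      (by simp [Nat.card_Ico] : ∑ _ ∈ Finset.Ico (j+1) n, 1 ≤ n - (j+1))
    have : (C ((a:ℚ) + q) - X) = -(X - C ((a:ℚ) + q)) := by ring
    rw [this, Polynomial.natDegree_neg, Polynomial.natDegree_X_sub_C]
  omega

lemma QQ_eval (x : ℚ) (a n j : ℕ) (y : ℚ) :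
    (QQ x a n j).eval y = (∏ q ∈ Finset.range j, (y + (x - a - q))) *
      (∏ q ∈ Finset.Ico (j+1) n, ((a:ℚ) + q - y)) := by
  simp [QQ, Polynomial.eval_prod]

lemma QQ_eval_zero (x : ℚ) (a n j t : ℕ) (hjt : j < t) (htn : t < n) :
    (QQ x a n j).eval ((a:ℚ) + t) = 0 := by
  rw [QQ_eval]
  apply mul_eq_zero_of_right
  refine Finset.prod_eq_zero (Finset.mem_Ico.2 ⟨by omega, htn⟩) ?_
  push_cast
  ring

lemma QQ_eval_ne_zero (x : ℚ) (hx : ∀ z : ℤ, x ≠ (z : ℚ)) (a n t : ℕ) :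
    (QQ x a n t).eval ((a:ℚ) + t) ≠ 0 := by
  rw [QQ_eval]
  apply mul_ne_zero
  · refine Finset.prod_ne_zero_iff.2 fun q hq => ?_
    intro h
    apply hx ((q : ℤ) - t)
    push_cast
    linarith
  · refine Finset.prod_ne_zero_iff.2 fun q hq => ?_
    have hq' := (Finset.mem_Ico.1 hq).1
    intro h
    have : (q : ℚ) = t := by linarith
    have : q = t := by exact_mod_cast this
    omega

lemma factorial_split (u v : ℕ) (huv : u ≤ v) :
    (v.factorial : ℚ) = u.factorial * ∏ m ∈ Finset.Ico (u+1) (v+1), (m : ℚ) := by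
  have h := Finset.prod_Ico_consecutive (fun m : ℕ => (m : ℚ))
    (by omega : 1 ≤ u + 1) (by omega : u + 1 ≤ v + 1)
  have h1 : ∏ m ∈ Finset.Ico 1 (u+1), (m:ℚ) = u.factorial := by
    rw [← Nat.cast_prod, Finset.prod_Ico_id_eq_factorial]
  have h2 : ∏ m ∈ Finset.Ico 1 (v+1), (m:ℚ) = v.factorial := by
    rw [← Nat.cast_prod, Finset.prod_Ico_id_eq_factorial]
  rw [h1, h2] at h
  exact h.symm

/-- The fundamental factorization `bb x (a+j-i) = R_i * (QQ j).eval i`. -/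
lemma bb_factor (x : ℚ) (n a : ℕ) (hna : n ≤ a) (i j : ℕ) (hi : i < n) (hj : j < n) :
    bb x (a + j - i) =
      ((∏ q ∈ Finset.range (a - i), (x - q)) / ((a + n - 1 - i).factorial : ℚ)) *
        (QQ x a n j).eval (i : ℚ) := by
  have hia : i ≤ a := by omega
  have hcast : ((a - i : ℕ) : ℚ) = (a : ℚ) - i := by
    push_cast [Nat.cast_sub hia]; ring
  -- numerator splits
  have hnum : ∏ q ∈ Finset.range (a + j - i), (x - q) =
      (∏ q ∈ Finset.range (a - i), (x - q)) *
        ∏ q ∈ Finset.range j, ((i:ℚ) + (x - a - q)) := by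
    have hkey : a + j - i = (a - i) + j := by omega
    rw [hkey, Finset.prod_range_add]
    congr 1
    refine Finset.prod_congr rfl fun q hq => ?_
    have : ((a - i + q : ℕ) : ℚ) = (a : ℚ) - i + q := by rw [Nat.cast_add, hcast]
    rw [this]; ring
  -- second product of QQ as a product of naturals
  have hprod : ∏ q ∈ Finset.Ico (j+1) n, ((a:ℚ) + q - i) =
      ∏ m ∈ Finset.Ico (a + j - i + 1) (a + n - i), (m : ℚ) := by
    rw [Finset.prod_Ico_eq_prod_range, Finset.prod_Ico_eq_prod_range]
    have hc : a + n - i - (a + j - i + 1) = n - (j + 1) := by omega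
    rw [hc]
    refine Finset.prod_congr rfl fun q hq => ?_
    push_cast [Nat.cast_sub (show i ≤ a + j by omega)]
    ring
  -- factorial splits
  have hfact : ((a + n - 1 - i).factorial : ℚ) =
      ((a + j - i).factorial : ℚ) * ∏ q ∈ Finset.Ico (j+1) n, ((a:ℚ) + q - i) := by
    rw [hprod]
    have h2 : a + n - i = (a + n - 1 - i) + 1 := by omega
    rw [h2]
    exact factorial_split _ _ (by omega)
  have hP2 : (∏ q ∈ Finset.Ico (j+1) n, ((a:ℚ) + q - i)) ≠ 0 := by
    rw [hprod]
    refine Finset.prod_ne_zero_iff.2 fun m hm => ?_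
    have := (Finset.mem_Ico.1 hm).1
    exact Nat.cast_ne_zero.2 (by omega)
  have hF : ((a + j - i).factorial : ℚ) ≠ 0 := by
    exact_mod_cast (Nat.factorial_pos _).ne'
  rw [bb, QQ_eval, hnum, hfact]
  field_simp

lemma key (x : ℚ) (hx : ∀ z : ℤ, x ≠ (z : ℚ)) (n a : ℕ) (hna : n ≤ a)
    (w : Fin n → ℚ)
    (hw : ∀ i : Fin n, ∑ j : Fin n, bb x (a + j.val - i.val) * w j = 0) :
    ∀ j : Fin n, w j = 0 := by
  rcases Nat.eq_zero_or_pos n with hn | hn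
  · intro j; exact absurd j.2 (by omega)
  set p : Polynomial ℚ := ∑ j : Fin n, C (w j) * QQ x a n j with hp
  have hevalp : ∀ y : ℚ, p.eval y = ∑ j : Fin n, w j * (QQ x a n j).eval y := by
    intro y
    rw [hp, Polynomial.eval_finset_sum]
    exact Finset.sum_congr rfl fun j _ => by rw [Polynomial.eval_mul, Polynomial.eval_C]
  have heval : ∀ i : Fin n, p.eval (i.val : ℚ) = 0 := by
    intro i
    have hR : ((∏ q ∈ Finset.range (a - i.val), (x - q)) /
        ((a + n - 1 - i.val).factorial : ℚ)) ≠ 0 := by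
      apply div_ne_zero
      · exact Finset.prod_ne_zero_iff.2 fun q _ => sub_ne_zero.2 (hx q)
      · exact_mod_cast (Nat.factorial_pos _).ne'
    have h := hw i
    rw [Finset.sum_congr rfl (fun j _ => by
        rw [bb_factor x n a hna i.val j.val i.2 j.2]; ring :
      ∀ j ∈ Finset.univ, bb x (a + j.val - i.val) * w j =
        ((∏ q ∈ Finset.range (a - i.val), (x - q)) / ((a + n - 1 - i.val).factorial : ℚ)) *
          (w j * (QQ x a n j).eval (i.val : ℚ))), ← Finset.mul_sum] at h
    rw [hevalp]
    exact (mul_eq_zero.1 h).resolve_left hR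
  have hp0 : p = 0 := by
    apply Polynomial.eq_zero_of_natDegree_lt_card_of_eval_eq_zero p
      (f := fun i : Fin n => (i.val : ℚ))
      (fun i i' hii' => by apply Fin.ext; have : ((i.val:ℚ)) = i'.val := hii'; exact_mod_cast this)
      heval
    rw [Fintype.card_fin]
    have : p.natDegree ≤ n - 1 := by
      apply Polynomial.natDegree_sum_le_of_forall_le
      intro j _
      exact Polynomial.natDegree_mul_le.trans
        (by simpa using QQ_natDegree_le x a n j.val j.2)
    omega
  have main : ∀ d : ℕ, ∀ t : Fin n, n - 1 - t.val ≤ d → w t = 0 := by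
    intro d
    induction d using Nat.strong_induction_on with
    | _ d ih =>
      intro t ht
      have h0 : (0:ℚ) = ∑ j : Fin n, w j * (QQ x a n j).eval ((a:ℚ) + t.val) := by
        rw [← hevalp, hp0]; simp
      rw [Finset.sum_eq_single_of_mem t (Finset.mem_univ t) (fun j _ hjt => ?_)] at h0
      · exact (mul_eq_zero.1 h0.symm).resolve_right (QQ_eval_ne_zero x hx a n t.val)
      · have hjt' : j.val ≠ t.val := fun h => hjt (Fin.ext h)
        rcases lt_or_gt_of_ne hjt' with hlt | hgt
        · rw [QQ_eval_zero x a n j.val t.val hlt t.2, mul_zero]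
        · rw [ih (n - 1 - j.val) (by omega) j (le_refl _), zero_mul]
  exact fun j => main (n - 1 - j.val) j (le_refl _)


lemma bb_zero' (x : ℚ) : bb x 0 = 1 := by simp [bb]

open Polynomial in
/-- Fix positive integers `r`, `k`. Define `c : ℕ → ℚ[β]` by `c 0 = 1`, `c 1 = r` and
`(n+2)·c (n+2) + (n+1−r)·c (n+1) + (n+1−2r)·((1−β)/4)·c n = 0` for all `n ≥ 0`.
Let `P_k(1,β,0)` be the determinant of the `k×k` matrix with `(i,j)` entry (1-based)
`c (k+2r−1+j−i)`. Then `P_k(1,β,0)` has degree exactly `k(k+2r−1)/2`. -/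
theorem stmt_8 (r : ℕ) (hr : 1 ≤ r) (k : ℕ) (hk : 1 ≤ k) (c : ℕ → Polynomial ℚ)
    (h0 : c 0 = 1) (h1 : c 1 = C (r : ℚ))
    (hrec : ∀ n : ℕ,
      C ((n : ℚ) + 2) * c (n + 2) + C ((n : ℚ) + 1 - r) * c (n + 1)
        + C (((n : ℚ) + 1 - 2 * r) / 4) * (1 - X) * c n = 0) :
    (Matrix.det (Matrix.of fun i j : Fin k =>
        c (k + 2 * r - 1 + j.val - i.val))).degree =
      ((k * (k + 2 * r - 1) / 2 : ℕ) : WithBot ℕ) := by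
  classical
  set x : ℚ := (r : ℚ) - 1/2 with hxdef
  have hx : ∀ z : ℤ, x ≠ (z : ℚ) := by
    intro z h
    have h2 : (2 * r : ℚ) - 1 = 2 * z := by rw [hxdef] at h; linarith
    have h3 : (2 * (r:ℤ) - 1 : ℤ) = 2 * z := by exact_mod_cast h2
    omega
  -- solved recurrence
  have hc2 : ∀ n : ℕ, c (n + 2) = C (((n:ℚ)+2)⁻¹) *
      (C (-((n:ℚ) + 1 - r)) * c (n+1) + C (-(((n:ℚ)+1-2*r)/4)) * ((1 - X) * c n)) := by
    intro n
    have hne : ((n:ℚ)+2) ≠ 0 := by positivity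
    have h : C ((n:ℚ)+2) * c (n+2) =
        C (-((n:ℚ) + 1 - r)) * c (n+1) + C (-(((n:ℚ)+1-2*r)/4)) * ((1 - X) * c n) := by
      have := hrec n
      simp only [map_neg, map_div₀, map_add, map_sub, map_mul, map_one, map_ofNat] at this ⊢
      linear_combination this
    calc c (n+2) = C (((n:ℚ)+2)⁻¹) * (C ((n:ℚ)+2) * c (n+2)) := by
          rw [← mul_assoc, ← C_mul, inv_mul_cancel₀ hne, C_1, one_mul]
    _ = _ := by rw [h]
  have hone : ((1:ℚ[X]) - X).natDegree = 1 := by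
    have h : ((1:ℚ[X]) - X) = -(X - C 1) := by rw [C_1]; ring
    rw [h, natDegree_neg, natDegree_X_sub_C]
  -- degree bounds
  have ndeg : ∀ m : ℕ, (c (2*m)).natDegree ≤ m ∧ (c (2*m+1)).natDegree ≤ m := by
    intro m
    induction m with
    | zero => constructor <;> simp [h0, h1]
    | succ m ih =>
      have hstep : ∀ nn mm : ℕ, (c nn).natDegree ≤ mm → (c (nn+1)).natDegree ≤ mm + 1 →
          (c (nn + 2)).natDegree ≤ mm + 1 := by
        intro nn mm hu hv
        rw [hc2 nn]
        refine natDegree_mul_le.trans ?_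
        rw [natDegree_C, zero_add]
        refine (natDegree_add_le _ _).trans (max_le ?_ ?_)
        · exact natDegree_mul_le.trans (by rw [natDegree_C, zero_add]; exact hv)
        · refine natDegree_mul_le.trans ?_
          rw [natDegree_C, zero_add]
          refine natDegree_mul_le.trans ?_
          rw [hone]
          omega
      have h2m2 : (c (2*m + 2)).natDegree ≤ m + 1 :=
        hstep (2*m) m ih.1 (ih.2.trans (by omega))
      constructor
      · have h' : 2*(m+1) = 2*m + 2 := by ring
        rw [h']; exact h2m2
      · have h' : 2*(m+1)+1 = (2*m+1) + 2 := by ring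
        rw [h']
        exact hstep (2*m+1) m ih.2 (by rw [(by ring : 2*m+1+1 = 2*m+2)]; exact h2m2)
  have ndeg' : ∀ n : ℕ, (c n).natDegree ≤ n / 2 := by
    intro n
    rcases Nat.even_or_odd n with ⟨m, hm⟩ | ⟨m, hm⟩
    · subst hm; rw [(by omega : m + m = 2*m)]; exact le_trans (ndeg m).1 (by omega)
    · subst hm; exact le_trans (ndeg m).2 (by omega)
  -- top coefficients
  have topc : ∀ m : ℕ, (c (2*m)).coeff m = (-(1:ℚ)/4)^m * bb x m := by
    intro m
    induction m with
    | zero => simp [h0, bb_zero']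
    | succ m ih =>
      have h2 : 2*(m+1) = 2*m + 2 := by ring
      rw [h2, hc2 (2*m)]
      rw [coeff_C_mul, coeff_add, coeff_C_mul, coeff_C_mul]
      have hz : (c (2*m+1)).coeff (m+1) = 0 :=
        coeff_eq_zero_of_natDegree_lt (lt_of_le_of_lt (ndeg m).2 (by omega))
      have hX : ((1 - X) * c (2*m)).coeff (m+1) = - (c (2*m)).coeff m := by
        rw [sub_mul, one_mul, coeff_sub, coeff_X_mul]
        rw [coeff_eq_zero_of_natDegree_lt (lt_of_le_of_lt (ndeg m).1 (by omega))]
        ring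
      rw [hz, hX, ih, bb_succ]
      have hm1 : ((m:ℚ)+1) ≠ 0 := by positivity
      have hm2 : ((2*m:ℕ):ℚ)+2 ≠ 0 := by positivity
      push_cast
      rw [hxdef]
      field_simp
      ring
  -- setup
  set m0 : ℕ := k + 2*r - 1 with hm0
  set D : ℕ := k * m0 / 2 with hD
  have hkm0 : k ≤ m0 := by omega
  have heven : k * m0 % 2 = 0 := by
    rcases Nat.even_or_odd k with hk2 | hk2
    · exact Nat.even_iff.1 (hk2.mul_right _)
    · have hm0e : Even m0 := by
        rcases hk2 with ⟨t, ht⟩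
        exact ⟨t + r, by omega⟩
      exact Nat.even_iff.1 (hm0e.mul_left _)
  have hKK : 2 * D = k * m0 := by
    rw [hD]; exact Nat.mul_div_cancel' (Nat.dvd_of_mod_eq_zero heven)
  have hK2 : 2 ≤ k * m0 :=
    le_trans (by omega) (Nat.mul_le_mul hk (show 2 ≤ m0 by omega))
  set A : ℕ → ℚ := fun m => (-(1:ℚ)/4)^m * bb x m with hA
  have hAne : ∀ m, A m ≠ 0 :=
    fun m => mul_ne_zero (pow_ne_zero _ (by norm_num)) (bb_ne_zero x hx m)
  set L : Matrix (Fin k) (Fin k) ℚ := Matrix.of (fun i j : Fin k =>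
    if (m0 + j.val - i.val) % 2 = 0 then A ((m0 + j.val - i.val)/2) else 0) with hL
  clear_value x m0 D A L
  -- permutation sum identities
  have hsum : ∀ σ : Equiv.Perm (Fin k), ∑ i : Fin k, (m0 + i.val - (σ i).val) = k * m0 := by
    intro σ
    have h1 : ∑ i : Fin k, (m0 + i.val - (σ i).val) + ∑ i : Fin k, (σ i).val
        = ∑ i : Fin k, (m0 + i.val) := by
      rw [← Finset.sum_add_distrib]
      exact Finset.sum_congr rfl fun i _ => by have := (σ i).2; omega
    have h2 : ∑ i : Fin k, (σ i).val = ∑ i : Fin k, i.val :=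
      Equiv.sum_comp σ (fun i : Fin k => i.val)
    have h3 : ∑ i : Fin k, (m0 + i.val) = k * m0 + ∑ i : Fin k, i.val := by
      rw [Finset.sum_add_distrib]
      congr 1
      simp [Finset.sum_const, mul_comm]
    omega
  have hhalf : ∀ σ : Equiv.Perm (Fin k), (∀ i : Fin k, (m0 + i.val - (σ i).val) % 2 = 0) →
      ∑ i : Fin k, (m0 + i.val - (σ i).val)/2 = D := by
    intro σ hall
    have h1 : 2 * ∑ i : Fin k, (m0 + i.val - (σ i).val)/2
        = ∑ i : Fin k, (m0 + i.val - (σ i).val) := by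
      rw [Finset.mul_sum]
      exact Finset.sum_congr rfl fun i _ => by have := hall i; omega
    have h2 := hsum σ
    rw [← hKK] at h2
    omega
  have hhalf' : ∀ σ : Equiv.Perm (Fin k), (¬ ∀ i : Fin k, (m0 + i.val - (σ i).val) % 2 = 0) →
      ∑ i : Fin k, (m0 + i.val - (σ i).val)/2 < D := by
    intro σ hall
    push_neg at hall
    obtain ⟨i0, hi0⟩ := hall
    have h1 : 2 * ∑ i : Fin k, (m0 + i.val - (σ i).val)/2
        + ∑ i : Fin k, (m0 + i.val - (σ i).val) % 2
        = ∑ i : Fin k, (m0 + i.val - (σ i).val) := by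
      rw [Finset.mul_sum, ← Finset.sum_add_distrib]
      exact Finset.sum_congr rfl fun i _ => by omega
    have h2 : (∑ i : Fin k, (m0 + i.val - (σ i).val) % 2) % 2
        = (∑ i : Fin k, (m0 + i.val - (σ i).val)) % 2 := (Finset.sum_nat_mod _ _ _).symm
    have h3 : 1 ≤ ∑ i : Fin k, (m0 + i.val - (σ i).val) % 2 :=
      le_trans (show 1 ≤ (m0 + i0.val - (σ i0).val) % 2 by omega)
        (Finset.single_le_sum (f := fun i : Fin k =>
          (m0 + i.val - (σ i).val) % 2) (fun i _ => Nat.zero_le _) (Finset.mem_univ i0))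
    have h4 := hsum σ
    rw [← hKK] at h4
    have h5 := hK2
    rw [← hKK] at h5
    omega
  -- degree bound for det
  have hdegle : (Matrix.det (Matrix.of fun i j : Fin k =>
      c (m0 + j.val - i.val))).natDegree ≤ D := by
    rw [Matrix.det_apply']
    simp only [Matrix.of_apply]
    refine natDegree_sum_le_of_forall_le _ _ (fun σ _ => ?_)
    refine natDegree_mul_le.trans ?_
    rw [Polynomial.natDegree_intCast, zero_add]
    refine (natDegree_prod_le _ _).trans ?_
    refine le_trans (Finset.sum_le_sum (fun i _ => ndeg' (m0 + i.val - (σ i).val))) ?_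
    by_cases hall : ∀ i : Fin k, (m0 + i.val - (σ i).val) % 2 = 0
    · exact le_of_eq (hhalf σ hall)
    · exact le_of_lt (hhalf' σ hall)
  -- coefficient at D equals det L
  have hcoeff : (Matrix.det (Matrix.of fun i j : Fin k =>
      c (m0 + j.val - i.val))).coeff D = Matrix.det L := by
    rw [Matrix.det_apply', Matrix.det_apply', finset_sum_coeff]
    simp only [Matrix.of_apply]
    refine Finset.sum_congr rfl (fun σ _ => ?_)
    rw [Polynomial.coeff_intCast_mul]
    congr 1
    by_cases hall : ∀ i : Fin k, (m0 + i.val - (σ i).val) % 2 = 0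
    · rw [← hhalf σ hall]
      rw [coeff_prod_of_natDegree_le'' Finset.univ _
        (fun i : Fin k => (m0 + i.val - (σ i).val)/2) (fun i _ => ndeg' _)]
      refine Finset.prod_congr rfl (fun i _ => ?_)
      have he := hall i
      have h2 : 2 * ((m0 + i.val - (σ i).val)/2) = m0 + i.val - (σ i).val := by omega
      show (c (m0 + i.val - (σ i).val)).coeff ((m0 + i.val - (σ i).val)/2)
        = L (σ i) i
      rw [hL, Matrix.of_apply, if_pos he, hA]
      show (c (m0 + i.val - (σ i).val)).coeff ((m0 + i.val - (σ i).val)/2)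
        = (-(1:ℚ)/4) ^ ((m0 + i.val - (σ i).val)/2) * bb x ((m0 + i.val - (σ i).val)/2)
      rw [← topc, h2]
    · have hR0 : ∏ i : Fin k, L (σ i) i = 0 := by
        push_neg at hall
        obtain ⟨i0, hi0⟩ := hall
        refine Finset.prod_eq_zero (Finset.mem_univ i0) ?_
        rw [hL, Matrix.of_apply, if_neg hi0]
      rw [hR0]
      refine coeff_eq_zero_of_natDegree_lt (lt_of_le_of_lt ?_ (hhalf' σ hall))
      exact (natDegree_prod_le _ _).trans
        (Finset.sum_le_sum (fun i _ => ndeg' (m0 + i.val - (σ i).val)))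
  -- det L is nonzero
  have hLne : Matrix.det L ≠ 0 := by
    intro hdet
    obtain ⟨v, hv0, hv⟩ := Matrix.exists_mulVec_eq_zero_iff.mpr hdet
    obtain ⟨j0, hj0⟩ := Function.ne_iff.mp hv0
    have hj0' : v j0 ≠ 0 := by simpa using hj0
    set p' : ℕ := j0.val % 2 with hp'
    set p : ℕ := (p' + k + 1) % 2 with hpp
    set n : ℕ := (k + 1 - p)/2 with hn
    have hj0k : j0.val < k := j0.2
    have hrlt : ∀ i : Fin n, 2*i.val + p < k := by intro i; have := i.2; omega
    have hclt : ∀ j : Fin n, 2*j.val + p' < k := by intro j; have := j.2; omega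
    set gr : Fin n → Fin k := fun i => ⟨2*i.val + p, hrlt i⟩ with hgr
    set gc : Fin n → Fin k := fun j => ⟨2*j.val + p', hclt j⟩ with hgc
    set a : ℕ := (m0 + p' - p)/2 with ha
    have hna : n ≤ a := by omega
    have hrow : ∀ i : Fin k, ∑ j : Fin k, L i j * v j = 0 := by
      intro i
      have := congrFun hv i
      simpa [Matrix.mulVec, dotProduct] using this
    have hwkey : ∀ i' : Fin n, ∑ j' : Fin n,
        bb x (a + j'.val - i'.val) * ((-(1:ℚ)/4)^(j'.val) * v (gc j')) = 0 := by
      intro i'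
      have hi'2 := i'.2
      have hres : ∑ j' : Fin n, L (gr i') (gc j') * v (gc j')
          = ∑ j : Fin k, L (gr i') j * v j := by
        refine Finset.sum_of_injOn gc ?_ ?_ ?_ ?_
        · intro u _ w _ huw
          have h2 : 2*u.val + p' = 2*w.val + p' := congrArg Fin.val huw
          exact Fin.ext (by omega)
        · intro u _
          exact Finset.mem_coe.2 (Finset.mem_univ _)
        · intro j _ hj
          have hpar : j.val % 2 ≠ p' := by
            intro hjp
            refine hj ?_
            have hj2 : j.val / 2 < n := by omega
            refine ⟨⟨j.val/2, hj2⟩, Finset.mem_coe.2 (Finset.mem_univ _), ?_⟩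
            exact Fin.ext (show 2*(j.val/2) + p' = j.val by omega)
          have hL0 : L (gr i') j = 0 := by
            have hcond : ¬ (m0 + j.val - (gr i').val) % 2 = 0 := by
              show ¬ (m0 + j.val - (2*i'.val + p)) % 2 = 0
              omega
            rw [hL, Matrix.of_apply, if_neg hcond]
          rw [hL0, zero_mul]
        · intro u _
          rfl
      have hr := hrow (gr i')
      rw [← hres] at hr
      have hterm : ∀ j' : Fin n, L (gr i') (gc j') * v (gc j') =
          (-(1:ℚ)/4)^(a - i'.val) *
            (bb x (a + j'.val - i'.val) * ((-(1:ℚ)/4)^(j'.val) * v (gc j'))) := by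
        intro j'
        have hj'2 := j'.2
        have hev : (m0 + (gc j').val - (gr i').val) % 2 = 0 := by
          show (m0 + (2*j'.val + p') - (2*i'.val + p)) % 2 = 0
          omega
        have hidx : (m0 + (gc j').val - (gr i').val)/2 = (a - i'.val) + j'.val := by
          show (m0 + (2*j'.val + p') - (2*i'.val + p))/2 = (a - i'.val) + j'.val
          omega
        have hsplit : a + j'.val - i'.val = (a - i'.val) + j'.val := by omega
        rw [hL, Matrix.of_apply, if_pos hev, hidx, hA]
        simp only
        rw [pow_add, hsplit]
        ring
      rw [Finset.sum_congr rfl (fun j' _ => hterm j'), ← Finset.mul_sum] at hr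
      exact (mul_eq_zero.1 hr).resolve_left (pow_ne_zero _ (by norm_num))
    have hallz := key x hx n a hna
      (fun j' : Fin n => (-(1:ℚ)/4)^(j'.val) * v (gc j')) hwkey
    have hj0n : j0.val / 2 < n := by omega
    have hz := hallz ⟨j0.val/2, hj0n⟩
    have hvz : v (gc ⟨j0.val/2, hj0n⟩) = 0 := by
      have := mul_eq_zero.1 hz
      exact this.resolve_left (pow_ne_zero _ (by norm_num))
    have hgcj0 : gc ⟨j0.val/2, hj0n⟩ = j0 :=
      Fin.ext (show 2*(j0.val/2) + p' = j0.val by omega)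
    exact hj0' (by rw [← hgcj0]; exact hvz)
  -- conclusion
  have hMne : (Matrix.det (Matrix.of fun i j : Fin k =>
      c (m0 + j.val - i.val))) ≠ 0 := by
    intro h
    rw [h, coeff_zero] at hcoeff
    exact hLne hcoeff.symm
  have hge : D ≤ (Matrix.det (Matrix.of fun i j : Fin k =>
      c (m0 + j.val - i.val))).natDegree :=
    le_natDegree_of_ne_zero (by rw [hcoeff]; exact hLne)
  rw [degree_eq_natDegree hMne, le_antisymm hdegle hge]
end

section
/- The polynomial P_k ∈ ℚ[α,β,γ] is weighted-homogeneous of degree 2k(k+2r−1) for the weights 2, 4, 6 on α, β, γ: every monomial α^a·β^b·γ^c occurring in P_k with nonzero coefficient satisfies 2a + 4b + 6c = 2k(k+2r−1). -/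
open MvPolynomial

noncomputable def wt : Fin 3 → ℤ := ![2, 4, 6]

lemma IsWH_congr {φ : MvPolynomial (Fin 3) ℚ} {a b : ℤ}
    (h : φ.IsWeightedHomogeneous wt a) (e : a = b) : φ.IsWeightedHomogeneous wt b := e ▸ h

lemma IsWH_neg {φ : MvPolynomial (Fin 3) ℚ} {a : ℤ}
    (h : φ.IsWeightedHomogeneous wt a) : (-φ).IsWeightedHomogeneous wt a := by
  intro d hd
  exact h (by simpa using hd)

lemma IsWH_sub {φ ψ : MvPolynomial (Fin 3) ℚ} {a : ℤ}
    (h : φ.IsWeightedHomogeneous wt a) (h' : ψ.IsWeightedHomogeneous wt a) :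
    (φ - ψ).IsWeightedHomogeneous wt a := by
  rw [sub_eq_add_neg]; exact h.add (IsWH_neg h')

lemma IsWH_X0 : (X 0 : MvPolynomial (Fin 3) ℚ).IsWeightedHomogeneous wt 2 :=
  isWeightedHomogeneous_X ℚ wt 0

lemma IsWH_X2 : (X 2 : MvPolynomial (Fin 3) ℚ).IsWeightedHomogeneous wt 6 :=
  isWeightedHomogeneous_X ℚ wt 2

lemma IsWH_X0sq : ((X 0 : MvPolynomial (Fin 3) ℚ) ^ 2).IsWeightedHomogeneous wt 4 := by
  have h := IsWH_X0.mul IsWH_X0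
  rw [← sq] at h
  exact IsWH_congr h (by norm_num)

/-- α² - β is weighted homogeneous of degree 4. -/
lemma IsWH_sq_sub : ((X 0 : MvPolynomial (Fin 3) ℚ) ^ 2 - X 1).IsWeightedHomogeneous wt 4 :=
  IsWH_sub IsWH_X0sq (isWeightedHomogeneous_X ℚ wt 1)

/-- Fix positive integers `r`, `k`. In `ℚ[α,β,γ]` (with `α = X 0`, `β = X 1`, `γ = X 2`),
define `c : ℤ → ℚ[α,β,γ]` by `c n = 0` for `n < 0`, `c 0 = 1`, and the recurrence
`(n+4)·c(n+4) + (2n+6−r)·α·c(n+3) + ((n+2−r)·α² + (2n+5−2r)·(α²−β)/4)·c(n+2)`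
`+ ((2n+3−3r)·α·(α²−β)/4 + γ/2)·c(n+1) + (1/16)·(α²−β)²·(n+1−2r)·c(n) = 0` for `n ≥ −3`.
Let `P_k` be the determinant of the `k×k` matrix with `(i,j)` entry (1-based)
`c (k+2r−1+j−i)`. Then every monomial `α^a β^b γ^c` occurring in `P_k` with nonzero
coefficient satisfies `2a + 4b + 6c = 2k(k+2r−1)`. -/
theorem stmt_9 (r k : ℕ) (hr : 1 ≤ r) (hk : 1 ≤ k)
    (c : ℤ → MvPolynomial (Fin 3) ℚ)
    (hneg : ∀ n : ℤ, n < 0 → c n = 0) (h0 : c 0 = 1)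
    (hrec : ∀ n : ℤ, -3 ≤ n →
      C ((n : ℚ) + 4) * c (n + 4)
      + C (2 * (n : ℚ) + 6 - r) * X 0 * c (n + 3)
      + (C ((n : ℚ) + 2 - r) * (X 0) ^ 2
          + C ((2 * (n : ℚ) + 5 - 2 * r) / 4) * ((X 0) ^ 2 - X 1)) * c (n + 2)
      + (C ((2 * (n : ℚ) + 3 - 3 * r) / 4) * X 0 * ((X 0) ^ 2 - X 1)
          + C (1 / 2 : ℚ) * X 2) * c (n + 1)
      + C (((n : ℚ) + 1 - 2 * r) / 16) * ((X 0) ^ 2 - X 1) ^ 2 * c n = 0) :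
    ∀ m : Fin 3 →₀ ℕ,
      MvPolynomial.coeff m
        (Matrix.det (Matrix.of fun i j : Fin k =>
          c ((k : ℤ) + 2 * r - 1 + j.val - i.val))) ≠ 0 →
      2 * m 0 + 4 * m 1 + 6 * m 2 = 2 * k * (k + 2 * r - 1) := by
  -- Step 1: each `c n` is weighted homogeneous of degree `2n`.
  have key : ∀ N : ℕ, ∀ n : ℤ, n ≤ N → (c n).IsWeightedHomogeneous wt (2 * n) := by
    intro N
    induction N with
    | zero =>
      intro n hn
      rcases lt_or_eq_of_le hn with h | h
      · rw [hneg n (by exact_mod_cast h)]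
        exact isWeightedHomogeneous_zero ℚ wt _
      · rw [show n = 0 by exact_mod_cast h, h0]
        exact IsWH_congr (isWeightedHomogeneous_one ℚ wt) (by norm_num)
    | succ N ih =>
      intro n hn
      by_cases hle : n ≤ N
      · exact ih n hle
      · have hn1 : n = (N : ℤ) + 1 := by push_cast at hn ⊢; omega
        have hpos : (1 : ℤ) ≤ n := by omega
        have h := hrec (n - 4) (by omega)
        rw [show n - 4 + 4 = n by ring, show n - 4 + 3 = n - 1 by ring,
          show n - 4 + 2 = n - 2 by ring, show n - 4 + 1 = n - 3 by ring] at h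
        set a : ℚ := ((n - 4 : ℤ) : ℚ) + 4 with ha_def
        have ha : a ≠ 0 := by
          have : a = (n : ℚ) := by push_cast [ha_def]; ring
          rw [this]
          exact_mod_cast (by omega : n ≠ 0)
        -- the "rest" of the recurrence
        have hsplit : C a * c n =
            - (C (2 * ((n - 4 : ℤ) : ℚ) + 6 - r) * X 0 * c (n - 1)
            + (C (((n - 4 : ℤ) : ℚ) + 2 - r) * (X 0) ^ 2
                + C ((2 * ((n - 4 : ℤ) : ℚ) + 5 - 2 * r) / 4) * ((X 0) ^ 2 - X 1)) * c (n - 2)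
            + (C ((2 * ((n - 4 : ℤ) : ℚ) + 3 - 3 * r) / 4) * X 0 * ((X 0) ^ 2 - X 1)
                + C (1 / 2 : ℚ) * X 2) * c (n - 3)
            + C ((((n - 4 : ℤ) : ℚ) + 1 - 2 * r) / 16) * ((X 0) ^ 2 - X 1) ^ 2 * c (n - 4)) := by
          rw [ha_def]; linear_combination h
        have hcn : c n = C a⁻¹ * (C a * c n) := by
          rw [← mul_assoc, ← C_mul, inv_mul_cancel₀ ha, C_1, one_mul]
        rw [hcn, hsplit]
        have hC0 : ∀ b : ℚ, (C b : MvPolynomial (Fin 3) ℚ).IsWeightedHomogeneous wt 0 :=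
          fun b => isWeightedHomogeneous_C wt b
        have ih1 : (c (n - 1)).IsWeightedHomogeneous wt (2 * (n - 1)) := ih _ (by omega)
        have ih2 : (c (n - 2)).IsWeightedHomogeneous wt (2 * (n - 2)) := ih _ (by omega)
        have ih3 : (c (n - 3)).IsWeightedHomogeneous wt (2 * (n - 3)) := ih _ (by omega)
        have ih4 : (c (n - 4)).IsWeightedHomogeneous wt (2 * (n - 4)) := ih _ (by omega)
        have T1 : (C (2 * ((n - 4 : ℤ) : ℚ) + 6 - r) * X 0 * c (n - 1)).IsWeightedHomogeneous
            wt (2 * n) :=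
          IsWH_congr (((hC0 _).mul IsWH_X0).mul ih1)
            (show (0 : ℤ) + 2 + 2 * (n - 1) = 2 * n by ring)
        have T2 : ((C (((n - 4 : ℤ) : ℚ) + 2 - r) * (X 0) ^ 2
            + C ((2 * ((n - 4 : ℤ) : ℚ) + 5 - 2 * r) / 4) * ((X 0) ^ 2 - X 1))
              * c (n - 2)).IsWeightedHomogeneous wt (2 * n) := by
          have u1 : ((C (((n - 4 : ℤ) : ℚ) + 2 - r) * (X 0) ^ 2 :
              MvPolynomial (Fin 3) ℚ)).IsWeightedHomogeneous wt 4 :=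
            IsWH_congr ((hC0 _).mul IsWH_X0sq) (show (0 : ℤ) + 4 = 4 by ring)
          have u2 : ((C ((2 * ((n - 4 : ℤ) : ℚ) + 5 - 2 * r) / 4) * ((X 0) ^ 2 - X 1) :
              MvPolynomial (Fin 3) ℚ)).IsWeightedHomogeneous wt 4 :=
            IsWH_congr ((hC0 _).mul IsWH_sq_sub) (show (0 : ℤ) + 4 = 4 by ring)
          exact IsWH_congr ((u1.add u2).mul ih2)
            (show (4 : ℤ) + 2 * (n - 2) = 2 * n by ring)
        have T3 : ((C ((2 * ((n - 4 : ℤ) : ℚ) + 3 - 3 * r) / 4) * X 0 * ((X 0) ^ 2 - X 1)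
            + C (1 / 2 : ℚ) * X 2) * c (n - 3)).IsWeightedHomogeneous wt (2 * n) := by
          have u1 : ((C ((2 * ((n - 4 : ℤ) : ℚ) + 3 - 3 * r) / 4) * X 0 * ((X 0) ^ 2 - X 1) :
              MvPolynomial (Fin 3) ℚ)).IsWeightedHomogeneous wt 6 :=
            IsWH_congr (((hC0 _).mul IsWH_X0).mul IsWH_sq_sub)
              (show (0 : ℤ) + 2 + 4 = 6 by ring)
          have u2 : ((C (1 / 2 : ℚ) * X 2 :
              MvPolynomial (Fin 3) ℚ)).IsWeightedHomogeneous wt 6 :=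
            IsWH_congr ((hC0 _).mul IsWH_X2) (show (0 : ℤ) + 6 = 6 by ring)
          exact IsWH_congr ((u1.add u2).mul ih3)
            (show (6 : ℤ) + 2 * (n - 3) = 2 * n by ring)
        have T4 : (C ((((n - 4 : ℤ) : ℚ) + 1 - 2 * r) / 16) * ((X 0) ^ 2 - X 1) ^ 2
            * c (n - 4)).IsWeightedHomogeneous wt (2 * n) := by
          have hsq : (((X 0 : MvPolynomial (Fin 3) ℚ) ^ 2 - X 1) ^ 2).IsWeightedHomogeneous
              wt 8 := by
            have := IsWH_sq_sub.mul IsWH_sq_sub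
            rw [← sq] at this
            exact IsWH_congr this (by norm_num)
          exact IsWH_congr (((hC0 _).mul hsq).mul ih4)
            (show (0 : ℤ) + 8 + 2 * (n - 4) = 2 * n by ring)
        exact IsWH_congr ((hC0 a⁻¹).mul (IsWH_neg (((T1.add T2).add T3).add T4)))
          (show (0 : ℤ) + 2 * n = 2 * n by ring)
  have hc : ∀ n : ℤ, (c n).IsWeightedHomogeneous wt (2 * n) := by
    intro n
    rcases le_or_gt 0 n with h | h
    · exact key n.toNat n (by omega)
    · rw [hneg n h]; exact isWeightedHomogeneous_zero ℚ wt _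
  -- Step 2: the determinant is weighted homogeneous of degree 2k(k+2r-1).
  set D0 : ℤ := (k : ℤ) + 2 * r - 1 with hD0
  have hdet : (Matrix.det (Matrix.of fun i j : Fin k =>
      c ((k : ℤ) + 2 * r - 1 + j.val - i.val))).IsWeightedHomogeneous wt
      (2 * k * D0) := by
    rw [← mem_weightedHomogeneousSubmodule, Matrix.det_apply]
    apply Submodule.sum_mem
    intro σ _
    rw [Units.smul_def, ← Int.cast_smul_eq_zsmul ℚ]
    apply Submodule.smul_mem
    rw [mem_weightedHomogeneousSubmodule]
    have hprod : (∏ i : Fin k, (Matrix.of fun i j : Fin k =>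
        c ((k : ℤ) + 2 * r - 1 + j.val - i.val)) (σ i) i).IsWeightedHomogeneous wt
        (∑ i : Fin k, 2 * (D0 + (i : ℤ) - ((σ i : Fin k) : ℤ))) := by
      apply IsWeightedHomogeneous.prod
      intro i _
      simp only [Matrix.of_apply]
      exact IsWH_congr (hc _) (by rw [hD0])
    refine IsWH_congr hprod ?_
    have hs : ∑ i : Fin k, (2 * ((σ i : Fin k) : ℤ)) = ∑ i : Fin k, (2 * (i : ℤ)) :=
      Equiv.sum_comp σ (fun i => 2 * (i : ℤ))
    calc ∑ i : Fin k, 2 * (D0 + (i : ℤ) - ((σ i : Fin k) : ℤ))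
        = ∑ i : Fin k, ((2 * D0 + 2 * (i : ℤ)) - 2 * ((σ i : Fin k) : ℤ)) := by
          apply Finset.sum_congr rfl; intros; ring
      _ = (∑ i : Fin k, (2 * D0 + 2 * (i : ℤ))) - ∑ i : Fin k, 2 * ((σ i : Fin k) : ℤ) :=
          Finset.sum_sub_distrib _ _
      _ = ∑ i : Fin k, (2 * D0 : ℤ) := by
          rw [hs, Finset.sum_add_distrib]; ring
      _ = 2 * k * D0 := by
          rw [Finset.sum_const, Finset.card_univ, Fintype.card_fin, nsmul_eq_mul]; ring
  -- Step 3: conclude.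
  intro m hm
  have hdeg := hdet hm
  rw [Finsupp.weight_apply, Finsupp.sum_fintype _ _ (fun i => by simp)] at hdeg
  rw [Fin.sum_univ_three] at hdeg
  simp only [wt, Matrix.cons_val_zero, Matrix.cons_val_one, Matrix.head_cons, smul_eq_mul,
    nsmul_eq_mul, show (![2, 4, 6] : Fin 3 → ℤ) 2 = 6 from rfl] at hdeg
  rw [hD0] at hdeg
  have h2 : ((2 * m 0 + 4 * m 1 + 6 * m 2 : ℕ) : ℤ)
      = ((2 * k * (k + 2 * r - 1) : ℕ) : ℤ) := by
    push_cast
    rw [Nat.cast_sub (by omega : 1 ≤ k + 2 * r)]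
    push_cast
    linear_combination hdeg
  exact_mod_cast h2
end

section
/- In the polynomial ring ℤ[b] one has the identity c̃(2r,r,b) = ∏_{j=1}^{r} ((2j−1)²·b − j(j−1)). -/
open Polynomial

private noncomputable def cpAux (r : ℕ) : ℕ → Polynomial ℤ
  | 0 => 1
  | 1 => C (r : ℤ)
  | (n+2) => C ((r : ℤ) + 1 - ((n : ℤ) + 2)) * cpAux r (n+1)
      + X * C ((2 * (r : ℤ) + 1 - ((n : ℤ) + 2)) * ((n : ℤ) + 1)) * cpAux r n

private lemma cpAux_rec (r n : ℕ) : cpAux r (n+2) =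
    C ((r : ℤ) + 1 - ((n : ℤ) + 2)) * cpAux r (n+1)
      + X * C ((2 * (r : ℤ) + 1 - ((n : ℤ) + 2)) * ((n : ℤ) + 1)) * cpAux r n := by
  simp [cpAux]

/-- Cross-parameter relation:
`c(n+2, r+1) = (r+1)·c(n+1, r) + (2r+1)·(n+1)·b·c(n, r)`. -/
private lemma cpAux_cross (r : ℕ) : ∀ m : ℕ, cpAux (r+1) (m+2) =
    C ((r : ℤ) + 1) * cpAux r (m+1)
      + X * C ((2 * (r : ℤ) + 1) * ((m : ℤ) + 1)) * cpAux r m := by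
  intro m
  induction m using Nat.twoStepInduction with
  | zero =>
      rw [cpAux_rec]
      simp only [cpAux]
      push_cast
      simp only [map_add, map_sub, map_mul, map_one, map_ofNat]
      ring
  | one =>
      rw [cpAux_rec, cpAux_rec]
      simp only [cpAux]
      push_cast
      simp only [map_add, map_sub, map_mul, map_one, map_ofNat]
      ring
  | more m ih2 ih1 =>
      -- ih2 : statement at m+2? careful with argument order
      rw [cpAux_rec (r+1) (m+2), ih2, ih1,
        show m+2+1 = m+1+2 from rfl, show m+1+1 = m+2 from rfl,
        cpAux_rec r (m+1), cpAux_rec r m]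
      push_cast
      simp only [map_add, map_sub, map_mul, map_one, map_ofNat]
      ring


private lemma cpAux_prod : ∀ r : ℕ, 1 ≤ r → cpAux r (2*r) =
    ∏ j ∈ Finset.range r,
      (C ((2 * (j : ℤ) + 1) ^ 2) * X - C (((j : ℤ) + 1) * (j : ℤ))) := by
  intro r hr
  induction r, hr using Nat.le_induction with
  | base =>
      rw [show 2*1 = 2 from rfl, cpAux_rec]
      simp [cpAux]
  | succ r hr ih =>
      have h1 : 2 * (r+1) = (2*r) + 2 := by ring
      have h2 : 2*r + 1 = (2*r - 1) + 2 := by omega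
      have h3 : (2*r - 1) + 1 = 2*r := by omega
      have hc : ((2*r - 1 : ℕ) : ℤ) = 2*(r:ℤ) - 1 := by omega
      have hb := cpAux_rec r (2*r - 1)
      rw [h3, ← h2, hc] at hb
      rw [h1, cpAux_cross r (2*r), hb, ih, Finset.prod_range_succ]
      push_cast
      simp only [map_add, map_sub, map_mul, map_one, map_ofNat, map_pow]
      ring


open Polynomial in
/-- Fix a positive integer `r`. Define `c̃(n,r,b) ∈ ℤ[b]` by `c̃(0,r,b) = 1`,
`c̃(1,r,b) = r` and `c̃(n,r,b) = (r+1−n)·c̃(n−1,r,b) + b·(2r+1−n)·(n−1)·c̃(n−2,r,b)`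
for `n ≥ 2`. Then `c̃(2r,r,b) = ∏_{j=1}^{r} ((2j−1)²·b − j(j−1))` in `ℤ[b]`. -/
theorem stmt_11 (r : ℕ) (hr : 1 ≤ r) (c : ℕ → Polynomial ℤ)
    (h0 : c 0 = 1) (h1 : c 1 = C (r : ℤ))
    (hrec : ∀ n : ℕ, 2 ≤ n →
      c n = C ((r : ℤ) + 1 - n) * c (n - 1)
        + X * C ((2 * (r : ℤ) + 1 - n) * ((n : ℤ) - 1)) * c (n - 2)) :
    c (2 * r) = ∏ j ∈ Finset.range r,
      (C ((2 * (j : ℤ) + 1) ^ 2) * X - C (((j : ℤ) + 1) * (j : ℤ))) := by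
  have key : ∀ n : ℕ, c n = cpAux r n := by
    intro n
    induction n using Nat.twoStepInduction with
    | zero => simpa [cpAux] using h0
    | one => simpa [cpAux] using h1
    | more n ih2 ih1 =>
        have h := hrec (n+2) (by omega)
        simp only [show n+2-1 = n+1 from rfl, show n+2-2 = n from rfl] at h
        rw [h, ih1, ih2, cpAux_rec]
        push_cast
        ring_nf
  rw [key (2*r)]
  exact cpAux_prod r hr
end

section
/- For every integer n ≥ 0 one has the identity in ℚ[β]: n!·c_n equals the polynomial obtained from c̃(n,r,b) by substituting b = (1−β)/4. -/
open Polynomial in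
/-- Fix a positive integer `r`. Let `c : ℕ → ℚ[β]` satisfy `c 0 = 1`, `c 1 = r` and
`(n+2)·c (n+2) + (n+1−r)·c (n+1) + (n+1−2r)·((1−β)/4)·c n = 0` for all `n ≥ 0`
(the sequence `c_n(1,β,0)` of the paper). Let `c̃ : ℕ → ℤ[b]` satisfy `c̃ 0 = 1`,
`c̃ 1 = r` and `c̃ n = (r+1−n)·c̃ (n−1) + b·(2r+1−n)·(n−1)·c̃ (n−2)` for `n ≥ 2`.
Then for all `n ≥ 0`, `n!·c n` equals `c̃ n` with `b` substituted by `(1−β)/4`. -/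
theorem stmt_12 (r : ℕ) (hr : 1 ≤ r)
    (c : ℕ → Polynomial ℚ)
    (hc0 : c 0 = 1) (hc1 : c 1 = C (r : ℚ))
    (hcrec : ∀ n : ℕ,
      C ((n : ℚ) + 2) * c (n + 2) + C ((n : ℚ) + 1 - r) * c (n + 1)
        + C (((n : ℚ) + 1 - 2 * r) / 4) * (1 - X) * c n = 0)
    (ct : ℕ → Polynomial ℤ)
    (hct0 : ct 0 = 1) (hct1 : ct 1 = C (r : ℤ))
    (hctrec : ∀ n : ℕ, 2 ≤ n →
      ct n = C ((r : ℤ) + 1 - n) * ct (n - 1)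
        + X * C ((2 * (r : ℤ) + 1 - n) * ((n : ℤ) - 1)) * ct (n - 2)) :
    ∀ n : ℕ, C ((Nat.factorial n : ℚ)) * c n =
      Polynomial.aeval (C (1 / 4 : ℚ) * (1 - X)) (ct n) := by
  intro n
  induction n using Nat.twoStepInduction with
  | zero => simp [hc0, hct0, Nat.factorial]
  | one => simp [hc1, hct1, Nat.factorial]
  | more n ih1 ih2 =>
    have hrec := hcrec n
    rw [show (((n:ℚ) + 1 - 2 * r) / 4) = ((n:ℚ) + 1 - 2 * r) * (1/4) by ring, C_mul] at hrec
    have hct := hctrec (n + 2) (by omega)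
    simp only [Nat.add_sub_cancel, show n + 2 - 1 = n + 1 from rfl, Nat.cast_add,
      Nat.cast_ofNat] at hct
    rw [hct]
    simp only [map_add, map_mul, aeval_C, aeval_X]
    rw [← ih1, ← ih2]
    simp only [algebraMap_int_eq, eq_intCast, Int.cast_sub, Int.cast_add, Int.cast_mul,
      Int.cast_natCast, Int.cast_one, Int.cast_ofNat]
    simp only [Nat.factorial_succ, Nat.cast_mul, Nat.cast_add, Nat.cast_one, Nat.cast_ofNat,
      C_add, C_sub, C_mul, C_1, map_natCast, map_ofNat] at hrec ⊢
    linear_combination (norm := (push_cast; ring1)) (((n:ℚ[X]) + 1) * ((Nat.factorial n : ℕ) : ℚ[X])) * hrec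
end

section
/- Let n ≥ 1 be an integer and s ∈ ℚ. Let A_n be the n×n matrix over ℚ with (A_n)_{i,i} = i for 1 ≤ i ≤ n, (A_n)_{i,i−1} = i−1 for 2 ≤ i ≤ n, and all other entries 0; let B_n be the n×n matrix over ℚ with (B_n)_{i,i} = 2i for 1 ≤ i ≤ n, (B_n)_{i,i−1} = i−1 for 2 ≤ i ≤ n, (B_n)_{i,i+1} = −(n−i) for 1 ≤ i ≤ n−1, and all other entries 0. Then the characteristic polynomial of C_n(s) := (n+1)·A_n + s·B_n equals ∏_{k=1}^{n} (X − (s+k)·(n+1)) in ℚ[X]. -/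
/-- The `n×n` matrix `A_n` over `ℚ` with (1-based) diagonal entries `(A_n)_{i,i} = i`
and subdiagonal entries `(A_n)_{i,i−1} = i−1`. -/
def An (n : ℕ) : Matrix (Fin n) (Fin n) ℚ :=
  Matrix.of fun i j =>
    if i = j then (i.val : ℚ) + 1
    else if j.val + 1 = i.val then (i.val : ℚ)
    else 0

/-- The `n×n` matrix `B_n` over `ℚ` with (1-based) diagonal entries `2i`,
subdiagonal entries `i−1` and superdiagonal entries `−(n−i)`. -/
def Bn (n : ℕ) : Matrix (Fin n) (Fin n) ℚ :=
  Matrix.of fun i j =>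
    if i = j then 2 * ((i.val : ℚ) + 1)
    else if j.val + 1 = i.val then (i.val : ℚ)
    else if i.val + 1 = j.val then -((n : ℚ) - ((i.val : ℚ) + 1))
    else 0

namespace Stmt15Aux

open Matrix Polynomial Finset

/-- entries of the signed Pascal matrix -/
def pf (a b : ℕ) : ℚ := (-1 : ℚ) ^ (a + b) * (Nat.choose a b : ℚ)

/-- entries of `C_n(s)` as a function of natural indices -/
def cf (n : ℕ) (s : ℚ) (a b : ℕ) : ℚ :=
  if a = b then ((n:ℚ)+1+2*s)*((a:ℚ)+1)
  else if b+1 = a then ((n:ℚ)+1+s)*(a:ℚ)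
  else if a+1 = b then -s*((n:ℚ)-((a:ℚ)+1)) else 0

/-- entries of the triangularized matrix -/
def tf (n : ℕ) (s : ℚ) (a b : ℕ) : ℚ :=
  if a = b then (s+((a:ℚ)+1))*((n:ℚ)+1)
  else if a+1 = b then -s*((n:ℚ)-((a:ℚ)+1)) else 0

def Pm (n : ℕ) : Matrix (Fin n) (Fin n) ℚ := Matrix.of fun i j => pf i.val j.val

def Tm (n : ℕ) (s : ℚ) : Matrix (Fin n) (Fin n) ℚ := Matrix.of fun i j => tf n s i.val j.val

lemma fact1 (i j : ℕ) :
    ((i:ℚ)+1 - (j:ℚ)) * (Nat.choose (i+1) j : ℚ) = ((i:ℚ)+1) * (Nat.choose i j : ℚ) := by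
  rcases le_or_gt j (i+1) with h | h
  · have h0 := Nat.choose_mul_succ_eq i j
    have h1 := congrArg (fun t : ℕ => (t : ℚ)) h0
    push_cast [Nat.cast_sub h] at h1
    linarith
  · rw [Nat.choose_eq_zero_of_lt h, Nat.choose_eq_zero_of_lt (by omega : i < j)]
    simp

lemma fact2 (i j : ℕ) :
    (Nat.choose (i+1) (j+1) : ℚ) = (Nat.choose i j : ℚ) + (Nat.choose i (j+1) : ℚ) := by
  exact_mod_cast Nat.choose_succ_succ i j

lemma fact3 (i m : ℕ) :
    ((m:ℚ)+1) * (Nat.choose i (m+1) : ℚ) = ((i:ℚ) - (m:ℚ)) * (Nat.choose i m : ℚ) := by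
  rcases le_or_gt m i with h | h
  · have h0 := Nat.choose_succ_right_eq i m
    have h1 := congrArg (fun t : ℕ => (t : ℚ)) h0
    push_cast [Nat.cast_sub h] at h1
    linarith
  · rw [Nat.choose_eq_zero_of_lt h, Nat.choose_eq_zero_of_lt (by omega : i < m+1)]
    simp

/-- the scalar three-term identity -/
lemma key_scalar (n : ℕ) (s : ℚ) (i j : ℕ) :
    ((n:ℚ)+1+s)*(i:ℚ) * pf (i-1) j + ((n:ℚ)+1+2*s)*((i:ℚ)+1) * pf i j
      + (-s*((n:ℚ)-((i:ℚ)+1))) * pf (i+1) j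
    = (s+((j:ℚ)+1))*((n:ℚ)+1) * pf i j
      + (if j = 0 then 0 else -s*((n:ℚ)-(j:ℚ)) * pf i (j-1)) := by
  rcases i with _ | i' <;> rcases j with _ | j'
  · simp [pf]; ring
  · rcases j' with _ | j'' <;> simp [pf, Nat.choose] <;> push_cast <;> ring
  · simp only [Nat.add_sub_cancel, if_pos rfl, pf, Nat.choose_zero_right]
    push_cast
    ring
  · simp only [Nat.add_sub_cancel, if_neg (Nat.succ_ne_zero j'), pf]
    have F1 := fact1 i' (j'+1)
    have F2 := fact2 (i'+1) j'
    have F3 := fact3 (i'+1) j'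
    push_cast at F1 F2 F3 ⊢
    linear_combination ((-1:ℚ))^(i'+j') *
      ( ((n:ℚ)+1+s) * F1 + (s*((n:ℚ)-(i':ℚ)-2)) * F2 + s * F3 )

lemma C_apply (n : ℕ) (s : ℚ) (i k : Fin n) :
    (((n:ℚ)+1) • An n + s • Bn n) i k = cf n s i.val k.val := by
  simp only [Matrix.add_apply, Matrix.smul_apply, An, Bn, Matrix.of_apply, cf, smul_eq_mul,
    Fin.ext_iff]
  split_ifs <;> first | ring | omega

lemma cf_diag (n : ℕ) (s : ℚ) (a : ℕ) : cf n s a a = ((n:ℚ)+1+2*s)*((a:ℚ)+1) := by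
  simp [cf]

lemma cf_sub (n : ℕ) (s : ℚ) (a : ℕ) : cf n s (a+1) a = ((n:ℚ)+1+s)*((a:ℚ)+1) := by
  unfold cf
  rw [if_neg (by omega), if_pos rfl]
  push_cast; ring

lemma cf_sup (n : ℕ) (s : ℚ) (a : ℕ) : cf n s a (a+1) = -s*((n:ℚ)-((a:ℚ)+1)) := by
  unfold cf
  rw [if_neg (by omega), if_neg (by omega), if_pos rfl]

lemma cf_zero (n : ℕ) (s : ℚ) {a b : ℕ} (h1 : a ≠ b) (h2 : b+1 ≠ a) (h3 : a+1 ≠ b) :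
    cf n s a b = 0 := by
  unfold cf; rw [if_neg h1, if_neg h2, if_neg h3]

lemma sumL (n : ℕ) (s : ℚ) (iv jv : ℕ) (hi : iv < n) :
    ∑ k ∈ Finset.range n, cf n s iv k * pf k jv =
      ((n:ℚ)+1+s)*(iv:ℚ) * pf (iv-1) jv + ((n:ℚ)+1+2*s)*((iv:ℚ)+1) * pf iv jv
        + (-s*((n:ℚ)-((iv:ℚ)+1))) * pf (iv+1) jv := by
  rcases iv with _ | m
  · have hsplit : ∀ k ∈ Finset.range n, cf n s 0 k * pf k jv =
        (if k = 0 then ((n:ℚ)+1+2*s)*((0:ℚ)+1) * pf 0 jv else 0)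
          + (if k = 1 then -s*((n:ℚ)-((0:ℚ)+1)) * pf 1 jv else 0) := by
      intro k _
      rcases k with _ | _ | k2
      · rw [cf_diag]; norm_num
      · rw [show (1:ℕ) = 0 + 1 from rfl, cf_sup]; norm_num
      · rw [cf_zero n s (by omega) (by omega) (by omega)]
        rw [if_neg (by omega), if_neg (by omega)]
        ring
    rw [Finset.sum_congr rfl hsplit, Finset.sum_add_distrib,
      Finset.sum_ite_eq' (Finset.range n) 0, Finset.sum_ite_eq' (Finset.range n) 1]
    rw [if_pos (Finset.mem_range.mpr hi)]
    by_cases h1 : 1 < n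
    · rw [if_pos (Finset.mem_range.mpr h1)]
      push_cast; ring
    · have hn1 : n = 1 := by omega
      subst hn1
      rw [if_neg (by simp)]
      push_cast; ring
  · have hsplit : ∀ k ∈ Finset.range n, cf n s (m+1) k * pf k jv =
        (if k = m then ((n:ℚ)+1+s)*((m:ℚ)+1) * pf m jv else 0)
          + (if k = m+1 then ((n:ℚ)+1+2*s)*(((m:ℚ)+1)+1) * pf (m+1) jv else 0)
          + (if k = m+2 then -s*((n:ℚ)-(((m:ℚ)+1)+1)) * pf (m+2) jv else 0) := by
      intro k _
      by_cases hk1 : k = m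
      · subst hk1
        rw [cf_sub, if_pos rfl, if_neg (by omega), if_neg (by omega)]
        ring
      · by_cases hk2 : k = m+1
        · subst hk2
          rw [cf_diag, if_neg (by omega), if_pos rfl, if_neg (by omega)]
          push_cast; ring
        · by_cases hk3 : k = m+2
          · subst hk3
            rw [show m+2 = (m+1)+1 from rfl, cf_sup, if_neg (by omega), if_neg (by omega),
              if_pos rfl]
            push_cast; ring
          · rw [cf_zero n s (by omega) (by omega) (by omega), if_neg hk1, if_neg hk2,
              if_neg hk3]
            ring
    rw [Finset.sum_congr rfl hsplit]
    rw [Finset.sum_add_distrib, Finset.sum_add_distrib,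
      Finset.sum_ite_eq' (Finset.range n) m, Finset.sum_ite_eq' (Finset.range n) (m+1),
      Finset.sum_ite_eq' (Finset.range n) (m+2)]
    rw [if_pos (Finset.mem_range.mpr (by omega)), if_pos (Finset.mem_range.mpr hi)]
    by_cases h2 : m+2 < n
    · rw [if_pos (Finset.mem_range.mpr h2)]
      simp only [Nat.add_sub_cancel]
      push_cast; ring
    · have hn2 : n = m+2 := by omega
      subst hn2
      rw [if_neg (by simp)]
      simp only [Nat.add_sub_cancel]
      push_cast; ring

lemma sumR (n : ℕ) (s : ℚ) (iv jv : ℕ) (hj : jv < n) :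
    ∑ k ∈ Finset.range n, pf iv k * tf n s k jv =
      (s+((jv:ℚ)+1))*((n:ℚ)+1) * pf iv jv
        + (if jv = 0 then 0 else -s*((n:ℚ)-(jv:ℚ)) * pf iv (jv-1)) := by
  rcases jv with _ | m
  · have hsplit : ∀ k ∈ Finset.range n, pf iv k * tf n s k 0 =
        (if k = 0 then (s+((0:ℚ)+1))*((n:ℚ)+1) * pf iv 0 else 0) := by
      intro k _
      rcases k with _ | k1
      · simp [tf]; ring
      · rw [if_neg (by omega)]
        unfold tf
        rw [if_neg (by omega), if_neg (by omega)]
        ring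
    rw [Finset.sum_congr rfl hsplit, Finset.sum_ite_eq' (Finset.range n) 0,
      if_pos (Finset.mem_range.mpr hj)]
    norm_num
  · have hsplit : ∀ k ∈ Finset.range n, pf iv k * tf n s k (m+1) =
        (if k = m+1 then (s+(((m:ℚ)+1)+1))*((n:ℚ)+1) * pf iv (m+1) else 0)
          + (if k = m then -s*((n:ℚ)-((m:ℚ)+1)) * pf iv m else 0) := by
      intro k _
      by_cases hk1 : k = m+1
      · subst hk1
        unfold tf
        rw [if_pos rfl, if_pos rfl, if_neg (by omega)]
        push_cast; ring
      · by_cases hk2 : k = m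
        · subst hk2
          unfold tf
          rw [if_neg (by omega), if_pos rfl, if_neg hk1, if_pos rfl]
          ring
        · unfold tf
          rw [if_neg (by omega), if_neg (by omega), if_neg hk1, if_neg hk2]
          ring
    rw [Finset.sum_congr rfl hsplit, Finset.sum_add_distrib,
      Finset.sum_ite_eq' (Finset.range n) (m+1), Finset.sum_ite_eq' (Finset.range n) m,
      if_pos (Finset.mem_range.mpr hj), if_pos (Finset.mem_range.mpr (by omega)),
      if_neg (Nat.succ_ne_zero m)]
    simp only [Nat.add_sub_cancel]
    push_cast; ring

lemma key (n : ℕ) (s : ℚ) :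
    (((n:ℚ)+1) • An n + s • Bn n) * Pm n = Pm n * Tm n s := by
  ext i j
  rw [Matrix.mul_apply, Matrix.mul_apply]
  have e1 : ∑ k : Fin n, (((n:ℚ)+1) • An n + s • Bn n) i k * Pm n k j
      = ∑ k ∈ Finset.range n, cf n s i.val k * pf k j.val := by
    rw [← Fin.sum_univ_eq_sum_range (fun k => cf n s i.val k * pf k j.val) n]
    exact Finset.sum_congr rfl fun k _ => by rw [C_apply]; rfl
  have e2 : ∑ k : Fin n, Pm n i k * Tm n s k j
      = ∑ k ∈ Finset.range n, pf i.val k * tf n s k j.val := by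
    rw [← Fin.sum_univ_eq_sum_range (fun k => pf i.val k * tf n s k j.val) n]
    exact Finset.sum_congr rfl fun k _ => rfl
  rw [e1, e2, sumL n s i.val j.val i.isLt, sumR n s i.val j.val j.isLt]
  exact key_scalar n s i.val j.val

lemma Pm_lower (n : ℕ) : (Pm n).BlockTriangular OrderDual.toDual := by
  intro i j h
  have hij : i.val < j.val := h
  simp [Pm, pf, Nat.choose_eq_zero_of_lt hij]

lemma Pm_det (n : ℕ) : (Pm n).det = 1 := by
  rw [Matrix.det_of_lowerTriangular _ (Pm_lower n)]
  have : ∀ i : Fin n, Pm n i i = 1 := by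
    intro i
    simp [Pm, pf, Even.neg_one_pow ⟨i.val, rfl⟩]
  simp [this]

lemma Tm_upper (n : ℕ) (s : ℚ) : (Tm n s).BlockTriangular id := by
  intro i j h
  have hij : j.val < i.val := h
  unfold Tm tf
  rw [Matrix.of_apply, if_neg (by omega), if_neg (by omega)]

end Stmt15Aux

open Stmt15Aux Matrix Polynomial in
/-- Let `n ≥ 1` and `s ∈ ℚ`. The characteristic polynomial of
`C_n(s) := (n+1)·A_n + s·B_n` is `∏_{k=1}^{n} (X − (s+k)(n+1))`. -/
theorem stmt_15 (n : ℕ) (hn : 1 ≤ n) (s : ℚ) :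
    Matrix.charpoly (((n : ℚ) + 1) • An n + s • Bn n) =
      ∏ k ∈ Finset.range n,
        (Polynomial.X - Polynomial.C ((s + ((k : ℚ) + 1)) * ((n : ℚ) + 1))) := by
  have hP : IsUnit (Pm n).det := by rw [Pm_det n]; exact isUnit_one
  have hC : ((n:ℚ)+1) • An n + s • Bn n = Pm n * Tm n s * (Pm n)⁻¹ := by
    rw [← key n s, Matrix.mul_assoc, Matrix.mul_nonsing_inv _ hP, Matrix.mul_one]
  rw [hC]
  have hmul : (C : ℚ →+* ℚ[X]).mapMatrix (Pm n) * (C : ℚ →+* ℚ[X]).mapMatrix ((Pm n)⁻¹)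
      = 1 := by
    rw [← _root_.map_mul, Matrix.mul_nonsing_inv _ hP, _root_.map_one]
  have h1 : (Pm n * Tm n s * (Pm n)⁻¹).charmatrix
      = (C : ℚ →+* ℚ[X]).mapMatrix (Pm n) * (Tm n s).charmatrix
          * (C : ℚ →+* ℚ[X]).mapMatrix ((Pm n)⁻¹) := by
    unfold Matrix.charmatrix
    rw [Matrix.mul_sub, Matrix.sub_mul]
    congr 1
    · rw [← Matrix.scalar_commute X (fun r' => Commute.all X r'), Matrix.mul_assoc, hmul,
        Matrix.mul_one]
    · rw [_root_.map_mul, _root_.map_mul, Matrix.mul_assoc]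
  have hconj : (Pm n * Tm n s * (Pm n)⁻¹).charpoly = (Tm n s).charpoly := by
    unfold Matrix.charpoly
    rw [h1, Matrix.det_mul, Matrix.det_mul, ← RingHom.map_det, ← RingHom.map_det,
      Matrix.det_nonsing_inv, Pm_det]
    simp
  rw [hconj, Matrix.charpoly_of_upperTriangular _ (Tm_upper n s)]
  rw [← Fin.prod_univ_eq_prod_range
    (fun m => X - Polynomial.C ((s + ((m:ℚ) + 1)) * ((n:ℚ) + 1))) n]
  exact Finset.prod_congr rfl fun i _ => by simp [Tm, tf]
end
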